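/- arXiv:2011.11187 — 4 statements merged into one kernel-verified Lean document; each statement's English description precedes it below -/
import Mathlib

section
/- For every finite graph G on n vertices, ν(G) = (n - e(G))/2, where e(G) is the minimum of e(G') over all pec decompositions G' of G. -/
variable {V : Type*}

/-- A matching of `G`, given as a set of edges: a set of edges of `G` that are
pairwise non-adjacent (no two distinct edges share a vertex). -/
def IsMatchingSet (G : SimpleGraph V) (M : Set (Sym2 V)) : Prop :=
  M ⊆ G.edgeSet ∧ ∀ e ∈ M, ∀ f ∈ M, e ≠ f → ∀ v : V, ¬(v ∈ e ∧ v ∈ f)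

/-- ν(G): the maximum size of a matching of `G`. -/
noncomputable def matchingNumber (G : SimpleGraph V) : ℕ :=
  sSup {n | ∃ M : Set (Sym2 V), IsMatchingSet G M ∧ M.ncard = n}

/-- λ(G): the maximum of |H| + |H'| over pairs (H, H') of disjoint matchings of `G`. -/
noncomputable def lambdaParam (G : SimpleGraph V) : ℕ :=
  sSup {n | ∃ H H' : Set (Sym2 V), IsMatchingSet G H ∧ IsMatchingSet G H' ∧
    Disjoint H H' ∧ H.ncard + H'.ncard = n}

/-- μ(G): the maximum of |H| over pairs (H, H') of disjoint matchings of `G` with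
|H| + |H'| = λ(G). -/
noncomputable def muParam (G : SimpleGraph V) : ℕ :=
  sSup {n | ∃ H H' : Set (Sym2 V), IsMatchingSet G H ∧ IsMatchingSet G H' ∧
    Disjoint H H' ∧ H.ncard + H'.ncard = lambdaParam G ∧ H.ncard = n}

/-- The degree of `v` in `G` (stated without decidability assumptions). -/
noncomputable def degree' (G : SimpleGraph V) (v : V) : ℕ := Nat.card (G.neighborSet v)

/-- The connected component `c` of `G` is a path: every vertex of `c` has degree at most 2
in `G`, and no cycle of `G` passes through a vertex of `c`. (An isolated vertex counts as a
path, namely an even path with zero edges.) -/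
def IsPathComponent (G : SimpleGraph V) (c : G.ConnectedComponent) : Prop :=
  (∀ v, G.connectedComponentMk v = c → degree' G v ≤ 2) ∧
  (∀ v, G.connectedComponentMk v = c → ∀ w : G.Walk v v, ¬ w.IsCycle)

/-- `G'` is a pec decomposition of `G`: a spanning subgraph of `G` each of whose connected
components is a path or a cycle with an even number of edges (equivalently, all degrees of
`G'` are at most 2 and every cycle of `G'` is even). -/
def IsPec (G G' : SimpleGraph V) : Prop :=
  G' ≤ G ∧ (∀ v, degree' G' v ≤ 2) ∧ ∀ (v : V) (w : G'.Walk v v), w.IsCycle → Even w.length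

/-- p(G'): the number of connected components of `G'` that are paths. -/
noncomputable def pathCount (G' : SimpleGraph V) : ℕ :=
  Nat.card {c : G'.ConnectedComponent // IsPathComponent G' c}

/-- e(G'): the number of connected components of `G'` that are paths with an even number of
edges, equivalently paths with an odd number of vertices. -/
noncomputable def evenPathCount (G' : SimpleGraph V) : ℕ :=
  Nat.card {c : G'.ConnectedComponent // IsPathComponent G' c ∧ Odd (Nat.card c.supp)}

/-- e(G): the minimum of e(G') over all pec decompositions `G'` of `G`. -/
noncomputable def eMin (G : SimpleGraph V) : ℕ :=
  sInf {n | ∃ G' : SimpleGraph V, IsPec G G' ∧ evenPathCount G' = n}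

/-- p(G): the minimum of p(G') over all pec decompositions `G'` of `G`. -/
noncomputable def pMin (G : SimpleGraph V) : ℕ :=
  sInf {n | ∃ G' : SimpleGraph V, IsPec G G' ∧ pathCount G' = n}

/-- e_p(G): the minimum of e(G') over all pec decompositions `G'` of `G` with p(G') = p(G). -/
noncomputable def epMin (G : SimpleGraph V) : ℕ :=
  sInf {n | ∃ G' : SimpleGraph V, IsPec G G' ∧ pathCount G' = pMin G ∧ evenPathCount G' = n}

section Helpers

open SimpleGraph

variable {V : Type*}

/-- Vertices covered by a set of edges. -/
def covered (M : Set (Sym2 V)) : Set V := {v | ∃ e ∈ M, v ∈ e}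

lemma sym2_cases (e : Sym2 V) : ∃ x y, e = s(x, y) := by
  induction e using Sym2.ind with
  | _ x y => exact ⟨x, y, rfl⟩

lemma IsMatchingSet.mono' {G G' : SimpleGraph V} (h : G' ≤ G) {M : Set (Sym2 V)}
    (hM : IsMatchingSet G' M) : IsMatchingSet G M :=
  ⟨fun e he => SimpleGraph.edgeSet_mono h (hM.1 he), hM.2⟩

lemma IsMatchingSet.subset' {G : SimpleGraph V} {M M' : Set (Sym2 V)}
    (hM : IsMatchingSet G M) (h : M' ⊆ M) : IsMatchingSet G M' :=
  ⟨fun e he => hM.1 (h he), fun e he f hf => hM.2 e (h he) f (h hf)⟩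

lemma exists_other {G : SimpleGraph V} {M : Set (Sym2 V)} (hM : IsMatchingSet G M)
    {e : Sym2 V} {x : V} (he : e ∈ M) (hx : x ∈ e) :
    ∃ y, e = s(x, y) ∧ G.Adj x y := by
  obtain ⟨y, rfl⟩ := Sym2.mem_iff_exists.1 hx
  exact ⟨y, rfl, (G.mem_edgeSet).1 (hM.1 he)⟩

lemma mem_covered_iff {M : Set (Sym2 V)} {v : V} :
    v ∈ covered M ↔ ∃ e ∈ M, v ∈ e := Iff.rfl

lemma covered_empty : covered (∅ : Set (Sym2 V)) = ∅ := by
  ext v; simp [covered]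

lemma covered_insert (e : Sym2 V) (M : Set (Sym2 V)) :
    covered (insert e M) = {v | v ∈ e} ∪ covered M := by
  ext v
  simp only [covered, Set.mem_setOf_eq, Set.mem_union, Set.mem_insert_iff]
  constructor
  · rintro ⟨f, (rfl | hf), hv⟩
    · exact Or.inl hv
    · exact Or.inr ⟨f, hf, hv⟩
  · rintro (hv | ⟨f, hf, hv⟩)
    · exact ⟨e, Or.inl rfl, hv⟩
    · exact ⟨f, Or.inr hf, hv⟩

lemma covered_mono {M M' : Set (Sym2 V)} (h : M ⊆ M') : covered M ⊆ covered M' :=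
  fun _ ⟨e, he, hv⟩ => ⟨e, h he, hv⟩

variable [Fintype V]

lemma ncard_covered {G : SimpleGraph V} :
    ∀ (M : Set (Sym2 V)), IsMatchingSet G M → (covered M).ncard = 2 * M.ncard := by
  intro M
  refine Set.Finite.induction_on (motive := fun M _ => IsMatchingSet G M →
      (covered M).ncard = 2 * M.ncard) M (Set.toFinite M) (by simp [covered_empty]) ?_
  rintro e M henm hfin ih hM
  have hMsub : IsMatchingSet G M := hM.subset' (Set.subset_insert _ _)
  obtain ⟨x, y, rfl⟩ := sym2_cases e
  have hadj : G.Adj x y := (G.mem_edgeSet).1 (hM.1 (Set.mem_insert _ _))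
  have hxy : x ≠ y := hadj.ne
  have heset : {v | v ∈ s(x, y)} = ({x, y} : Set V) := by
    ext v; simp [Sym2.mem_iff]
  have hdisj : Disjoint ({x, y} : Set V) (covered M) := by
    rw [Set.disjoint_left]
    rintro v hv ⟨f, hf, hvf⟩
    have hne : s(x, y) ≠ f := by rintro rfl; exact henm hf
    refine hM.2 _ (Set.mem_insert _ _) _ (Set.mem_insert_of_mem _ hf) hne v ⟨?_, hvf⟩
    rcases hv with rfl | rfl
    · exact Sym2.mem_mk_left _ _
    · exact Sym2.mem_mk_right _ _
  rw [covered_insert, heset,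
    Set.ncard_union_eq hdisj (Set.toFinite _) (Set.toFinite _),
    Set.ncard_pair hxy, Set.ncard_insert_of_notMem henm hfin, ih hMsub]
  ring

lemma matching_ncard_le {G : SimpleGraph V} {M : Set (Sym2 V)} (hM : IsMatchingSet G M) :
    M.ncard ≤ matchingNumber G := by
  apply le_csSup
  · refine ⟨Nat.card (Sym2 V), ?_⟩
    rintro n ⟨N, _, rfl⟩
    simpa [Set.ncard_univ] using Set.ncard_le_ncard (Set.subset_univ N) (Set.toFinite _)
  · exact ⟨M, hM, rfl⟩

lemma exists_max_matching (G : SimpleGraph V) :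
    ∃ M : Set (Sym2 V), IsMatchingSet G M ∧ M.ncard = matchingNumber G := by
  have hne : {n | ∃ M : Set (Sym2 V), IsMatchingSet G M ∧ M.ncard = n}.Nonempty :=
    ⟨0, ∅, ⟨Set.empty_subset _, by simp⟩, by simp⟩
  have hbdd : BddAbove {n | ∃ M : Set (Sym2 V), IsMatchingSet G M ∧ M.ncard = n} := by
    refine ⟨Nat.card (Sym2 V), ?_⟩
    rintro n ⟨N, _, rfl⟩
    simpa [Set.ncard_univ] using Set.ncard_le_ncard (Set.subset_univ N) (Set.toFinite _)
  obtain ⟨M, hM, hcard⟩ := Nat.sSup_mem hne hbdd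
  exact ⟨M, hM, hcard⟩

end Helpers
section Helpers2

open SimpleGraph

variable {V : Type*} [Fintype V]

lemma two_le_degree' {G : SimpleGraph V} {x a b : V} (ha : G.Adj x a) (hb : G.Adj x b)
    (hab : a ≠ b) : 2 ≤ degree' G x := by
  have hsub : ({a, b} : Set V) ⊆ G.neighborSet x := by
    rintro v (rfl | rfl) <;> assumption
  calc 2 = ({a, b} : Set V).ncard := (Set.ncard_pair hab).symm
    _ ≤ (G.neighborSet x).ncard := Set.ncard_le_ncard hsub (Set.toFinite _)
    _ = degree' G x := (Nat.card_coe_set_eq _).symm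

lemma three_le_degree' {G : SimpleGraph V} {x a b c : V} (ha : G.Adj x a) (hb : G.Adj x b)
    (hc : G.Adj x c) (hab : a ≠ b) (hac : a ≠ c) (hbc : b ≠ c) : 3 ≤ degree' G x := by
  have hsub : ({a, b, c} : Set V) ⊆ G.neighborSet x := by
    rintro v (rfl | rfl | rfl) <;> assumption
  have h3 : ({a, b, c} : Set V).ncard = 3 := by
    rw [Set.ncard_insert_of_notMem (by simp [hab, hac]) (Set.toFinite _), Set.ncard_pair hbc]
  calc 3 = ({a, b, c} : Set V).ncard := h3.symm
    _ ≤ (G.neighborSet x).ncard := Set.ncard_le_ncard hsub (Set.toFinite _)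
    _ = degree' G x := (Nat.card_coe_set_eq _).symm

lemma neighbor_eq_of_degree_le_two {G : SimpleGraph V} {x a b z : V}
    (hdeg : degree' G x ≤ 2) (ha : G.Adj x a) (hb : G.Adj x b) (hab : a ≠ b)
    (hz : G.Adj x z) : z = a ∨ z = b := by
  by_contra h
  push_neg at h
  have h3 := three_le_degree' hz ha hb h.1 h.2 hab
  omega

lemma reachable_closed {G : SimpleGraph V} {S : Set V}
    (h : ∀ ⦃y z : V⦄, y ∈ S → G.Adj y z → z ∈ S) :
    ∀ {a b : V}, G.Reachable a b → a ∈ S → b ∈ S := by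
  intro a b hr
  obtain ⟨p⟩ := hr
  induction p with
  | nil => exact id
  | cons hadj q ih => exact fun ha => ih (h ha hadj)

lemma ncard_le_one_of_subsingleton {S : Set V} (h : S.Subsingleton) : Nat.card S ≤ 1 := by
  rcases h.eq_empty_or_singleton with rfl | ⟨a, rfl⟩ <;>
    simp [Nat.card_coe_set_eq]

/-- In a cycle based at `y`, `y` has two distinct neighbours among the cycle support. -/
lemma cycle_two_neighbors {G : SimpleGraph V} {y : V} {W : G.Walk y y} (hW : W.IsCycle) :
    ∃ a b, a ≠ b ∧ G.Adj y a ∧ G.Adj y b ∧ a ∈ W.support ∧ b ∈ W.support := by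
  have h3 : 3 ≤ W.length := hW.three_le_length
  have hWnil : ¬ W.Nil := by
    rw [SimpleGraph.Walk.nil_iff_length_eq]; omega
  obtain ⟨a, hya, q, hq⟩ := SimpleGraph.Walk.not_nil_iff.1 hWnil
  have hRnil : ¬ W.reverse.Nil := by
    rw [SimpleGraph.Walk.nil_iff_length_eq, SimpleGraph.Walk.length_reverse]; omega
  obtain ⟨b, hyb, r, hr⟩ := SimpleGraph.Walk.not_nil_iff.1 hRnil
  refine ⟨a, b, ?_, hya, hyb, ?_, ?_⟩
  · -- a ≠ b, else first edge equals last edge of a trail of length ≥ 3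
    rintro rfl
    have hedges : W.edges = s(y, a) :: q.edges := by rw [hq]; rfl
    have hrev : W.edges.reverse = s(y, a) :: r.edges := by
      rw [← SimpleGraph.Walk.edges_reverse, hr]; rfl
    have hWe : W.edges = r.edges.reverse ++ [s(y, a)] := by
      have := congrArg List.reverse hrev
      simpa using this
    have hnodup : W.edges.Nodup := hW.isTrail.edges_nodup
    rw [hedges] at hnodup
    have hrrne : r.edges.reverse ≠ [] := by
      have hrl : r.length + 1 = W.length := by
        have := congrArg SimpleGraph.Walk.length hr
        simpa [SimpleGraph.Walk.length_reverse] using this.symm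
      intro hnil
      have : r.edges.length = 0 := by rw [← List.length_reverse, hnil]; rfl
      rw [SimpleGraph.Walk.length_edges] at this
      omega
    have heq : s(y, a) :: q.edges = r.edges.reverse ++ [s(y, a)] := by
      rw [← hedges, ← hWe]
    have hqe : q.edges = r.edges.reverse.tail ++ [s(y, a)] := by
      have := congrArg List.tail heq
      rwa [List.tail_cons, List.tail_append_singleton_of_ne_nil hrrne] at this
    have hmem : s(y, a) ∈ q.edges := by
      rw [hqe]; simp
    exact (List.nodup_cons.1 hnodup).1 hmem
  · rw [hq]
    simp [SimpleGraph.Walk.support_cons, SimpleGraph.Walk.start_mem_support]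
  · have : b ∈ W.reverse.support := by
      rw [hr]
      simp [SimpleGraph.Walk.support_cons, SimpleGraph.Walk.start_mem_support]
    rwa [SimpleGraph.Walk.support_reverse, List.mem_reverse] at this

lemma no_cycle_of_no_adj {G : SimpleGraph V} (h : ∀ v w, ¬ G.Adj v w) {y : V}
    (W : G.Walk y y) : ¬ W.IsCycle := by
  cases W with
  | nil => exact SimpleGraph.Walk.IsCycle.not_of_nil
  | cons hadj p => exact fun _ => h _ _ hadj

lemma bot_isPec (G : SimpleGraph V) : IsPec G ⊥ := by
  refine ⟨bot_le, fun v => ?_, fun v w hw => ?_⟩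
  · have : (⊥ : SimpleGraph V).neighborSet v = ∅ := by
      ext z; simp [SimpleGraph.neighborSet]
    simp [degree', this]
  · exact absurd hw (no_cycle_of_no_adj (by simp) w)

end Helpers2
section Helpers3

open SimpleGraph

variable {V : Type*} [Fintype V]

omit [Fintype V] in
/-- The support of a cycle, minus the repeated basepoint, as a clean list. -/
lemma cycle_list {G : SimpleGraph V} {y : V} {W : G.Walk y y} (hW : W.IsCycle) :
    ∃ l : List V, l.Nodup ∧ l.Chain' G.Adj ∧ l.length = W.length ∧
      ∀ x, (x ∈ W.support ↔ x ∈ l) := by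
  have h3 : 3 ≤ W.length := hW.three_le_length
  have hsuplen : W.support.length = W.length + 1 := W.length_support
  have hsupne : W.support ≠ [] := W.support_ne_nil
  have hcons : W.support = y :: W.support.tail := W.support_eq_cons
  have htailne : W.support.tail ≠ [] := by
    intro h
    rw [hcons, h] at hsuplen
    simp only [List.length_cons, List.length_nil] at hsuplen
    omega
  obtain ⟨t, ts, hts⟩ := List.exists_cons_of_ne_nil htailne
  have ht : W.support = y :: t :: ts := by rw [hcons, hts]
  have hlast : W.support.getLast hsupne = y := W.getLast_support
  have hl? : W.support.getLast? = some y := by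
    rw [List.getLast?_eq_getLast_of_ne_nil hsupne, hlast]
  have hl2? : (t :: ts).getLast? = some y := by
    rw [ht, List.getLast?_cons_cons] at hl?
    exact hl?
  have hlast2 : (t :: ts).getLast (List.cons_ne_nil _ _) = y := by
    have := List.getLast?_eq_getLast_of_ne_nil (l := t :: ts) (List.cons_ne_nil _ _)
    rw [this] at hl2?
    exact Option.some.inj hl2?
  have htaildecomp : (t :: ts).dropLast ++ [y] = t :: ts := by
    conv_rhs => rw [← List.dropLast_append_getLast (l := t :: ts) (List.cons_ne_nil _ _)]
    rw [hlast2]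
  have htailnodup : (t :: ts).Nodup := by
    have h2 := hW.2
    rwa [hts] at h2
  have hysplit : y ∉ (t :: ts).dropLast ∧ (t :: ts).dropLast.Nodup := by
    rw [← htaildecomp] at htailnodup
    have := List.nodup_append.1 htailnodup
    exact ⟨fun hy => this.2.2 y hy y (List.mem_singleton_self _) rfl, this.1⟩
  set l : List V := y :: (t :: ts).dropLast with hl
  have hsplit : l ++ [y] = W.support := by
    rw [ht, hl]
    simp [htaildecomp]
  have hyl : y ∈ l := List.mem_cons_self
  refine ⟨l, ?_, ?_, ?_, ?_⟩
  · exact List.nodup_cons.2 ⟨hysplit.1, hysplit.2⟩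
  · exact (W.isChain_adj_support).prefix ⟨[y], hsplit⟩
  · have h1 : l.length + 1 = W.support.length := by
      rw [← hsplit]; simp
    omega
  · intro x
    constructor
    · intro hx
      rw [← hsplit] at hx
      rcases List.mem_append.1 hx with hx | hx
      · exact hx
      · simp only [List.mem_singleton] at hx
        subst hx; exact hyl
    · intro hx
      rw [← hsplit]
      exact List.mem_append_left _ hx

lemma supp_eq_cycle_support {G : SimpleGraph V} (hdeg : ∀ v, degree' G v ≤ 2) {y : V}
    {W : G.Walk y y} (hW : W.IsCycle) :
    (G.connectedComponentMk y).supp = {x | x ∈ W.support} := by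
  classical
  have hclosed : ∀ ⦃a z : V⦄, a ∈ {x | x ∈ W.support} → G.Adj a z → z ∈ {x | x ∈ W.support} := by
    intro a z ha hadj
    have ha' : a ∈ W.support := ha
    have hW' : (W.rotate _ ha').IsCycle := hW.rotate ha'
    obtain ⟨p, q, hpq, hpA, hqA, hps, hqs⟩ := cycle_two_neighbors hW'
    have hsupp := SimpleGraph.Walk.support_rotate W _ ha'
    have hmem : ∀ z, z ∈ (W.rotate _ ha').support → z ∈ W.support := by
      intro z hz
      rw [SimpleGraph.Walk.support_eq_cons] at hz
      rcases List.mem_cons.1 hz with rfl | hz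
      · exact ha'
      · exact List.mem_of_mem_tail (hsupp.mem_iff.1 hz)
    rcases neighbor_eq_of_degree_le_two (hdeg a) hpA hqA hpq hadj with rfl | rfl
    · exact hmem _ hps
    · exact hmem _ hqs
  ext x
  simp only [SimpleGraph.ConnectedComponent.mem_supp_iff, Set.mem_setOf_eq]
  constructor
  · intro hx
    have hreach : G.Reachable y x := (SimpleGraph.ConnectedComponent.exact hx).symm
    exact reachable_closed hclosed hreach W.start_mem_support
  · intro hx
    have : G.Reachable y x := (W.takeUntil x hx).reachable
    exact SimpleGraph.ConnectedComponent.eq.2 this.symm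

/-- The alternating matching on a list of even length forming a path. -/
lemma alt_matching (G : SimpleGraph V) :
    ∀ (n : ℕ) (l : List V), l.length = n → l.Chain' G.Adj → l.Nodup → Even l.length →
      ∃ P : Set (Sym2 V), IsMatchingSet G P ∧ covered P = {x | x ∈ l} ∧
        2 * P.ncard = l.length := by
  intro n
  induction n using Nat.strong_induction_on with
  | _ n ih =>
    intro l hlen hchain hnodup heven
    match l, hlen with
    | [], _ =>
      exact ⟨∅, ⟨Set.empty_subset _, by simp⟩, by simp [covered_empty], by simp⟩
    | [a], _ => simp at heven
    | a :: b :: rest, hlen =>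
      have hab : G.Adj a b := (List.isChain_cons_cons.1 hchain).1
      have hchain' : rest.Chain' G.Adj := ((List.isChain_cons_cons.1 hchain).2).tail
      have hnodup' : rest.Nodup := (List.nodup_cons.1 (List.nodup_cons.1 hnodup).2).2
      have hanr : a ∉ rest := fun h =>
        (List.nodup_cons.1 hnodup).1 (List.mem_cons_of_mem _ h)
      have hbnr : b ∉ rest := (List.nodup_cons.1 (List.nodup_cons.1 hnodup).2).1
      have heven' : Even rest.length := by
        simp only [List.length_cons] at heven
        rcases heven with ⟨k, hk⟩
        exact ⟨k - 1, by omega⟩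
      obtain ⟨P, hP, hPcov, hPcard⟩ :=
        ih rest.length (by simp only [List.length_cons] at hlen; omega) rest rfl
          hchain' hnodup' heven'
      refine ⟨insert s(a, b) P, ⟨?_, ?_⟩, ?_, ?_⟩
      · rintro e (rfl | he)
        · exact (G.mem_edgeSet).2 hab
        · exact hP.1 he
      · rintro e (rfl | he) f (rfl | hf) hef v ⟨hv1, hv2⟩
        · exact hef rfl
        · have : v ∈ covered P := ⟨f, hf, hv2⟩
          rw [hPcov] at this
          rcases Sym2.mem_iff.1 hv1 with rfl | rfl
          · exact hanr this
          · exact hbnr this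
        · have : v ∈ covered P := ⟨e, he, hv1⟩
          rw [hPcov] at this
          rcases Sym2.mem_iff.1 hv2 with rfl | rfl
          · exact hanr this
          · exact hbnr this
        · exact hP.2 e he f hf hef v ⟨hv1, hv2⟩
      · rw [covered_insert, hPcov]
        ext v
        simp [Sym2.mem_iff, List.mem_cons, or_assoc]
      · have hnotmem : s(a, b) ∉ P := by
          intro h
          have : a ∈ covered P := ⟨s(a, b), h, Sym2.mem_mk_left _ _⟩
          rw [hPcov] at this
          exact hanr this
        rw [Set.ncard_insert_of_notMem hnotmem (Set.Finite.subset (Set.toFinite _) hP.1)]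
        simp only [List.length_cons]
        omega

end Helpers3
section Helpers4

open SimpleGraph

variable {V : Type*} [Fintype V]

/-- With max degree 2, an unmatched (by a maximum matching) vertex cannot lie in a
component containing an even cycle. -/
lemma unmatched_no_cycle {G : SimpleGraph V} (hdeg : ∀ v, degree' G v ≤ 2)
    {M : Set (Sym2 V)} (hM : IsMatchingSet G M)
    (hmax : ∀ M', IsMatchingSet G M' → M'.ncard ≤ M.ncard)
    {u y : V} (hu : u ∉ covered M) (hr : G.Reachable u y)
    {W : G.Walk y y} (hW : W.IsCycle) (heven : Even W.length) : False := by
  classical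
  obtain ⟨l, hlnd, hlch, hllen, hlmem⟩ := cycle_list hW
  set c := G.connectedComponentMk y with hc
  have hsupp : c.supp = {x | x ∈ l} := by
    rw [hc, supp_eq_cycle_support hdeg hW]
    ext x; simp [hlmem x]
  obtain ⟨P, hP, hPcov, hPcard⟩ := alt_matching G l.length l rfl hlch hlnd (hllen ▸ heven)
  set Mout : Set (Sym2 V) := {e ∈ M | ∀ x, x ∈ e → x ∉ c.supp} with hMout
  set Min : Set (Sym2 V) := {e ∈ M | ∃ x, x ∈ e ∧ x ∈ c.supp} with hMin
  have hMinM : Min ⊆ M := Set.sep_subset _ _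
  have hMoutM : Mout ⊆ M := Set.sep_subset _ _
  have hMsplit : M = Mout ∪ Min := by
    ext e
    constructor
    · intro he
      by_cases h : ∃ x, x ∈ e ∧ x ∈ c.supp
      · exact Or.inr ⟨he, h⟩
      · push_neg at h
        exact Or.inl ⟨he, h⟩
    · rintro (he | he) <;> exact he.1
  have hMdisj : Disjoint Mout Min := by
    rw [Set.disjoint_left]
    rintro e ⟨_, hout⟩ ⟨_, x, hxe, hxs⟩
    exact hout x hxe hxs
  have hMinsupp : covered Min ⊆ c.supp := by
    rintro v ⟨e, ⟨heM, ⟨x, hxe, hxs⟩⟩, hve⟩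
    obtain ⟨z, rfl, hadj⟩ := exists_other hM heM hxe
    have hzs : z ∈ c.supp := by
      rw [SimpleGraph.ConnectedComponent.mem_supp_iff] at hxs ⊢
      rw [← hxs]
      exact SimpleGraph.ConnectedComponent.connectedComponentMk_eq_of_adj hadj.symm
    rcases Sym2.mem_iff.1 hve with rfl | rfl
    · exact hxs
    · exact hzs
  have huc : u ∈ c.supp := by
    rw [SimpleGraph.ConnectedComponent.mem_supp_iff, hc]
    exact SimpleGraph.ConnectedComponent.sound hr
  have hunotc : u ∉ covered Min := fun h => hu (covered_mono hMinM h)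
  have hlistset : {x | x ∈ l} = (l.toFinset : Set V) := by
    ext x; simp [List.mem_toFinset]
  have hsuppcard : c.supp.ncard = l.length := by
    rw [hsupp, hlistset, Set.ncard_coe_finset, List.toFinset_card_of_nodup hlnd]
  have hMincard : 2 * Min.ncard ≤ l.length - 1 := by
    have h1 : (covered Min).ncard = 2 * Min.ncard := ncard_covered Min (hM.subset' hMinM)
    have h2 : covered Min ⊆ c.supp \ {u} := by
      rw [Set.subset_diff]
      exact ⟨hMinsupp, Set.disjoint_singleton_right.2 hunotc⟩
    have h3 : (c.supp \ {u}).ncard = c.supp.ncard - 1 :=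
      Set.ncard_diff_singleton_of_mem huc
    have h4 := Set.ncard_le_ncard h2 (Set.toFinite _)
    omega
  have hPsupp : covered P = c.supp := by rw [hPcov, hsupp]
  set M' : Set (Sym2 V) := Mout ∪ P with hM'def
  have hM' : IsMatchingSet G M' := by
    constructor
    · rintro e (he | he)
      · exact hM.1 (hMoutM he)
      · exact hP.1 he
    · rintro e (he | he) f (hf | hf) hef v ⟨hv1, hv2⟩
      · exact hM.2 e (hMoutM he) f (hMoutM hf) hef v ⟨hv1, hv2⟩
      · exact he.2 v hv1 (hPsupp ▸ (⟨f, hf, hv2⟩ : v ∈ covered P))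
      · exact hf.2 v hv2 (hPsupp ▸ (⟨e, he, hv1⟩ : v ∈ covered P))
      · exact hP.2 e he f hf hef v ⟨hv1, hv2⟩
  have hdisj2 : Disjoint Mout P := by
    rw [Set.disjoint_left]
    intro e he heP
    obtain ⟨x, z, rfl⟩ := sym2_cases e
    have : x ∈ covered P := ⟨s(x, z), heP, Sym2.mem_mk_left _ _⟩
    rw [hPsupp] at this
    exact he.2 x (Sym2.mem_mk_left _ _) this
  have hcard1 : M'.ncard = Mout.ncard + P.ncard :=
    Set.ncard_union_eq hdisj2 (Set.toFinite _) (Set.toFinite _)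
  have hcard2 : M.ncard = Mout.ncard + Min.ncard := by
    rw [hMsplit]
    exact Set.ncard_union_eq hMdisj (Set.toFinite _) (Set.toFinite _)
  have h3 : 3 ≤ l.length := hllen ▸ hW.three_le_length
  have := hmax M' hM'
  omega

/-- With max degree 2, a maximum matching cannot leave two distinct vertices of the same
component unmatched. -/
lemma unmatched_unique {G : SimpleGraph V} (hdeg : ∀ v, degree' G v ≤ 2) :
    ∀ (n : ℕ) (M : Set (Sym2 V)), IsMatchingSet G M →
      (∀ M', IsMatchingSet G M' → M'.ncard ≤ M.ncard) →
      ∀ u w, u ∉ covered M → w ∉ covered M → u ≠ w →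
      ∀ (p : G.Walk u w), p.IsPath → p.length = n → False := by
  intro n
  induction n using Nat.strong_induction_on with
  | _ n ih =>
    intro M hM hmax u w hu hw hne p hp hlen
    cases p with
    | nil => exact hne rfl
    | @cons _ x1 _ hadj q =>
      by_cases hx1 : x1 ∈ covered M
      · -- x1 matched
        obtain ⟨e, heM, hx1e⟩ := hx1
        obtain ⟨y, rfl, hadjy⟩ := exists_other hM heM hx1e
        have hyu : y ≠ u := by
          rintro rfl
          exact hu ⟨s(x1, y), heM, Sym2.mem_mk_right _ _⟩
        have hx1w : x1 ≠ w := by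
          rintro rfl
          exact hw ⟨s(x1, y), heM, Sym2.mem_mk_left _ _⟩
        obtain ⟨x2, hadj2, r, rfl⟩ := SimpleGraph.Walk.not_nil_iff.1
          (SimpleGraph.Walk.not_nil_of_ne hx1w (p := q))
        have hpq := (SimpleGraph.Walk.cons_isPath_iff _ _).1 hp
        have hunq : u ∉ (SimpleGraph.Walk.cons hadj2 r).support := hpq.2
        have hx2u : x2 ≠ u := by
          rintro rfl
          exact hunq (by
            rw [SimpleGraph.Walk.support_cons]
            exact List.mem_cons_of_mem _ r.start_mem_support)
        have hyx2 : y = x2 := by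
          by_contra hyx2
          have h1 : G.Adj x1 u := hadj.symm
          have h2 : G.Adj x1 y := hadjy
          have h3 : G.Adj x1 x2 := hadj2
          have := three_le_degree' h1 h2 h3 (Ne.symm hyu) (Ne.symm hx2u) hyx2
          have := hdeg x1
          omega
        subst hyx2
        have hyw : y ≠ w := by
          rintro rfl
          exact hw ⟨s(x1, y), heM, Sym2.mem_mk_right _ _⟩
        -- swap matching
        set M' : Set (Sym2 V) := insert s(u, x1) (M \ {s(x1, y)}) with hM'def
        have hsux1 : s(u, x1) ∉ M := by
          intro h
          exact hu ⟨s(u, x1), h, Sym2.mem_mk_left _ _⟩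
        have hM' : IsMatchingSet G M' := by
          constructor
          · rintro e (rfl | he)
            · exact (G.mem_edgeSet).2 hadj
            · exact hM.1 he.1
          · rintro e (rfl | he) f (rfl | hf) hef v ⟨hv1, hv2⟩
            · exact hef rfl
            · rcases Sym2.mem_iff.1 hv1 with rfl | rfl
              · exact hu ⟨f, hf.1, hv2⟩
              · refine hM.2 _ heM _ hf.1 ?_ v ⟨hx1e, hv2⟩
                intro h; exact hf.2 h.symm
            · rcases Sym2.mem_iff.1 hv2 with rfl | rfl
              · exact hu ⟨e, he.1, hv1⟩
              · refine hM.2 _ heM _ he.1 ?_ v ⟨hx1e, hv1⟩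
                intro h; exact he.2 h.symm
            · exact hM.2 e he.1 f hf.1 hef v ⟨hv1, hv2⟩
        have hMpos : 1 ≤ M.ncard := (Set.ncard_pos (Set.toFinite _)).2 ⟨_, heM⟩
        have hcard : M'.ncard = M.ncard := by
          rw [hM'def, Set.ncard_insert_of_notMem (fun h => hsux1 h.1) (Set.toFinite _),
            Set.ncard_diff_singleton_of_mem heM]
          omega
        have hmax' : ∀ M'', IsMatchingSet G M'' → M''.ncard ≤ M'.ncard := by
          intro M'' hM''
          rw [hcard]; exact hmax M'' hM''
        have hyM' : y ∉ covered M' := by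
          rintro ⟨f, (rfl | hf), hyf⟩
          · rcases Sym2.mem_iff.1 hyf with rfl | rfl
            · exact hyu rfl
            · exact hadjy.ne rfl
          · refine hM.2 _ heM _ hf.1 ?_ y ⟨Sym2.mem_mk_right _ _, hyf⟩
            intro h; exact hf.2 h.symm
        have hwM' : w ∉ covered M' := by
          rintro ⟨f, (rfl | hf), hwf⟩
          · rcases Sym2.mem_iff.1 hwf with rfl | rfl
            · exact hne rfl
            · exact hx1w rfl
          · exact hw ⟨f, hf.1, hwf⟩
        have hrpath : r.IsPath := hpq.1.of_cons
        have hrlen : r.length < n := by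
          rw [← hlen]
          simp only [SimpleGraph.Walk.length_cons]
          omega
        exact ih r.length hrlen M' hM' hmax' y w hyM' hwM' hyw r hrpath rfl
      · -- x1 unmatched: augment
        have hux1 : s(u, x1) ∉ M := by
          intro h
          exact hu ⟨s(u, x1), h, Sym2.mem_mk_left _ _⟩
        have hM' : IsMatchingSet G (insert s(u, x1) M) := by
          constructor
          · rintro e (rfl | he)
            · exact (G.mem_edgeSet).2 hadj
            · exact hM.1 he
          · rintro e (rfl | he) f (rfl | hf) hef v ⟨hv1, hv2⟩
            · exact hef rfl
            · rcases Sym2.mem_iff.1 hv1 with rfl | rfl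
              · exact hu ⟨f, hf, hv2⟩
              · exact hx1 ⟨f, hf, hv2⟩
            · rcases Sym2.mem_iff.1 hv2 with rfl | rfl
              · exact hu ⟨e, he, hv1⟩
              · exact hx1 ⟨e, he, hv1⟩
            · exact hM.2 e he f hf hef v ⟨hv1, hv2⟩
        have := hmax _ hM'
        rw [Set.ncard_insert_of_notMem hux1 (Set.toFinite _)] at this
        omega

end Helpers4
section Helpers5

open SimpleGraph

variable {V : Type*} [Fintype V]

lemma fromEdgeSet_no_cycle {G : SimpleGraph V} {M : Set (Sym2 V)} (hM : IsMatchingSet G M)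
    {y : V} (W : (SimpleGraph.fromEdgeSet M).Walk y y) : ¬ W.IsCycle := by
  intro hW
  obtain ⟨a, b, hab, hya, hyb, _, _⟩ := cycle_two_neighbors hW
  rw [SimpleGraph.fromEdgeSet_adj] at hya hyb
  have hne : s(y, a) ≠ s(y, b) := fun h => hab (Sym2.congr_right.1 h)
  exact hM.2 _ hya.1 _ hyb.1 hne y ⟨Sym2.mem_mk_left _ _, Sym2.mem_mk_left _ _⟩

lemma matchingGraph_isPec {G : SimpleGraph V} {M : Set (Sym2 V)} (hM : IsMatchingSet G M) :
    IsPec G (SimpleGraph.fromEdgeSet M) := by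
  refine ⟨?_, ?_, ?_⟩
  · exact le_of_le_of_eq (SimpleGraph.fromEdgeSet_mono hM.1) (SimpleGraph.fromEdgeSet_edgeSet G)
  · intro v
    have hsub : ((SimpleGraph.fromEdgeSet M).neighborSet v).Subsingleton := by
      intro a ha b hb
      rw [SimpleGraph.mem_neighborSet, SimpleGraph.fromEdgeSet_adj] at ha hb
      by_contra hab
      have hne : s(v, a) ≠ s(v, b) := fun h => hab (Sym2.congr_right.1 h)
      exact hM.2 _ ha.1 _ hb.1 hne v ⟨Sym2.mem_mk_left _ _, Sym2.mem_mk_left _ _⟩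
    exact (ncard_le_one_of_subsingleton hsub).trans one_le_two
  · intro v W hW
    exact absurd hW (fromEdgeSet_no_cycle hM W)

lemma supp_uncovered {G : SimpleGraph V} {M : Set (Sym2 V)} (hM : IsMatchingSet G M)
    {u : V} (hu : u ∉ covered M) :
    ((SimpleGraph.fromEdgeSet M).connectedComponentMk u).supp = {u} := by
  have hclosed : ∀ ⦃y z : V⦄, y ∈ ({u} : Set V) → (SimpleGraph.fromEdgeSet M).Adj y z →
      z ∈ ({u} : Set V) := by
    intro y z hy hadj
    rw [Set.mem_singleton_iff] at hy
    subst hy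
    rw [SimpleGraph.fromEdgeSet_adj] at hadj
    exact absurd ⟨s(y, z), hadj.1, Sym2.mem_mk_left _ _⟩ hu
  ext x
  simp only [SimpleGraph.ConnectedComponent.mem_supp_iff, Set.mem_singleton_iff]
  constructor
  · intro hx
    have hreach := (SimpleGraph.ConnectedComponent.exact hx).symm
    exact reachable_closed hclosed hreach rfl
  · rintro rfl; rfl

lemma supp_covered {G : SimpleGraph V} {M : Set (Sym2 V)} (hM : IsMatchingSet G M)
    {v w : V} (he : s(v, w) ∈ M) (hvw : v ≠ w) :
    ((SimpleGraph.fromEdgeSet M).connectedComponentMk v).supp = {v, w} := by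
  have hclosed : ∀ ⦃y z : V⦄, y ∈ ({v, w} : Set V) → (SimpleGraph.fromEdgeSet M).Adj y z →
      z ∈ ({v, w} : Set V) := by
    intro y z hy hadj
    rw [SimpleGraph.fromEdgeSet_adj] at hadj
    rcases hy with rfl | rfl
    · by_cases h : s(y, z) = s(y, w)
      · exact Or.inr (Sym2.congr_right.1 h)
      · exact absurd (hM.2 _ hadj.1 _ he h y ⟨Sym2.mem_mk_left _ _, Sym2.mem_mk_left _ _⟩)
          not_false
    · by_cases h : s(y, z) = s(v, y)
      · rcases Sym2.eq_iff.1 h with ⟨h1, h2⟩ | ⟨h1, rfl⟩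
        · exact absurd h1.symm hvw
        · exact Or.inl rfl
      · exact absurd (hM.2 _ hadj.1 _ he h y ⟨Sym2.mem_mk_left _ _, Sym2.mem_mk_right _ _⟩)
          not_false
  ext x
  simp only [SimpleGraph.ConnectedComponent.mem_supp_iff]
  constructor
  · intro hx
    have hreach := (SimpleGraph.ConnectedComponent.exact hx).symm
    exact reachable_closed hclosed hreach (Or.inl rfl)
  · rintro (rfl | rfl)
    · rfl
    · refine SimpleGraph.ConnectedComponent.connectedComponentMk_eq_of_adj ?_
      rw [SimpleGraph.fromEdgeSet_adj]
      exact ⟨by rwa [Sym2.eq_swap], hvw.symm⟩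

lemma evenPathCount_matchingGraph {G : SimpleGraph V} {M : Set (Sym2 V)}
    (hM : IsMatchingSet G M) :
    evenPathCount (SimpleGraph.fromEdgeSet M) + 2 * M.ncard = Fintype.card V := by
  classical
  set H := SimpleGraph.fromEdgeSet M with hH
  have hpec := matchingGraph_isPec hM
  set U : Set V := (covered M)ᶜ with hU
  have hpath : ∀ c : H.ConnectedComponent, IsPathComponent H c := by
    intro c
    exact ⟨fun v _ => hpec.2.1 v, fun v _ w hw => fromEdgeSet_no_cycle hM w hw⟩
  have hF : ∀ u : U, IsPathComponent H (H.connectedComponentMk u.1) ∧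
      Odd (Nat.card (H.connectedComponentMk u.1).supp) := by
    rintro ⟨u, hu⟩
    refine ⟨hpath _, ?_⟩
    have : (H.connectedComponentMk u).supp = {u} := supp_uncovered hM hu
    rw [this, Nat.card_coe_set_eq, Set.ncard_singleton]
    exact odd_one
  set F : U → {c : H.ConnectedComponent // IsPathComponent H c ∧ Odd (Nat.card c.supp)} :=
    fun u => ⟨H.connectedComponentMk u.1, hF u⟩ with hFdef
  have hinj : Function.Injective F := by
    rintro ⟨u1, hu1⟩ ⟨u2, hu2⟩ h
    have h' : H.connectedComponentMk u1 = H.connectedComponentMk u2 := congrArg Subtype.val h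
    have : u1 ∈ (H.connectedComponentMk u2).supp := by
      rw [SimpleGraph.ConnectedComponent.mem_supp_iff]; exact h'
    rw [supp_uncovered hM hu2] at this
    exact Subtype.ext this
  have hsurj : Function.Surjective F := by
    rintro ⟨c, hcpath, hcodd⟩
    obtain ⟨v, hv⟩ := c.exists_rep
    by_cases hvc : v ∈ covered M
    · exfalso
      obtain ⟨e, heM, hve⟩ := hvc
      obtain ⟨z, rfl, hadj⟩ := exists_other hM heM hve
      have hsupp : (H.connectedComponentMk v).supp = {v, z} := supp_covered hM heM hadj.ne
      have hv' : H.connectedComponentMk v = c := hv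
      rw [hv'] at hsupp
      rw [hsupp, Nat.card_coe_set_eq, Set.ncard_pair hadj.ne] at hcodd
      rcases hcodd with ⟨k, hk⟩
      omega
    · exact ⟨⟨v, hvc⟩, Subtype.ext hv⟩
  have hcardeq : Nat.card U = Nat.card
      {c : H.ConnectedComponent // IsPathComponent H c ∧ Odd (Nat.card c.supp)} :=
    Nat.card_eq_of_bijective F ⟨hinj, hsurj⟩
  have h1 : evenPathCount H = Nat.card U := hcardeq.symm
  have h2 : (covered M).ncard + U.ncard = Nat.card V :=
    Set.ncard_add_ncard_compl _ (Set.toFinite _)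
  have h3 : (covered M).ncard = 2 * M.ncard := ncard_covered M hM
  have h4 : Nat.card U = U.ncard := Nat.card_coe_set_eq _
  have h5 : Nat.card V = Fintype.card V := Nat.card_eq_fintype_card
  omega

lemma upper_bound (G : SimpleGraph V) :
    2 * matchingNumber G + eMin G ≤ Fintype.card V := by
  obtain ⟨M, hM, hcard⟩ := exists_max_matching G
  have hpec := matchingGraph_isPec hM
  have h1 : eMin G ≤ evenPathCount (SimpleGraph.fromEdgeSet M) := Nat.sInf_le ⟨_, hpec, rfl⟩
  have h2 := evenPathCount_matchingGraph hM
  omega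

end Helpers5
section Helpers6

open SimpleGraph

variable {V : Type*} [Fintype V]

lemma covered_component_subset {G : SimpleGraph V} {M : Set (Sym2 V)} (hM : IsMatchingSet G M)
    (c : G.ConnectedComponent) :
    covered {e ∈ M | ∃ x, x ∈ e ∧ x ∈ c.supp} ⊆ c.supp := by
  rintro v ⟨e, ⟨heM, ⟨x, hxe, hxs⟩⟩, hve⟩
  obtain ⟨z, rfl, hadj⟩ := exists_other hM heM hxe
  have hzs : z ∈ c.supp := by
    rw [SimpleGraph.ConnectedComponent.mem_supp_iff] at hxs ⊢
    rw [← hxs]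
    exact SimpleGraph.ConnectedComponent.connectedComponentMk_eq_of_adj hadj.symm
  rcases Sym2.mem_iff.1 hve with rfl | rfl
  · exact hxs
  · exact hzs

lemma lower_bound (G G' : SimpleGraph V) (hpec : IsPec G G') :
    Fintype.card V ≤ 2 * matchingNumber G + evenPathCount G' := by
  classical
  obtain ⟨M, hM, hMcard⟩ := exists_max_matching G'
  have hmax : ∀ M', IsMatchingSet G' M' → M'.ncard ≤ M.ncard := fun M' h =>
    hMcard ▸ matching_ncard_le h
  have hMG : IsMatchingSet G M := hM.mono' hpec.1
  have hνle : M.ncard ≤ matchingNumber G := matching_ncard_le hMG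
  set U : Set V := (covered M)ᶜ with hU
  have hkey : ∀ u : U, IsPathComponent G' (G'.connectedComponentMk u.1) ∧
      Odd (Nat.card (G'.connectedComponentMk u.1).supp) := by
    rintro ⟨u, hu⟩
    have hu' : u ∉ covered M := hu
    constructor
    · constructor
      · exact fun v _ => hpec.2.1 v
      · intro v hv w hw
        have hreach : G'.Reachable u v := (SimpleGraph.ConnectedComponent.exact hv).symm
        exact unmatched_no_cycle hpec.2.1 hM hmax hu' hreach hw (hpec.2.2 v w hw)
    · set c := G'.connectedComponentMk u with hc
      set Min : Set (Sym2 V) := {e ∈ M | ∃ x, x ∈ e ∧ x ∈ c.supp} with hMin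
      have hMinM : Min ⊆ M := Set.sep_subset _ _
      have hMinsupp : covered Min ⊆ c.supp := covered_component_subset hM c
      have hucov : u ∉ covered Min := fun h => hu' (covered_mono hMinM h)
      have hsplitset : c.supp = covered Min ∪ {u} := by
        apply Set.Subset.antisymm
        · intro x hx
          by_cases hxc : x ∈ covered M
          · obtain ⟨e, heM, hxe⟩ := hxc
            exact Or.inl ⟨e, ⟨heM, ⟨x, hxe, hx⟩⟩, hxe⟩
          · right
            rw [Set.mem_singleton_iff]
            by_contra hne
            have hreach : G'.Reachable u x := by
              rw [SimpleGraph.ConnectedComponent.mem_supp_iff, hc] at hx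
              exact (SimpleGraph.ConnectedComponent.exact hx).symm
            obtain ⟨q⟩ := hreach
            exact unmatched_unique hpec.2.1 q.toPath.val.length M hM hmax u x hu' hxc
              (Ne.symm hne) q.toPath.val q.toPath.prop rfl
        · rintro x (hx | hx)
          · exact hMinsupp hx
          · rw [Set.mem_singleton_iff] at hx
            subst hx
            rw [SimpleGraph.ConnectedComponent.mem_supp_iff, hc]
      have hdisj : Disjoint (covered Min) {u} := Set.disjoint_singleton_right.2 hucov
      have hcount : (covered Min).ncard = 2 * Min.ncard :=
        ncard_covered Min (hM.subset' hMinM)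
      have : (c.supp).ncard = 2 * Min.ncard + 1 := by
        rw [hsplitset, Set.ncard_union_eq hdisj (Set.toFinite _) (Set.toFinite _),
          hcount, Set.ncard_singleton]
      rw [Nat.card_coe_set_eq, this]
      exact ⟨Min.ncard, by omega⟩
  set F : U → {c : G'.ConnectedComponent // IsPathComponent G' c ∧ Odd (Nat.card c.supp)} :=
    fun u => ⟨G'.connectedComponentMk u.1, hkey u⟩ with hF
  have hinj : Function.Injective F := by
    rintro ⟨u1, hu1⟩ ⟨u2, hu2⟩ h
    have h' : G'.connectedComponentMk u1 = G'.connectedComponentMk u2 := congrArg Subtype.val h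
    have hreach : G'.Reachable u1 u2 := SimpleGraph.ConnectedComponent.exact h'
    by_contra hne
    have hne' : u1 ≠ u2 := fun hh => hne (Subtype.ext hh)
    obtain ⟨q⟩ := hreach
    exact unmatched_unique hpec.2.1 q.toPath.val.length M hM hmax u1 u2 hu1 hu2 hne'
      q.toPath.val q.toPath.prop rfl
  have hfin : Finite G'.ConnectedComponent :=
    Finite.of_surjective G'.connectedComponentMk (fun c => c.exists_rep)
  have hle : Nat.card U ≤ evenPathCount G' := Nat.card_le_card_of_injective F hinj
  have h2 : (covered M).ncard + U.ncard = Nat.card V :=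
    Set.ncard_add_ncard_compl _ (Set.toFinite _)
  have h3 : (covered M).ncard = 2 * M.ncard := ncard_covered M hM
  have h4 : Nat.card U = U.ncard := Nat.card_coe_set_eq _
  have h5 : Nat.card V = Fintype.card V := Nat.card_eq_fintype_card
  omega

end Helpers6


/-- For every finite graph `G` on `n` vertices, ν(G) = (n − e(G))/2,
stated subtraction/division-free as 2·ν(G) + e(G) = n. -/
theorem stmt_1 [Fintype V] (G : SimpleGraph V) :
    2 * matchingNumber G + eMin G = Fintype.card V := by
  have hne : {n | ∃ G' : SimpleGraph V, IsPec G G' ∧ evenPathCount G' = n}.Nonempty :=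
    ⟨evenPathCount (⊥ : SimpleGraph V), ⊥, bot_isPec G, rfl⟩
  obtain ⟨G', hpec, hev⟩ := Nat.sInf_mem hne
  have hlow := lower_bound G G' hpec
  rw [hev] at hlow
  have hup := upper_bound G
  have hdef : eMin G = sInf {n | ∃ G' : SimpleGraph V, IsPec G G' ∧ evenPathCount G' = n} := rfl
  omega
end

section
/- For every finite graph G on n vertices, μ(G) = (n - e_p(G))/2. -/
variable {V : Type*}

open SimpleGraph

namespace StmtSix

variable {α : Type*}

/-- Alternating sublists. -/
def alts : Bool → List α → List α
  | _, [] => []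
  | true, a :: l => a :: alts false l
  | false, _ :: l => alts true l

@[simp] lemma alts_nil (b : Bool) : alts b ([] : List α) = [] := by cases b <;> rfl
@[simp] lemma alts_true_cons (a : α) (l : List α) : alts true (a :: l) = a :: alts false l := rfl
@[simp] lemma alts_false_cons (a : α) (l : List α) : alts false (a :: l) = alts true l := rfl

lemma alts_sublist (b : Bool) (l : List α) : (alts b l).Sublist l := by
  induction l generalizing b with
  | nil => simp
  | cons a l ih =>
    cases b with
    | true => simpa using (ih false).cons₂ a
    | false => simpa using (ih true).cons a

lemma alts_subset {b : Bool} {l : List α} : alts b l ⊆ l := (alts_sublist b l).subset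

lemma alts_nodup {b : Bool} {l : List α} (h : l.Nodup) : (alts b l).Nodup :=
  h.sublist (alts_sublist b l)

lemma alts_perm (l : List α) : (alts true l ++ alts false l).Perm l := by
  induction l with
  | nil => simp
  | cons a l ih =>
    simp only [alts_true_cons, alts_false_cons, List.cons_append]
    exact (List.Perm.cons a ((List.perm_append_comm).trans ih))

lemma length_alts (l : List α) :
    (alts true l).length = (l.length + 1) / 2 ∧ (alts false l).length = l.length / 2 := by
  induction l with
  | nil => simp
  | cons a l ih =>
    obtain ⟨h1, h2⟩ := ih
    constructor
    · show (a :: alts false l).length = _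
      simp only [List.length_cons, h2]; try omega
    · show (alts true l).length = _
      simp only [List.length_cons, h1]; try omega

lemma alts_disjoint {l : List α} (h : l.Nodup) : (alts true l).Disjoint (alts false l) := by
  have := ((alts_perm l).nodup_iff).mpr h
  exact List.disjoint_of_nodup_append this

lemma getLast_mem_alts : ∀ (l : List α) (hl : l ≠ []),
    l.getLast hl ∈ alts (decide (Odd l.length)) l
  | [], h => absurd rfl h
  | [a], _ => by simp
  | a :: b :: l, _ => by
      have hne : b :: l ≠ [] := by simp
      have h1 : (a :: b :: l).getLast (by simp) = (b :: l).getLast hne :=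
        List.getLast_cons hne
      rcases eq_or_ne l [] with h2 | h2
      · subst h2
        have hd : decide (Odd (a :: b :: List.nil).length) = false := by
          simp [Nat.odd_iff]
        rw [hd, h1]
        simp
      · have h3 : (b :: l).getLast hne = l.getLast h2 := List.getLast_cons h2
        have hmem := getLast_mem_alts l h2
        have hpar : decide (Odd (a :: b :: l).length) = decide (Odd l.length) := by
          simp only [List.length_cons]
          rcases Nat.even_or_odd l.length with h | h <;>
            simp [Nat.odd_iff, Nat.even_iff] at h ⊢ <;> omega
        rw [h1, h3, hpar]
        rcases Bool.eq_false_or_eq_true (decide (Odd l.length)) with hb | hb <;>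
          rw [hb] at hmem ⊢ <;> simp [hmem]

lemma getLast_mem_alts_true {l : List α} (hl : l ≠ []) (h : Odd l.length) :
    l.getLast hl ∈ alts true l := by
  have := getLast_mem_alts l hl
  rwa [decide_eq_true h] at this

lemma getLast_not_mem_alts_false {l : List α} (hl : l ≠ []) (hn : l.Nodup)
    (h : Odd l.length) : l.getLast hl ∉ alts false l := fun hmem =>
  (alts_disjoint hn) (getLast_mem_alts_true hl h) hmem

lemma chain_ne_getLast : ∀ (l : List Bool) (a : Bool), List.Chain (· ≠ ·) a l →
    (a :: l).getLast (by simp) = (if Even l.length then a else !a) := by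
  intro l
  induction l with
  | nil => intro a _; simp
  | cons b l ih =>
    intro a hc
    replace hc : a ≠ b ∧ List.Chain (· ≠ ·) b l := List.isChain_cons_cons.mp hc
    have hb : b = !a := by cases a <;> cases b <;> simp_all
    have h1 : (a :: b :: l).getLast (by simp) = (b :: l).getLast (by simp) :=
      List.getLast_cons (by simp)
    rw [h1, ih b hc.2, hb]
    rcases Nat.even_or_odd l.length with h | h
    · have h2 : ¬ Even (b :: l).length := by
        simp [List.length_cons, Nat.even_add_one, h]
      simp only [List.length_cons] at h2 ⊢
      rw [if_pos h, if_neg h2]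
    · have h' : ¬ Even l.length := Nat.not_even_iff_odd.mpr h
      have h2 : Even (b :: l).length := by simp [List.length_cons, Nat.even_add_one, h']
      simp only [List.length_cons] at h2 ⊢
      rw [if_neg h', if_pos h2, Bool.not_not]

end StmtSix

namespace StmtSix2

variable {V : Type*} {G : SimpleGraph V}

lemma mem_support_of_mem_edges {u v x : V} {p : G.Walk u v} {e : Sym2 V}
    (he : e ∈ p.edges) (hx : x ∈ e) : x ∈ p.support := by
  induction e with
  | _ a b =>
    rcases Sym2.mem_iff.mp hx with rfl | rfl
    · exact p.fst_mem_support_of_mem_edges he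
    · exact p.snd_mem_support_of_mem_edges he

lemma closure_walk {S : Set V} (hS : ∀ x ∈ S, ∀ y, G.Adj x y → y ∈ S) :
    ∀ {u v : V} (_p : G.Walk u v), u ∈ S → v ∈ S
  | _, _, Walk.nil, hu => hu
  | _, _, Walk.cons h p, hu => closure_walk hS p (hS _ hu _ h)

lemma start_unique_edge {x b : V} {q : G.Walk x b} (hq : q.IsPath) {e f : Sym2 V}
    (he : e ∈ q.edges) (hf : f ∈ q.edges) (hxe : x ∈ e) (hxf : x ∈ f) : e = f := by
  cases q with
  | nil => simp at he
  | cons h r =>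
    have hx : x ∉ r.support := ((Walk.cons_isPath_iff h r).mp hq).2
    rw [Walk.edges_cons] at he hf
    rcases List.mem_cons.mp he with rfl | he'
    · rcases List.mem_cons.mp hf with rfl | hf'
      · rfl
      · exact absurd (mem_support_of_mem_edges hf' hxf) hx
    · exact absurd (mem_support_of_mem_edges he' hxe) hx

lemma end_unique_edge {x b : V} {q : G.Walk x b} (hq : q.IsPath) {e f : Sym2 V}
    (he : e ∈ q.edges) (hf : f ∈ q.edges) (hbe : b ∈ e) (hbf : b ∈ f) : e = f := by
  refine start_unique_edge ((Walk.isPath_reverse_iff q).mpr hq) ?_ ?_ hbe hbf <;>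
    rw [Walk.edges_reverse, List.mem_reverse] <;> assumption

lemma start_mem_head_edge {x b : V} (q : G.Walk x b) (hne : q.edges ≠ []) :
    x ∈ q.edges.head hne := by
  cases q with
  | nil => simp at hne
  | cons h r => simp

lemma end_mem_getLast_edge : ∀ {x b : V} (q : G.Walk x b) (hne : q.edges ≠ []),
    b ∈ q.edges.getLast hne
  | _, _, Walk.nil, hne => by simp at hne
  | _, _, Walk.cons h r, hne => by
      cases r with
      | nil => simp
      | cons h' r' =>
        have hne' : (Walk.cons h' r').edges ≠ [] := by simp
        have heq : (Walk.cons h (Walk.cons h' r')).edges.getLast hne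
            = (Walk.cons h' r').edges.getLast hne' := List.getLast_cons hne'
        rw [heq]
        exact end_mem_getLast_edge _ hne'

lemma end_mem_tail_support {x b : V} (q : G.Walk x b) (hq : ¬ q.Nil) :
    b ∈ q.support.tail := by
  cases q with
  | nil => simp at hq
  | cons h r => simpa using r.end_mem_support

lemma edges_chain' {u v : V} (p : G.Walk u v) :
    List.Chain' (fun e f => ∃ x, x ∈ e ∧ x ∈ f) p.edges := by
  induction p with
  | nil => exact List.IsChain.nil
  | cons h p ih =>
    rename_i a c d
    rw [Walk.edges_cons]; show List.IsChain _ (_ :: _); rw [List.isChain_cons]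
    refine ⟨fun f hf => ⟨c, by simp, ?_⟩, ih⟩
    cases p with
    | nil => simp at hf
    | cons h' r => simp only [Walk.edges_cons, List.head?_cons, Option.mem_some_iff] at hf
                   subst hf; simp

lemma degree'_pair [Finite V] {v z₁ z₂ : V} (hdeg : degree' G v ≤ 2) (h1 : G.Adj v z₁)
    (h2 : G.Adj v z₂) (hne : z₁ ≠ z₂) : ∀ y, G.Adj v y → y = z₁ ∨ y = z₂ := by
  have hsub : ({z₁, z₂} : Set V) ⊆ G.neighborSet v := by
    intro y hy; rcases hy with rfl | hy
    · exact h1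
    · rcases hy with rfl; exact h2
  have heq : ({z₁, z₂} : Set V) = G.neighborSet v := by
    refine Set.eq_of_subset_of_ncard_le hsub ?_ (Set.toFinite _)
    rw [Set.ncard_pair hne]
    rw [degree', Nat.card_coe_set_eq] at hdeg
    exact hdeg
  intro y hy
  have : y ∈ ({z₁, z₂} : Set V) := heq ▸ hy
  rcases this with rfl | h
  · exact Or.inl rfl
  · exact Or.inr h

lemma ncard_list_set {α : Type*} {l : List α} (h : l.Nodup) : {x | x ∈ l}.ncard = l.length := by
  classical
  have : {x | x ∈ l} = ↑l.toFinset := by ext x; simp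
  rw [this, Set.ncard_coe_finset, List.toFinset_card_of_nodup h]

end StmtSix2

namespace StmtSix3
open StmtSix StmtSix2
variable {V : Type*} {G : SimpleGraph V}

/-- vertex-disjointness of two edges -/
def vdisj (e f : Sym2 V) : Prop := ∀ v : V, ¬(v ∈ e ∧ v ∈ f)

lemma pairwise_alts_path {a b : V} {p : G.Walk a b} (hp : p.IsPath) (bo : Bool) :
    (alts bo p.edges).Pairwise vdisj := by
  induction p generalizing bo with
  | nil => simp
  | cons h q ih =>
    rw [Walk.cons_isPath_iff] at hp
    cases bo with
    | false =>
      rw [Walk.edges_cons, alts_false_cons]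
      exact ih hp.1 true
    | true =>
      rw [Walk.edges_cons, alts_true_cons]
      refine List.Pairwise.cons ?_ (ih hp.1 false)
      intro f hf v hv
      obtain ⟨hv1, hv2⟩ := hv
      have hfq : f ∈ q.edges := alts_subset hf
      rcases Sym2.mem_iff.mp hv1 with rfl | rfl
      · exact hp.2 (mem_support_of_mem_edges hfq hv2)
      · -- v = x, the start of q
        cases q with
        | nil => simp at hfq
        | cons h2 r =>
          rw [Walk.cons_isPath_iff] at hp
          rw [Walk.edges_cons, alts_false_cons] at hf
          exact hp.1.2 (mem_support_of_mem_edges (alts_subset hf) hv2)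

lemma pairwise_alts_cycle {u : V} {w : G.Walk u u} (hw : w.IsCycle)
    (hev : Even w.length) (bo : Bool) : (alts bo w.edges).Pairwise vdisj := by
  cases w with
  | nil => exact absurd hw (by simp [Walk.isCycle_def])
  | cons h q =>
    rename_i x
    obtain ⟨hq, hne⟩ := (Walk.cons_isCycle_iff q h).mp hw
    cases bo with
    | false =>
      rw [Walk.edges_cons, alts_false_cons]
      exact pairwise_alts_path hq true
    | true =>
      rw [Walk.edges_cons, alts_true_cons]
      refine List.Pairwise.cons ?_ (pairwise_alts_path hq false)
      intro f hf v hv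
      obtain ⟨hv1, hv2⟩ := hv
      have hfq : f ∈ q.edges := alts_subset hf
      have hqne : q.edges ≠ [] := fun hcon => by simp [hcon] at hfq
      have hodd : Odd q.edges.length := by
        rw [Walk.length_edges]
        rw [Walk.length_cons, Nat.even_add_one] at hev
        exact Nat.not_even_iff_odd.mp hev
      rcases Sym2.mem_iff.mp hv1 with rfl | rfl
      · -- v = u, the end of q
        have hlast := end_mem_getLast_edge q hqne
        have : f = q.edges.getLast hqne := end_unique_edge hq hfq (List.getLast_mem hqne) hv2 hlast
        rw [this] at hf
        exact getLast_not_mem_alts_false hqne ((Walk.isTrail_def q).mp hq.isTrail) hodd hf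
      · -- v = x, start of q
        cases q with
        | nil => simp at hfq
        | cons h2 r =>
          rw [Walk.cons_isPath_iff] at hq
          rw [Walk.edges_cons, alts_false_cons] at hf
          exact hq.2 (mem_support_of_mem_edges (alts_subset hf) hv2)

end StmtSix3

namespace StmtSix4
open StmtSix StmtSix2 StmtSix3
variable {V : Type*} {G' : SimpleGraph V}

lemma vdisj_symm : Symmetric (vdisj (V := V)) := by
  intro e f h v hv
  exact h v ⟨hv.2, hv.1⟩

lemma pairwise_list_set {l : List (Sym2 V)} (h : l.Pairwise vdisj) :
    ∀ e ∈ {e | e ∈ l}, ∀ f ∈ {e | e ∈ l}, e ≠ f → vdisj e f :=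
  fun _ he _ hf hne => haveI : Std.Symm (vdisj (V := V)) := ⟨fun _ _ h => vdisj_symm h⟩; h.forall he hf hne

lemma support_rotate_subset [DecidableEq V] {u x : V} (w : G'.Walk u u) (hx : x ∈ w.support) :
    ∀ y ∈ (w.rotate x hx).support, y ∈ w.support := by
  intro y hy
  rw [Walk.support_eq_cons] at hy
  rcases List.mem_cons.mp hy with rfl | hy'
  · exact hx
  · have := (Walk.support_rotate w x hx).perm.mem_iff.mp hy'
    exact List.mem_of_mem_tail this

lemma cycle_comp_struct [Fintype V] (hdeg : ∀ v, degree' G' v ≤ 2)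
    {v : V} {w : G'.Walk v v} (hw : w.IsCycle) :
    ∀ x ∈ w.support, ∀ y, G'.Adj x y → y ∈ w.support ∧ s(x, y) ∈ w.edges := by
  classical
  intro x hx y hadj
  have hw' : (w.rotate x hx).IsCycle := hw.rotate hx
  have hperm : (w.rotate x hx).edges.Perm w.edges := (w.rotate_edges x hx).perm
  have hsupsub := support_rotate_subset w hx
  set w' := w.rotate x hx with hw'def
  clear_value w'
  cases w' with
  | nil => rw [Walk.isCycle_def] at hw'; exact absurd rfl hw'.2.1
  | cons h1 q =>
    rename_i x₁
    obtain ⟨hq, hnotin⟩ := (Walk.cons_isCycle_iff q h1).mp hw'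
    have hqne : q.edges ≠ [] := by
      intro hcon
      have : q.length = 0 := by rw [← Walk.length_edges, hcon]; rfl
      exact h1.ne' (Walk.eq_of_length_eq_zero this)
    have hxf := end_mem_getLast_edge q hqne
    have hfq : q.edges.getLast hqne ∈ q.edges := List.getLast_mem hqne
    obtain ⟨z, hz⟩ := Sym2.mem_iff_exists.mp hxf
    have hAdjz : G'.Adj x z := by
      have := q.edges_subset_edgeSet hfq
      rw [hz] at this
      exact (SimpleGraph.mem_edgeSet G').mp this
    have hzx : z ≠ x₁ := by
      intro hcon
      have heq : s(x, x₁) = q.edges.getLast hqne := by rw [hz, hcon]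
      exact hnotin (by rw [heq]; exact hfq)
    rcases degree'_pair (hdeg x) h1 hAdjz (fun hcon => hzx hcon.symm) y hadj with rfl | rfl
    · constructor
      · exact hsupsub y (by simp)
      · exact hperm.mem_iff.mp (by simp)
    · constructor
      · have : y ∈ q.support := mem_support_of_mem_edges hfq (hz ▸ Sym2.mem_mk_right x y)
        exact hsupsub y (by simp [this])
      · have : s(x, y) ∈ q.edges := hz ▸ hfq
        exact hperm.mem_iff.mp (by simp [this])

lemma start_edge_claim [Fintype V] {c : G'.ConnectedComponent}
    (hnocyc : ∀ v, G'.connectedComponentMk v = c → ∀ w : G'.Walk v v, ¬ w.IsCycle)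
    {a b : V} {p : G'.Walk a b} (hp : p.IsPath)
    (hac : G'.connectedComponentMk a = c)
    (hnbr : ∀ y, G'.Adj a y → y ∈ p.support) :
    ∀ y, G'.Adj a y → y ∈ p.support ∧ s(a, y) ∈ p.edges := by
  classical
  intro y hy
  have hys := hnbr y hy
  cases p with
  | nil =>
    simp only [Walk.support_nil, List.mem_singleton] at hys
    exact absurd hys.symm hy.ne
  | cons h1 q =>
    rename_i x₁
    by_cases hyx : y = x₁
    · subst hyx; exact ⟨hys, by simp⟩
    · have hpa : q.IsPath ∧ a ∉ q.support := (Walk.cons_isPath_iff h1 q).mp hp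
      have hyq : y ∈ q.support := by
        rcases List.mem_cons.mp (by simpa using hys) with rfl | h'
        · exact absurd rfl hy.ne
        · exact h'
      set r := q.takeUntil y hyq with hrdef
      have hr : r.IsPath := hpa.1.takeUntil hyq
      have ha_nr : a ∉ r.support := fun h => hpa.2 (q.support_takeUntil_subset hyq h)
      have hra : (r.concat hy.symm).IsPath := by
        rw [← Walk.isPath_reverse_iff, Walk.reverse_concat]
        refine (Walk.cons_isPath_iff _ _).mpr ⟨(Walk.isPath_reverse_iff r).mpr hr, ?_⟩
        rw [Walk.support_reverse, List.mem_reverse]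
        exact ha_nr
      have hcyc : (Walk.cons h1 (r.concat hy.symm)).IsCycle := by
        rw [Walk.cons_isCycle_iff]
        refine ⟨hra, ?_⟩
        rw [Walk.edges_concat]
        intro hcon
        rw [List.concat_eq_append, List.mem_append] at hcon
        rcases hcon with h' | h'
        · have : a ∈ r.support := mem_support_of_mem_edges h' (Sym2.mem_mk_left a x₁)
          exact ha_nr this
        · simp only [List.mem_singleton] at h'
          rw [Sym2.eq_iff] at h'
          rcases h' with ⟨h1', h2'⟩ | ⟨h1', h2'⟩
          · exact hy.ne' h1'.symm
          · exact hyx h2'.symm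
      exact absurd hcyc (hnocyc a hac _)

end StmtSix4

namespace StmtSix5
open StmtSix StmtSix2 StmtSix3 StmtSix4
variable {V : Type*} {G' : SimpleGraph V}

lemma supp_eq_support {a b : V} {c : G'.ConnectedComponent} (p : G'.Walk a b)
    (hac : G'.connectedComponentMk a = c)
    (hcl : ∀ x ∈ p.support, ∀ y, G'.Adj x y → y ∈ p.support) :
    c.supp = {y | y ∈ p.support} := by
  classical
  ext z
  constructor
  · intro hz
    have hzc : G'.connectedComponentMk z = c := hz
    have hreach : G'.Reachable a z := ConnectedComponent.eq.mp (hac.trans hzc.symm)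
    obtain ⟨q⟩ := hreach
    exact closure_walk hcl q p.start_mem_support
  · intro hz
    have : G'.Reachable a z := ⟨p.takeUntil z hz⟩
    exact (ConnectedComponent.eq.mpr this).symm.trans hac

lemma ec_eq_edges {a b : V} {c : G'.ConnectedComponent} (p : G'.Walk a b)
    (hsupp : c.supp = {y | y ∈ p.support})
    (hcl : ∀ x ∈ p.support, ∀ y, G'.Adj x y → s(x, y) ∈ p.edges) :
    {e | e ∈ G'.edgeSet ∧ ∀ v ∈ e, v ∈ c.supp} = {e | e ∈ p.edges} := by
  ext e
  constructor
  · rintro ⟨heE, hv⟩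
    induction e with
    | _ x y =>
      have hx : x ∈ p.support := by
        have := hv x (Sym2.mem_mk_left x y)
        rwa [hsupp] at this
      exact hcl x hx y ((SimpleGraph.mem_edgeSet G').mp heE)
  · intro he
    refine ⟨p.edges_subset_edgeSet he, fun v hv => ?_⟩
    rw [hsupp]
    exact mem_support_of_mem_edges he hv

lemma path_comp_struct [Fintype V] (hdeg : ∀ v, degree' G' v ≤ 2) {c : G'.ConnectedComponent}
    (hnocyc : ∀ v, G'.connectedComponentMk v = c → ∀ w : G'.Walk v v, ¬ w.IsCycle)
    {u : V} (hu : G'.connectedComponentMk u = c) :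
    ∃ (a b : V) (p : G'.Walk a b), p.IsPath ∧ G'.connectedComponentMk a = c ∧
      ∀ x ∈ p.support, ∀ y, G'.Adj x y → y ∈ p.support ∧ s(x, y) ∈ p.edges := by
  classical
  set LSet := {n | ∃ (a b : V) (p : G'.Walk a b), p.IsPath ∧
    G'.connectedComponentMk a = c ∧ p.length = n} with hLdef
  have hne : LSet.Nonempty := ⟨0, u, u, Walk.nil, Walk.IsPath.nil, hu, rfl⟩
  have hbdd : BddAbove LSet := ⟨Fintype.card V, by
    rintro n ⟨a, b, p, hp, _, rfl⟩; exact le_of_lt hp.length_lt⟩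
  obtain ⟨a, b, p, hp, hac, hlen⟩ := Nat.sSup_mem hne hbdd
  have hmax : ∀ (a' b' : V) (q : G'.Walk a' b'), q.IsPath →
      G'.connectedComponentMk a' = c → q.length ≤ sSup LSet :=
    fun a' b' q hq hq' => le_csSup hbdd ⟨a', b', q, hq, hq', rfl⟩
  have hbc : G'.connectedComponentMk b = c := by
    rw [← hac]; exact ConnectedComponent.eq.mpr p.reverse.reachable
  have haN : ∀ y, G'.Adj a y → y ∈ p.support := by
    intro y hy
    by_contra hns
    have hq : (Walk.cons hy.symm p).IsPath := (Walk.cons_isPath_iff _ _).mpr ⟨hp, hns⟩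
    have hyc : G'.connectedComponentMk y = c := by
      rw [← hac]; exact ConnectedComponent.eq.mpr hy.symm.reachable
    have := hmax _ _ _ hq hyc
    rw [Walk.length_cons, hlen] at this
    omega
  have hbN : ∀ y, G'.Adj b y → y ∈ p.support := by
    intro y hy
    by_contra hns
    have hq : (Walk.cons hy.symm p.reverse).IsPath :=
      (Walk.cons_isPath_iff _ _).mpr ⟨(Walk.isPath_reverse_iff p).mpr hp, by
        rw [Walk.support_reverse, List.mem_reverse]; exact hns⟩
    have hyc : G'.connectedComponentMk y = c := by
      rw [← hbc]; exact ConnectedComponent.eq.mpr hy.symm.reachable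
    have := hmax _ _ _ hq hyc
    rw [Walk.length_cons, Walk.length_reverse, hlen] at this
    omega
  have hstart := start_edge_claim hnocyc hp hac haN
  have hend0 := start_edge_claim hnocyc ((Walk.isPath_reverse_iff p).mpr hp) hbc
    (by intro y hy; rw [Walk.support_reverse, List.mem_reverse]; exact hbN y hy)
  have hend : ∀ y, G'.Adj b y → y ∈ p.support ∧ s(b, y) ∈ p.edges := by
    intro y hy
    obtain ⟨h1, h2⟩ := hend0 y hy
    rw [Walk.support_reverse, List.mem_reverse] at h1
    rw [Walk.edges_reverse, List.mem_reverse] at h2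
    exact ⟨h1, h2⟩
  refine ⟨a, b, p, hp, hac, ?_⟩
  intro x hxs y hxy
  have hE : p.edges = (p.takeUntil x hxs).edges ++ (p.dropUntil x hxs).edges := by
    conv_lhs => rw [← p.take_spec hxs]
    rw [Walk.edges_append]
  by_cases h1n : (p.takeUntil x hxs).edges = []
  · have hax : a = x := Walk.eq_of_length_eq_zero (by rw [← Walk.length_edges, h1n]; rfl)
    subst hax
    exact hstart y hxy
  · by_cases h2n : (p.dropUntil x hxs).edges = []
    · have hxb : x = b := Walk.eq_of_length_eq_zero (by rw [← Walk.length_edges, h2n]; rfl)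
      subst hxb
      exact hend y hxy
    · have hf1mem : (p.takeUntil x hxs).edges.getLast h1n ∈ p.edges := by
        rw [hE]; exact List.mem_append_left _ (List.getLast_mem h1n)
      have hxf1 : x ∈ (p.takeUntil x hxs).edges.getLast h1n := end_mem_getLast_edge _ h1n
      obtain ⟨z₁, hz₁⟩ := Sym2.mem_iff_exists.mp hxf1
      have hf2mem : (p.dropUntil x hxs).edges.head h2n ∈ p.edges := by
        rw [hE]; exact List.mem_append_right _ (List.head_mem h2n)
      have hxf2 : x ∈ (p.dropUntil x hxs).edges.head h2n := start_mem_head_edge _ h2n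
      obtain ⟨z₂, hz₂⟩ := Sym2.mem_iff_exists.mp hxf2
      have hnodup : ((p.takeUntil x hxs).edges ++ (p.dropUntil x hxs).edges).Nodup := by
        rw [← hE]; exact hp.isTrail.edges_nodup
      have hfne : (p.takeUntil x hxs).edges.getLast h1n ≠ (p.dropUntil x hxs).edges.head h2n :=
        fun hcon => (List.disjoint_of_nodup_append hnodup) (List.getLast_mem h1n)
          (hcon ▸ List.head_mem h2n)
      have hzne : z₁ ≠ z₂ := fun hcon => hfne (by rw [hz₁, hz₂, hcon])
      have ha1 : G'.Adj x z₁ := (SimpleGraph.mem_edgeSet G').mp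
        (by rw [← hz₁]; exact p.edges_subset_edgeSet hf1mem)
      have ha2 : G'.Adj x z₂ := (SimpleGraph.mem_edgeSet G').mp
        (by rw [← hz₂]; exact p.edges_subset_edgeSet hf2mem)
      rcases degree'_pair (hdeg x) ha1 ha2 hzne y hxy with rfl | rfl
      · have hmem : s(x, y) ∈ p.edges := by rw [← hz₁]; exact hf1mem
        exact ⟨mem_support_of_mem_edges hmem (Sym2.mem_mk_right x y), hmem⟩
      · have hmem : s(x, y) ∈ p.edges := by rw [← hz₂]; exact hf2mem
        exact ⟨mem_support_of_mem_edges hmem (Sym2.mem_mk_right x y), hmem⟩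

end StmtSix5

namespace StmtSix6
open StmtSix StmtSix2 StmtSix3 StmtSix4 StmtSix5
variable {V : Type*} {G' : SimpleGraph V}

lemma comp_struct [Fintype V] (hdeg : ∀ v, degree' G' v ≤ 2)
    (heven : ∀ (v : V) (w : G'.Walk v v), w.IsCycle → Even w.length)
    (c : G'.ConnectedComponent) :
    ∃ H₁ H₂ : Set (Sym2 V),
      (∀ e ∈ H₁, ∀ f ∈ H₁, e ≠ f → vdisj e f) ∧
      (∀ e ∈ H₂, ∀ f ∈ H₂, e ≠ f → vdisj e f) ∧
      Disjoint H₁ H₂ ∧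
      H₁ ∪ H₂ = {e | e ∈ G'.edgeSet ∧ ∀ v ∈ e, v ∈ c.supp} ∧
      ((IsPathComponent G' c ∧
          H₁.ncard + H₂.ncard + 1 = Nat.card c.supp ∧
          2 * H₁.ncard + (if Odd (Nat.card c.supp) then 1 else 0) = Nat.card c.supp) ∨
        (¬ IsPathComponent G' c ∧
          H₁.ncard + H₂.ncard = Nat.card c.supp ∧
          2 * H₁.ncard = Nat.card c.supp ∧ ¬ Odd (Nat.card c.supp))) := by
  classical
  by_cases hcy : ∃ (v : V) (w : G'.Walk v v), G'.connectedComponentMk v = c ∧ w.IsCycle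
  · obtain ⟨v, w, hvc, hw⟩ := hcy
    have hclaim := cycle_comp_struct hdeg hw
    have hsupp : c.supp = {y | y ∈ w.support} :=
      supp_eq_support w hvc (fun x hx y hxy => (hclaim x hx y hxy).1)
    have hEC := ec_eq_edges w hsupp (fun x hx y hxy => (hclaim x hx y hxy).2)
    have hnodupE : w.edges.Nodup := hw.isCircuit.isTrail.edges_nodup
    have hev : Even w.length := heven v w hw
    refine ⟨{e | e ∈ alts true w.edges}, {e | e ∈ alts false w.edges}, ?_, ?_, ?_, ?_, ?_⟩
    · exact pairwise_list_set (pairwise_alts_cycle hw hev true)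
    · exact pairwise_list_set (pairwise_alts_cycle hw hev false)
    · rw [Set.disjoint_left]
      intro e he hf
      exact (alts_disjoint hnodupE) he hf
    · rw [hEC]
      ext e
      simp only [Set.mem_union, Set.mem_setOf_eq]
      constructor
      · rintro (h | h)
        exacts [alts_subset h, alts_subset h]
      · intro h
        exact List.mem_append.mp ((alts_perm w.edges).mem_iff.mpr h)
    · right
      have hsuppcard : Nat.card c.supp = w.length := by
        have h1 : c.supp = {y | y ∈ w.support.tail} := by
          rw [hsupp]
          ext y
          simp only [Set.mem_setOf_eq]
          constructor
          · intro hy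
            rw [Walk.support_eq_cons] at hy
            rcases List.mem_cons.mp hy with rfl | hy'
            · exact end_mem_tail_support w hw.not_nil
            · exact hy'
          · exact List.mem_of_mem_tail
        rw [Nat.card_coe_set_eq, h1, ncard_list_set hw.support_nodup,
          List.length_tail, Walk.length_support]
        omega
      have hn1 : ({e | e ∈ alts true w.edges} : Set (Sym2 V)).ncard = (w.length + 1) / 2 := by
        rw [ncard_list_set (alts_nodup hnodupE), (length_alts w.edges).1, Walk.length_edges]
      have hn2 : ({e | e ∈ alts false w.edges} : Set (Sym2 V)).ncard = w.length / 2 := by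
        rw [ncard_list_set (alts_nodup hnodupE), (length_alts w.edges).2, Walk.length_edges]
      obtain ⟨k, hk⟩ := hev
      refine ⟨fun hpc => hpc.2 v hvc w hw, ?_, ?_, ?_⟩
      · rw [hn1, hn2, hsuppcard]; omega
      · rw [hn1, hsuppcard]; omega
      · rw [hsuppcard, Nat.odd_iff]; omega
  · have hnocyc : ∀ v, G'.connectedComponentMk v = c → ∀ w : G'.Walk v v, ¬ w.IsCycle :=
      fun v hv w hw' => hcy ⟨v, w, hv, hw'⟩
    obtain ⟨u, hu⟩ := Quot.exists_rep c
    obtain ⟨a, b, p, hp, hac, hclaim⟩ := path_comp_struct hdeg hnocyc hu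
    have hsupp : c.supp = {y | y ∈ p.support} :=
      supp_eq_support p hac (fun x hx y hxy => (hclaim x hx y hxy).1)
    have hEC := ec_eq_edges p hsupp (fun x hx y hxy => (hclaim x hx y hxy).2)
    have hnodupE : p.edges.Nodup := hp.isTrail.edges_nodup
    refine ⟨{e | e ∈ alts true p.edges}, {e | e ∈ alts false p.edges}, ?_, ?_, ?_, ?_, ?_⟩
    · exact pairwise_list_set (pairwise_alts_path hp true)
    · exact pairwise_list_set (pairwise_alts_path hp false)
    · rw [Set.disjoint_left]
      intro e he hf
      exact (alts_disjoint hnodupE) he hf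
    · rw [hEC]
      ext e
      simp only [Set.mem_union, Set.mem_setOf_eq]
      constructor
      · rintro (h | h)
        exacts [alts_subset h, alts_subset h]
      · intro h
        exact List.mem_append.mp ((alts_perm p.edges).mem_iff.mpr h)
    · left
      have hsuppcard : Nat.card c.supp = p.length + 1 := by
        rw [Nat.card_coe_set_eq, hsupp, ncard_list_set hp.support_nodup,
          Walk.length_support]
      have hn1 : ({e | e ∈ alts true p.edges} : Set (Sym2 V)).ncard = (p.length + 1) / 2 := by
        rw [ncard_list_set (alts_nodup hnodupE), (length_alts p.edges).1, Walk.length_edges]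
      have hn2 : ({e | e ∈ alts false p.edges} : Set (Sym2 V)).ncard = p.length / 2 := by
        rw [ncard_list_set (alts_nodup hnodupE), (length_alts p.edges).2, Walk.length_edges]
      refine ⟨⟨fun v _ => hdeg v, hnocyc⟩, ?_, ?_⟩
      · rw [hn1, hn2, hsuppcard]; omega
      · rw [hn1, hsuppcard]
        by_cases ho : Odd (p.length + 1)
        · rw [if_pos ho]
          rw [Nat.odd_iff] at ho
          omega
        · rw [if_neg ho]
          rw [Nat.odd_iff] at ho
          omega

end StmtSix6

namespace StmtSix7
open StmtSix StmtSix2 StmtSix3 StmtSix4 StmtSix5 StmtSix6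
variable {V : Type*} {G' : SimpleGraph V}

/-- the edge set of a component -/
def EC (G' : SimpleGraph V) (c : G'.ConnectedComponent) : Set (Sym2 V) :=
  {e | e ∈ G'.edgeSet ∧ ∀ v ∈ e, v ∈ c.supp}

lemma supp_disjoint {c d : G'.ConnectedComponent} (h : c ≠ d) : Disjoint c.supp d.supp :=
  Set.disjoint_left.mpr fun v hv hv' => h ((hv : _ = c).symm.trans (hv' : _ = d))

lemma ec_disjoint {c d : G'.ConnectedComponent} (h : c ≠ d) : Disjoint (EC G' c) (EC G' d) := by
  rw [Set.disjoint_left]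
  rintro e ⟨heE, hc⟩ ⟨_, hd⟩
  have hx := Sym2.out_fst_mem e
  exact Set.disjoint_left.mp (supp_disjoint h) (hc _ hx) (hd _ hx)

lemma edge_mem_ec {e : Sym2 V} (he : e ∈ G'.edgeSet) :
    ∃ c, e ∈ EC G' c := by
  induction e with
  | _ x y =>
    refine ⟨G'.connectedComponentMk x, he, ?_⟩
    intro v hv
    rcases Sym2.mem_iff.mp hv with rfl | rfl
    · rfl
    · exact (SimpleGraph.ConnectedComponent.eq.mpr
        (((SimpleGraph.mem_edgeSet G').mp he).reachable)).symm

lemma ncard_biUnion_eq {ι α : Type*} [Finite α] (t : Finset ι) (S : ι → Set α)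
    (hdisj : ∀ i ∈ t, ∀ j ∈ t, i ≠ j → Disjoint (S i) (S j)) :
    (⋃ i ∈ t, S i).ncard = ∑ i ∈ t, (S i).ncard := by
  classical
  revert hdisj
  refine Finset.induction_on t (by simp) ?_
  intro a s ha ih hdisj
  rw [Finset.set_biUnion_insert, Finset.sum_insert ha,
    Set.ncard_union_eq ?_ (Set.toFinite _) (Set.toFinite _),
    ih (fun i hi j hj hij => hdisj i (Finset.mem_insert_of_mem hi) j
      (Finset.mem_insert_of_mem hj) hij)]
  rw [Set.disjoint_left]
  intro e he hcon
  obtain ⟨i, hi, hei⟩ := Set.mem_iUnion₂.mp hcon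
  exact Set.disjoint_left.mp
    (hdisj a (Finset.mem_insert_self a s) i (Finset.mem_insert_of_mem hi)
      (by rintro rfl; exact ha hi)) he hei

lemma ncard_iUnion_eq {ι α : Type*} [Fintype ι] [Finite α] (S : ι → Set α)
    (hdisj : ∀ i j, i ≠ j → Disjoint (S i) (S j)) :
    (⋃ i, S i).ncard = ∑ i, (S i).ncard := by
  have h : ⋃ i, S i = ⋃ i ∈ Finset.univ, S i := by simp
  rw [h, ncard_biUnion_eq _ _ (fun i _ j _ hij => hdisj i j hij)]

lemma sum_card_supp [Fintype V] (G' : SimpleGraph V) [Fintype G'.ConnectedComponent] :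
    ∑ c : G'.ConnectedComponent, Nat.card c.supp = Fintype.card V := by
  classical
  have e : (Σ c : G'.ConnectedComponent, c.supp) ≃ V :=
    { toFun := fun x => x.2.1
      invFun := fun v => ⟨G'.connectedComponentMk v, v, rfl⟩
      left_inv := by
        rintro ⟨c, v, hv⟩
        have h : G'.connectedComponentMk v = c := hv
        subst h
        rfl
      right_inv := fun v => rfl }
  calc ∑ c : G'.ConnectedComponent, Nat.card c.supp
      = ∑ c : G'.ConnectedComponent, Fintype.card c.supp := by
        refine Finset.sum_congr rfl fun c _ => ?_
        exact Nat.card_eq_fintype_card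
    _ = Fintype.card (Σ c : G'.ConnectedComponent, c.supp) := (Fintype.card_sigma).symm
    _ = Fintype.card V := Fintype.card_congr e

lemma count_subtype_eq_sum {ι : Type*} [Fintype ι] (P : ι → Prop) [DecidablePred P] :
    Nat.card {c // P c} = ∑ c : ι, if P c then 1 else 0 := by
  rw [Nat.card_eq_fintype_card, Fintype.card_subtype, Finset.card_filter]

lemma matching_card_bound [Finite V] {M : Set (Sym2 V)} {S : Set V}
    (hndiag : ∀ e ∈ M, ¬ e.IsDiag)
    (hv : ∀ e ∈ M, ∀ v ∈ e, v ∈ S)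
    (hm : ∀ e ∈ M, ∀ f ∈ M, e ≠ f → vdisj e f) :
    2 * M.ncard ≤ S.ncard := by
  classical
  haveI : Fintype V := Fintype.ofFinite V
  have hMfin : M.Finite := Set.toFinite M
  have hSfin : S.Finite := Set.toFinite S
  set F : Sym2 V → Finset V := fun e => {(Quot.out e).1, (Quot.out e).2} with hF
  have hFmem : ∀ (e : Sym2 V) (x : V), x ∈ F e → x ∈ e := by
    intro e x hx
    rcases Finset.mem_insert.mp hx with rfl | hx2
    · exact Sym2.out_fst_mem e
    · rw [Finset.mem_singleton] at hx2
      subst hx2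
      exact Sym2.out_snd_mem e
  have hcard2 : ∀ e ∈ hMfin.toFinset, (F e).card = 2 := by
    intro e he
    rw [Set.Finite.mem_toFinset] at he
    have heq : s((Quot.out e).1, (Quot.out e).2) = e := Quot.out_eq e
    have hne : (Quot.out e).1 ≠ (Quot.out e).2 := by
      intro hcon
      exact hndiag e he (heq ▸ Sym2.mk_isDiag_iff.mpr hcon)
    rw [hF]
    rw [Finset.card_insert_of_notMem (by simp [hne]), Finset.card_singleton]
  have hdisjF : ∀ e ∈ hMfin.toFinset, ∀ f ∈ hMfin.toFinset, e ≠ f → Disjoint (F e) (F f) := by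
    intro e he f hf hef
    rw [Set.Finite.mem_toFinset] at he hf
    rw [Finset.disjoint_left]
    intro x hx hx'
    exact hm e he f hf hef x ⟨hFmem e x hx, hFmem f x hx'⟩
  have hsub : hMfin.toFinset.biUnion F ⊆ hSfin.toFinset := by
    intro x hx
    obtain ⟨e, he, hxe⟩ := Finset.mem_biUnion.mp hx
    rw [Set.Finite.mem_toFinset] at he ⊢
    exact hv e he x (hFmem e x hxe)
  calc 2 * M.ncard = ∑ e ∈ hMfin.toFinset, (F e).card := by
        rw [Finset.sum_congr rfl hcard2, Finset.sum_const, smul_eq_mul,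
          Set.ncard_eq_toFinset_card _ hMfin]
        ring
    _ = (hMfin.toFinset.biUnion F).card := (Finset.card_biUnion hdisjF).symm
    _ ≤ hSfin.toFinset.card := Finset.card_le_card hsub
    _ = S.ncard := (Set.ncard_eq_toFinset_card _ hSfin).symm

lemma global_struct [Fintype V] (hdeg : ∀ v, degree' G' v ≤ 2)
    (heven : ∀ (v : V) (w : G'.Walk v v), w.IsCycle → Even w.length) :
    ∃ H H' : Set (Sym2 V),
      H ⊆ G'.edgeSet ∧ H' ⊆ G'.edgeSet ∧
      (∀ e ∈ H, ∀ f ∈ H, e ≠ f → vdisj e f) ∧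
      (∀ e ∈ H', ∀ f ∈ H', e ≠ f → vdisj e f) ∧
      Disjoint H H' ∧
      H ∪ H' = G'.edgeSet ∧
      H.ncard + H'.ncard + pathCount G' = Fintype.card V ∧
      2 * H.ncard + evenPathCount G' = Fintype.card V := by
  classical
  haveI : Fintype G'.ConnectedComponent := Fintype.ofFinite _
  choose H₁ H₂ hm1 hm2 hdisj hunion halt using comp_struct hdeg heven (G' := G')
  have hsub1 : ∀ c, H₁ c ⊆ EC G' c := by
    intro c e he
    have h := Set.mem_union_left (H₂ c) he
    rw [hunion c] at h
    exact h
  have hsub2 : ∀ c, H₂ c ⊆ EC G' c := by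
    intro c e he
    have h := Set.mem_union_right (H₁ c) he
    rw [hunion c] at h
    exact h
  have hd1 : ∀ (c d : G'.ConnectedComponent), c ≠ d → Disjoint (H₁ c) (H₁ d) :=
    fun c d h => Set.disjoint_of_subset (hsub1 c) (hsub1 d) (ec_disjoint h)
  have hd2 : ∀ (c d : G'.ConnectedComponent), c ≠ d → Disjoint (H₂ c) (H₂ d) :=
    fun c d h => Set.disjoint_of_subset (hsub2 c) (hsub2 d) (ec_disjoint h)
  have hmatch : ∀ (Hf : G'.ConnectedComponent → Set (Sym2 V)),
      (∀ c, Hf c ⊆ EC G' c) →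
      (∀ c, ∀ e ∈ Hf c, ∀ f ∈ Hf c, e ≠ f → vdisj e f) →
      ∀ e ∈ ⋃ c, Hf c, ∀ f ∈ ⋃ c, Hf c, e ≠ f → vdisj e f := by
    intro Hf hsub hm e he f hf hef
    obtain ⟨c, hc⟩ := Set.mem_iUnion.mp he
    obtain ⟨d, hd⟩ := Set.mem_iUnion.mp hf
    rcases eq_or_ne c d with rfl | hcd
    · exact hm c e hc f hd hef
    · intro v hv
      have h1 : v ∈ c.supp := (hsub c hc).2 v hv.1
      have h2 : v ∈ d.supp := (hsub d hd).2 v hv.2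
      exact Set.disjoint_left.mp (supp_disjoint hcd) h1 h2
  refine ⟨⋃ c, H₁ c, ⋃ c, H₂ c, ?_, ?_, hmatch H₁ hsub1 hm1, hmatch H₂ hsub2 hm2, ?_, ?_, ?_, ?_⟩
  · intro e he
    obtain ⟨c, hc⟩ := Set.mem_iUnion.mp he
    exact (hsub1 c hc).1
  · intro e he
    obtain ⟨c, hc⟩ := Set.mem_iUnion.mp he
    exact (hsub2 c hc).1
  · rw [Set.disjoint_left]
    intro e he hf
    obtain ⟨c, hc⟩ := Set.mem_iUnion.mp he
    obtain ⟨d, hd⟩ := Set.mem_iUnion.mp hf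
    rcases eq_or_ne c d with rfl | hcd
    · exact Set.disjoint_left.mp (hdisj c) hc hd
    · exact Set.disjoint_left.mp (ec_disjoint hcd) (hsub1 c hc) (hsub2 d hd)
  · ext e
    constructor
    · intro he
      rcases he with he | he
      · obtain ⟨c, hc⟩ := Set.mem_iUnion.mp he
        exact (hsub1 c hc).1
      · obtain ⟨c, hc⟩ := Set.mem_iUnion.mp he
        exact (hsub2 c hc).1
    · intro he
      obtain ⟨c, hc⟩ := edge_mem_ec he
      have : e ∈ H₁ c ∪ H₂ c := by rw [hunion c]; exact hc
      rcases this with h | h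
      · exact Or.inl (Set.mem_iUnion.mpr ⟨c, h⟩)
      · exact Or.inr (Set.mem_iUnion.mpr ⟨c, h⟩)
  · rw [ncard_iUnion_eq H₁ hd1, ncard_iUnion_eq H₂ hd2]
    have hpc : pathCount G' = ∑ c : G'.ConnectedComponent,
        if IsPathComponent G' c then 1 else 0 := count_subtype_eq_sum _
    rw [hpc, ← Finset.sum_add_distrib, ← Finset.sum_add_distrib, ← sum_card_supp G']
    refine Finset.sum_congr rfl fun c _ => ?_
    rcases halt c with ⟨hp, h1, _⟩ | ⟨hp, h1, _, _⟩
    · rw [if_pos hp]; exact h1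
    · rw [if_neg hp]; omega
  · rw [ncard_iUnion_eq H₁ hd1, Finset.mul_sum]
    have hec : evenPathCount G' = ∑ c : G'.ConnectedComponent,
        if (IsPathComponent G' c ∧ Odd (Nat.card c.supp)) then 1 else 0 :=
      count_subtype_eq_sum _
    rw [hec, ← Finset.sum_add_distrib, ← sum_card_supp G']
    refine Finset.sum_congr rfl fun c _ => ?_
    rcases halt c with ⟨hp, _, h2⟩ | ⟨hp, _, h2, h3⟩
    · by_cases ho : Odd (Nat.card c.supp)
      · rw [if_pos ⟨hp, ho⟩]
        rw [if_pos ho] at h2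
        exact h2
      · rw [if_neg (fun h => ho h.2)]
        rw [if_neg ho] at h2
        omega
    · rw [if_neg (fun h => hp h.1)]
      omega

lemma global_bound [Fintype V] (hdeg : ∀ v, degree' G' v ≤ 2)
    (heven : ∀ (v : V) (w : G'.Walk v v), w.IsCycle → Even w.length)
    {H : Set (Sym2 V)} (hsub : H ⊆ G'.edgeSet)
    (hm : ∀ e ∈ H, ∀ f ∈ H, e ≠ f → vdisj e f) :
    2 * H.ncard + evenPathCount G' ≤ Fintype.card V := by
  classical
  haveI : Fintype G'.ConnectedComponent := Fintype.ofFinite _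
  have hcover : H = ⋃ c, H ∩ EC G' c := by
    ext e
    constructor
    · intro he
      obtain ⟨c, hc⟩ := edge_mem_ec (hsub he)
      exact Set.mem_iUnion.mpr ⟨c, he, hc⟩
    · intro he
      obtain ⟨c, hc⟩ := Set.mem_iUnion.mp he
      exact hc.1
  have hdisjc : ∀ (c d : G'.ConnectedComponent), c ≠ d →
      Disjoint (H ∩ EC G' c) (H ∩ EC G' d) :=
    fun c d h => Set.disjoint_of_subset Set.inter_subset_right Set.inter_subset_right
      (ec_disjoint h)
  have hncard : H.ncard = ∑ c : G'.ConnectedComponent, (H ∩ EC G' c).ncard := by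
    conv_lhs => rw [hcover]
    exact ncard_iUnion_eq _ hdisjc
  have hbound : ∀ c : G'.ConnectedComponent,
      2 * (H ∩ EC G' c).ncard +
        (if (IsPathComponent G' c ∧ Odd (Nat.card c.supp)) then 1 else 0) ≤
      Nat.card c.supp := by
    intro c
    rw [Nat.card_coe_set_eq]
    have hb : 2 * (H ∩ EC G' c).ncard ≤ c.supp.ncard := by
      refine matching_card_bound ?_ ?_ ?_
      · exact fun e he => G'.not_isDiag_of_mem_edgeSet he.2.1
      · exact fun e he v hv => he.2.2 v hv
      · exact fun e he f hf hef => hm e he.1 f hf.1 hef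
    by_cases ho : Odd (c.supp.ncard)
    · have := Nat.odd_iff.mp ho
      by_cases hp : IsPathComponent G' c
      · rw [if_pos ⟨hp, ho⟩]; omega
      · rw [if_neg (fun h => hp h.1)]; omega
    · rw [if_neg (fun h => ho h.2)]; omega
  have hec : evenPathCount G' = ∑ c : G'.ConnectedComponent,
      if (IsPathComponent G' c ∧ Odd (Nat.card c.supp)) then 1 else 0 :=
    count_subtype_eq_sum _
  rw [hncard, hec, Finset.mul_sum, ← Finset.sum_add_distrib, ← sum_card_supp G']
  exact Finset.sum_le_sum fun c _ => hbound c

end StmtSix7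

namespace StmtSix8
open StmtSix StmtSix2 StmtSix3 StmtSix4 StmtSix5 StmtSix6 StmtSix7
variable {V : Type*}

lemma chain'_cons_chain {α : Type*} {R : α → α → Prop} {a : α} {l : List α}
    (h : List.Chain' R (a :: l)) : List.Chain R a l := h

lemma pec_bot (G : SimpleGraph V) : IsPec G ⊥ := by
  refine ⟨bot_le, fun v => ?_, fun v w hw => ?_⟩
  · have h : (⊥ : SimpleGraph V).neighborSet v = ∅ := by
      ext y; simp [SimpleGraph.neighborSet]
    rw [degree', h]
    simp
  · exfalso
    cases w with
    | nil => exact hw.ne_nil rfl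
    | cons h _ => exact h

lemma matching_not_diag {G : SimpleGraph V} {H : Set (Sym2 V)} (hH : IsMatchingSet G H) :
    ∀ e ∈ H, ¬ e.IsDiag := fun e he => G.not_isDiag_of_mem_edgeSet (hH.1 he)

lemma union_edgeSet {G : SimpleGraph V} {H H' : Set (Sym2 V)}
    (hH : IsMatchingSet G H) (hH' : IsMatchingSet G H') :
    (SimpleGraph.fromEdgeSet (H ∪ H')).edgeSet = H ∪ H' := by
  rw [SimpleGraph.edgeSet_fromEdgeSet]
  ext e
  simp only [Set.mem_diff, Set.mem_setOf_eq]
  constructor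
  · exact fun h => h.1
  · intro h
    refine ⟨h, ?_⟩
    rcases h with h | h
    · exact matching_not_diag hH e h
    · exact matching_not_diag hH' e h

lemma union_le {G : SimpleGraph V} {H H' : Set (Sym2 V)}
    (hH : IsMatchingSet G H) (hH' : IsMatchingSet G H') :
    SimpleGraph.fromEdgeSet (H ∪ H') ≤ G := by
  intro v w hvw
  rw [SimpleGraph.fromEdgeSet_adj] at hvw
  rcases hvw.1 with h | h
  · exact (SimpleGraph.mem_edgeSet G).mp (hH.1 h)
  · exact (SimpleGraph.mem_edgeSet G).mp (hH'.1 h)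

lemma union_deg [Fintype V] {G : SimpleGraph V} {H H' : Set (Sym2 V)}
    (hH : IsMatchingSet G H) (hH' : IsMatchingSet G H') :
    ∀ v, degree' (SimpleGraph.fromEdgeSet (H ∪ H')) v ≤ 2 := by
  classical
  intro v
  rw [degree', Nat.card_coe_set_eq]
  have hone : ∀ (M : Set (Sym2 V)), IsMatchingSet G M → {y | s(v, y) ∈ M}.ncard ≤ 1 := by
    intro M hM
    rw [Set.ncard_le_one (Set.toFinite _)]
    intro a ha b hb
    by_contra hab
    have hne : s(v, a) ≠ s(v, b) := fun hcon => hab (by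
      rcases Sym2.eq_iff.mp hcon with ⟨_, h⟩ | ⟨h1, h2⟩
      · exact h
      · rw [h2, ← h1])
    exact hM.2 _ ha _ hb hne v ⟨Sym2.mem_mk_left v a, Sym2.mem_mk_left v b⟩
  have hsub : (SimpleGraph.fromEdgeSet (H ∪ H')).neighborSet v ⊆
      {y | s(v, y) ∈ H} ∪ {y | s(v, y) ∈ H'} := by
    intro y hy
    have := (SimpleGraph.fromEdgeSet_adj (H ∪ H')).mp hy
    exact this.1
  calc ((SimpleGraph.fromEdgeSet (H ∪ H')).neighborSet v).ncard
      ≤ ({y | s(v, y) ∈ H} ∪ {y | s(v, y) ∈ H'}).ncard :=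
        Set.ncard_le_ncard hsub (Set.toFinite _)
    _ ≤ {y | s(v, y) ∈ H}.ncard + {y | s(v, y) ∈ H'}.ncard := Set.ncard_union_le _ _
    _ ≤ 2 := by
        have := hone H hH
        have := hone H' hH'
        omega

lemma union_even [Fintype V] {G : SimpleGraph V} {H H' : Set (Sym2 V)}
    (hH : IsMatchingSet G H) (hH' : IsMatchingSet G H') (hdisj : Disjoint H H') :
    ∀ (v : V) (w : (SimpleGraph.fromEdgeSet (H ∪ H')).Walk v v), w.IsCycle →
      Even w.length := by
  classical
  intro v w hw
  have hEdges : ∀ e ∈ w.edges, e ∈ H ∪ H' := by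
    intro e he
    have := w.edges_subset_edgeSet he
    rw [SimpleGraph.edgeSet_fromEdgeSet] at this
    exact this.1
  have hkey : ∀ e f : Sym2 V, e ∈ H ∪ H' → f ∈ H ∪ H' → e ≠ f → (∃ x, x ∈ e ∧ x ∈ f) →
      decide (e ∈ H) ≠ decide (f ∈ H) := by
    rintro e f he hf hef ⟨x, hxe, hxf⟩
    by_cases h1 : e ∈ H <;> by_cases h2 : f ∈ H
    · exact absurd ⟨hxe, hxf⟩ (hH.2 e h1 f h2 hef x)
    · simp [h1, h2]
    · simp [h1, h2]
    · exact absurd ⟨hxe, hxf⟩ (hH'.2 e (he.resolve_left h1) f (hf.resolve_left h2) hef x)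
  have hnodup : w.edges.Nodup := hw.isCircuit.isTrail.edges_nodup
  have hchain1 := edges_chain' w
  have hchain2 : List.Chain' (· ≠ ·) w.edges := hnodup.isChain
  have hchain : List.Chain' (fun e f => decide (e ∈ H) ≠ decide (f ∈ H)) w.edges := by
    change List.IsChain _ _ at hchain1 hchain2 ⊢
    rw [List.isChain_iff_getElem] at hchain1 hchain2 ⊢
    intro i h
    exact hkey _ _ (hEdges _ (List.getElem_mem ..)) (hEdges _ (List.getElem_mem ..))
      (hchain2 i h) (hchain1 i h)
  have hlen3 := hw.three_le_length
  cases w with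
  | nil => exact absurd hw (fun h => h.ne_nil rfl)
  | cons hadj q =>
    rename_i x
    rw [Walk.length_cons] at hlen3 ⊢
    rw [Walk.edges_cons] at hchain hEdges hnodup
    have hne : q.edges ≠ [] := by
      intro hcon
      have : q.length = 0 := by rw [← Walk.length_edges, hcon]; rfl
      omega
    have hnotin : s(v, x) ∉ q.edges := (List.nodup_cons.mp hnodup).1
    have hlastmem : q.edges.getLast hne ∈ q.edges := List.getLast_mem hne
    have hlastv : v ∈ q.edges.getLast hne := end_mem_getLast_edge q hne
    have hkeyne : decide (q.edges.getLast hne ∈ H) ≠ decide (s(v, x) ∈ H) :=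
      hkey _ _ (hEdges _ (List.mem_cons_of_mem _ hlastmem)) (hEdges _ List.mem_cons_self)
        (fun hcon => hnotin (hcon ▸ hlastmem))
        ⟨v, hlastv, Sym2.mem_mk_left v x⟩
    have hmapchain : List.Chain' (· ≠ ·)
        ((s(v, x) :: q.edges).map (fun e => decide (e ∈ H))) :=
      (List.isChain_map _).mpr hchain
    rw [List.map_cons] at hmapchain
    have hchainB : List.Chain (· ≠ ·) (decide (s(v, x) ∈ H))
        (q.edges.map (fun e => decide (e ∈ H))) := chain'_cons_chain hmapchain
    have hgl := chain_ne_getLast _ _ hchainB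
    have h1 : ((s(v, x) :: q.edges).map (fun e => decide (e ∈ H))).getLast (by simp)
        = decide ((s(v, x) :: q.edges).getLast (by simp) ∈ H) :=
      List.getLast_map _
    have h2 : (s(v, x) :: q.edges).getLast (by simp) = q.edges.getLast hne :=
      List.getLast_cons hne
    have hglmap : ((decide (s(v, x) ∈ H)) :: q.edges.map (fun e => decide (e ∈ H))).getLast
        (by simp) = decide (q.edges.getLast hne ∈ H) := by
      exact h1.trans (by rw [h2])
    rw [hglmap] at hgl
    by_cases hev : Even (q.edges.map (fun e => decide (e ∈ H))).length
    · exfalso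
      rw [if_pos hev] at hgl
      exact hkeyne hgl
    · rw [List.length_map, Walk.length_edges] at hev
      exact Nat.even_add_one.mpr hev

end StmtSix8

open StmtSix StmtSix2 StmtSix3 StmtSix4 StmtSix5 StmtSix6 StmtSix7 StmtSix8

/-- For every finite graph `G` on `n` vertices, μ(G) = (n − e_p(G))/2,
stated subtraction/division-free as 2·μ(G) + e_p(G) = n. -/
theorem stmt_6 [Fintype V] (G : SimpleGraph V) :
    2 * muParam G + epMin G = Fintype.card V := by
  classical
  have hempty : IsMatchingSet G ∅ :=
    ⟨Set.empty_subset _, fun e he => (Set.notMem_empty e he).elim⟩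
  set B := (Set.univ : Set (Sym2 V)).ncard with hB
  have hbd : ∀ M : Set (Sym2 V), M.ncard ≤ B :=
    fun M => Set.ncard_le_ncard (Set.subset_univ M) (Set.toFinite _)
  -- the lambda set
  set Sl := {n | ∃ H H' : Set (Sym2 V), IsMatchingSet G H ∧ IsMatchingSet G H' ∧
    Disjoint H H' ∧ H.ncard + H'.ncard = n} with hSl
  have hSlne : Sl.Nonempty := ⟨0, ∅, ∅, hempty, hempty, by simp, by simp⟩
  have hSlbdd : BddAbove Sl := ⟨2 * B, by
    rintro n ⟨H, H', _, _, _, rfl⟩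
    have := hbd H
    have := hbd H'
    omega⟩
  have hlam : lambdaParam G = sSup Sl := rfl
  -- the mu set
  set Sm := {n | ∃ H H' : Set (Sym2 V), IsMatchingSet G H ∧ IsMatchingSet G H' ∧
    Disjoint H H' ∧ H.ncard + H'.ncard = lambdaParam G ∧ H.ncard = n} with hSm
  have hmu : muParam G = sSup Sm := rfl
  have hSmbdd : BddAbove Sm := ⟨B, by
    rintro n ⟨H, H', _, _, _, _, rfl⟩
    exact hbd H⟩
  -- pec sets
  set Sp := {n | ∃ G' : SimpleGraph V, IsPec G G' ∧ pathCount G' = n} with hSp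
  have hpm : pMin G = sInf Sp := rfl
  have hSpne : Sp.Nonempty := ⟨pathCount ⊥, ⊥, pec_bot G, rfl⟩
  obtain ⟨G₀, hpec₀, hpc₀⟩ := Nat.sInf_mem hSpne
  set Sep := {n | ∃ G' : SimpleGraph V, IsPec G G' ∧ pathCount G' = pMin G ∧
    evenPathCount G' = n} with hSep
  have hepm : epMin G = sInf Sep := rfl
  have hSepne : Sep.Nonempty := ⟨evenPathCount G₀, G₀, hpec₀, hpc₀, rfl⟩
  obtain ⟨Gs, hpecs, hpcs, hepcs⟩ := Nat.sInf_mem hSepne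
  -- global structure for any pec decomposition, with matchings of G
  have hglobal : ∀ G' : SimpleGraph V, IsPec G G' →
      ∃ Hs Hs' : Set (Sym2 V), IsMatchingSet G Hs ∧ IsMatchingSet G Hs' ∧ Disjoint Hs Hs' ∧
        Hs ∪ Hs' = G'.edgeSet ∧
        Hs.ncard + Hs'.ncard + pathCount G' = Fintype.card V ∧
        2 * Hs.ncard + evenPathCount G' = Fintype.card V := by
    intro G' hpec
    obtain ⟨Hs, Hs', hsub1, hsub2, hm1, hm2, hdisj, hun, he1, he2⟩ :=
      global_struct (G' := G') hpec.2.1 hpec.2.2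
    exact ⟨Hs, Hs',
      ⟨fun e he => SimpleGraph.edgeSet_mono hpec.1 (hsub1 he),
        fun e he f hf hef => hm1 e he f hf hef⟩,
      ⟨fun e he => SimpleGraph.edgeSet_mono hpec.1 (hsub2 he),
        fun e he f hf hef => hm2 e he f hf hef⟩,
      hdisj, hun, he1, he2⟩
  -- union of a disjoint pair of matchings is a pec decomposition
  have hunionpec : ∀ H H' : Set (Sym2 V), IsMatchingSet G H → IsMatchingSet G H' →
      Disjoint H H' →
      IsPec G (SimpleGraph.fromEdgeSet (H ∪ H')) ∧
      pathCount (SimpleGraph.fromEdgeSet (H ∪ H')) + (H.ncard + H'.ncard) =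
        Fintype.card V := by
    intro H H' hH hH' hdisj
    have hpecU : IsPec G (SimpleGraph.fromEdgeSet (H ∪ H')) :=
      ⟨union_le hH hH', union_deg hH hH', union_even hH hH' hdisj⟩
    refine ⟨hpecU, ?_⟩
    obtain ⟨Hs, Hs', _, _, hdisjs, hun, he1, _⟩ := hglobal _ hpecU
    have hE : (SimpleGraph.fromEdgeSet (H ∪ H')).edgeSet = H ∪ H' :=
      union_edgeSet hH hH'
    have h1 : Hs.ncard + Hs'.ncard = H.ncard + H'.ncard := by
      have h2 : (Hs ∪ Hs').ncard = (H ∪ H').ncard := by rw [hun, hE]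
      rw [Set.ncard_union_eq hdisjs (Set.toFinite _) (Set.toFinite _),
        Set.ncard_union_eq hdisj (Set.toFinite _) (Set.toFinite _)] at h2
      exact h2
    omega
  -- lambda is attained
  have hlmem : lambdaParam G ∈ Sl := Nat.sSup_mem hSlne hSlbdd
  obtain ⟨Hl, Hl', hHl, hHl', hdl, hsl⟩ := hlmem
  obtain ⟨hpecUl, hpcUl⟩ := hunionpec Hl Hl' hHl hHl' hdl
  -- lambda + pMin = card V
  obtain ⟨Hs0, Hs0', hm0, hm0', hd0, _, he01, _⟩ := hglobal G₀ hpec₀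
  have hle1 : Fintype.card V ≤ lambdaParam G + pMin G := by
    have hmem : Hs0.ncard + Hs0'.ncard ∈ Sl := ⟨Hs0, Hs0', hm0, hm0', hd0, rfl⟩
    have h := le_csSup hSlbdd hmem
    rw [← hlam] at h
    omega
  have hge1 : lambdaParam G + pMin G ≤ Fintype.card V := by
    have hmemp : pathCount (SimpleGraph.fromEdgeSet (Hl ∪ Hl')) ∈ Sp := ⟨_, hpecUl, rfl⟩
    have h := Nat.sInf_le hmemp
    rw [← hpm] at h
    omega
  have hlp : lambdaParam G + pMin G = Fintype.card V := le_antisymm hge1 hle1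
  -- the ≥ direction
  obtain ⟨Hs, Hs', hm1, hm2, hd, _, he1, he2⟩ := hglobal Gs hpecs
  have hsum_l : Hs.ncard + Hs'.ncard = lambdaParam G := by
    rw [hpcs] at he1
    omega
  have hmu_ge : Hs.ncard ≤ muParam G := by
    rw [hmu]
    exact le_csSup hSmbdd ⟨Hs, Hs', hm1, hm2, hd, hsum_l, rfl⟩
  have hge : Fintype.card V ≤ 2 * muParam G + epMin G := by
    rw [hepcs] at he2
    omega
  -- the ≤ direction
  have hSmne : Sm.Nonempty := ⟨Hl.ncard, Hl, Hl', hHl, hHl', hdl, hsl, rfl⟩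
  have hmumem : muParam G ∈ Sm := Nat.sSup_mem hSmne hSmbdd
  obtain ⟨Hm, Hm', hHm, hHm', hdm, hsm, hcm⟩ := hmumem
  obtain ⟨hpecUm, hpcUm⟩ := hunionpec Hm Hm' hHm hHm' hdm
  have hpathUm : pathCount (SimpleGraph.fromEdgeSet (Hm ∪ Hm')) = pMin G := by
    rw [hsm] at hpcUm
    omega
  have hepmem : evenPathCount (SimpleGraph.fromEdgeSet (Hm ∪ Hm')) ∈ Sep :=
    ⟨_, hpecUm, hpathUm, rfl⟩
  have heple : epMin G ≤ evenPathCount (SimpleGraph.fromEdgeSet (Hm ∪ Hm')) := by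
    rw [hepm]
    exact Nat.sInf_le hepmem
  have hHmsub : Hm ⊆ (SimpleGraph.fromEdgeSet (Hm ∪ Hm')).edgeSet := by
    rw [union_edgeSet hHm hHm']
    exact Set.subset_union_left
  have hbound := global_bound hpecUm.2.1 hpecUm.2.2 hHmsub
    (fun e he f hf hef => hHm.2 e he f hf hef)
  omega
end

section
/- For every finite graph G, μ(G) = ν(G) if and only if e(G) = e_p(G). -/
variable {V : Type*}

section Dev
open SimpleGraph Finset
open scoped Classical
set_option linter.unusedSectionVars false

variable {V : Type*}

/-! ### Generalities -/

lemma degree'_eq (G : SimpleGraph V) (v : V) : degree' G v = (G.neighborSet v).ncard := by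
  rw [degree', Nat.card_coe_set_eq]

lemma three_neighbors_false [Fintype V] {G : SimpleGraph V} (hdeg : ∀ v, degree' G v ≤ 2)
    {v a b c : V} (hab : a ≠ b) (hac : a ≠ c) (hbc : b ≠ c)
    (ha : G.Adj v a) (hb : G.Adj v b) (hc : G.Adj v c) : False := by
  have hsub : ({a, b, c} : Set V) ⊆ G.neighborSet v := by
    intro x hx
    rcases hx with rfl | rfl | rfl <;> assumption
  have h3 : ({a, b, c} : Set V).ncard = 3 := by
    rw [Set.ncard_insert_of_notMem (by simp [hab, hac]) (Set.toFinite _), Set.ncard_pair hbc]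
  have := Set.ncard_le_ncard hsub (Set.toFinite _)
  rw [h3, ← degree'_eq] at this
  exact absurd (this.trans (hdeg v)) (by norm_num)

lemma isMatchingSet_empty (G : SimpleGraph V) : IsMatchingSet G ∅ :=
  ⟨Set.empty_subset _, by simp⟩

lemma isMatchingSet_mono {G : SimpleGraph V} {M K : Set (Sym2 V)} (h : IsMatchingSet G M)
    (hK : K ⊆ M) : IsMatchingSet G K :=
  ⟨hK.trans h.1, fun e he f hf => h.2 e (hK he) f (hK hf)⟩

lemma ncard_bdd [Fintype V] (M : Set (Sym2 V)) : M.ncard ≤ Fintype.card (Sym2 V) := by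
  have := Set.ncard_le_ncard (Set.subset_univ M) Set.finite_univ
  rwa [Set.ncard_univ, Nat.card_eq_fintype_card] at this

/-! ### Attainment lemmas -/

section Attain
variable [Fintype V] {G : SimpleGraph V}

lemma nu_exists : ∃ M : Set (Sym2 V), IsMatchingSet G M ∧ M.ncard = matchingNumber G := by
  have h := Nat.sSup_mem (s := {n | ∃ M : Set (Sym2 V), IsMatchingSet G M ∧ M.ncard = n})
    ⟨0, ∅, isMatchingSet_empty G, by simp⟩
    ⟨Fintype.card (Sym2 V), by rintro n ⟨M, -, rfl⟩; exact ncard_bdd M⟩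
  exact h

lemma nu_ge {M : Set (Sym2 V)} (h : IsMatchingSet G M) : M.ncard ≤ matchingNumber G :=
  le_csSup ⟨Fintype.card (Sym2 V), by rintro n ⟨M, -, rfl⟩; exact ncard_bdd M⟩ ⟨M, h, rfl⟩

lemma lambda_exists : ∃ H H' : Set (Sym2 V), IsMatchingSet G H ∧ IsMatchingSet G H' ∧
    Disjoint H H' ∧ H.ncard + H'.ncard = lambdaParam G := by
  have h := Nat.sSup_mem (s := {n | ∃ H H' : Set (Sym2 V), IsMatchingSet G H ∧ IsMatchingSet G H' ∧
      Disjoint H H' ∧ H.ncard + H'.ncard = n})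
    ⟨0, ∅, ∅, isMatchingSet_empty G, isMatchingSet_empty G, disjoint_bot_left, by simp⟩
    ⟨2 * Fintype.card (Sym2 V), by
      rintro n ⟨H, H', -, -, -, rfl⟩
      have := ncard_bdd H; have := ncard_bdd H'; omega⟩
  obtain ⟨H, H', h1, h2, h3, h4⟩ := h
  exact ⟨H, H', h1, h2, h3, h4⟩

lemma lambda_ge {H H' : Set (Sym2 V)} (h : IsMatchingSet G H) (h' : IsMatchingSet G H')
    (hd : Disjoint H H') : H.ncard + H'.ncard ≤ lambdaParam G :=
  le_csSup ⟨2 * Fintype.card (Sym2 V), by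
      rintro n ⟨H, H', -, -, -, rfl⟩
      have := ncard_bdd H; have := ncard_bdd H'; omega⟩ ⟨H, H', h, h', hd, rfl⟩

lemma mu_exists : ∃ H H' : Set (Sym2 V), IsMatchingSet G H ∧ IsMatchingSet G H' ∧
    Disjoint H H' ∧ H.ncard + H'.ncard = lambdaParam G ∧ H.ncard = muParam G := by
  obtain ⟨H, H', h1, h2, h3, h4⟩ := lambda_exists (G := G)
  have h := Nat.sSup_mem (s := {n | ∃ H H' : Set (Sym2 V), IsMatchingSet G H ∧ IsMatchingSet G H' ∧
      Disjoint H H' ∧ H.ncard + H'.ncard = lambdaParam G ∧ H.ncard = n})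
    ⟨H.ncard, H, H', h1, h2, h3, h4, rfl⟩
    ⟨Fintype.card (Sym2 V), by rintro n ⟨H, -, -, -, -, -, rfl⟩; exact ncard_bdd H⟩
  obtain ⟨K, K', h1, h2, h3, h4, h5⟩ := h
  exact ⟨K, K', h1, h2, h3, h4, h5⟩

lemma mu_ge {H H' : Set (Sym2 V)} (h : IsMatchingSet G H) (h' : IsMatchingSet G H')
    (hd : Disjoint H H') (hl : H.ncard + H'.ncard = lambdaParam G) : H.ncard ≤ muParam G :=
  le_csSup ⟨Fintype.card (Sym2 V), by rintro n ⟨H, -, -, -, -, -, rfl⟩; exact ncard_bdd H⟩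
    ⟨H, H', h, h', hd, hl, rfl⟩

lemma isPec_bot : IsPec G ⊥ := by
  refine ⟨bot_le, fun v => ?_, fun v w hw => ?_⟩
  · rw [degree'_eq]; convert Nat.zero_le 2; rw [Set.ncard_eq_zero]; ext w; simp [SimpleGraph.mem_neighborSet]
  · cases w with
    | nil => exact absurd rfl hw.ne_nil
    | cons h _ => exact absurd h (by simp)

lemma eMin_exists : ∃ G' : SimpleGraph V, IsPec G G' ∧ evenPathCount G' = eMin G := by
  have : eMin G ∈ {n | ∃ G' : SimpleGraph V, IsPec G G' ∧ evenPathCount G' = n} :=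
    Nat.sInf_mem ⟨evenPathCount (⊥ : SimpleGraph V), ⊥, isPec_bot, rfl⟩
  exact this

lemma eMin_le {G' : SimpleGraph V} (h : IsPec G G') : eMin G ≤ evenPathCount G' :=
  Nat.sInf_le ⟨G', h, rfl⟩

lemma pMin_exists : ∃ G' : SimpleGraph V, IsPec G G' ∧ pathCount G' = pMin G := by
  have : pMin G ∈ {n | ∃ G' : SimpleGraph V, IsPec G G' ∧ pathCount G' = n} :=
    Nat.sInf_mem ⟨pathCount (⊥ : SimpleGraph V), ⊥, isPec_bot, rfl⟩
  exact this

lemma pMin_le {G' : SimpleGraph V} (h : IsPec G G') : pMin G ≤ pathCount G' :=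
  Nat.sInf_le ⟨G', h, rfl⟩

lemma epMin_exists : ∃ G' : SimpleGraph V, IsPec G G' ∧ pathCount G' = pMin G ∧
    evenPathCount G' = epMin G := by
  obtain ⟨G', h1, h2⟩ := pMin_exists (G := G)
  have : epMin G ∈ {n | ∃ G' : SimpleGraph V, IsPec G G' ∧ pathCount G' = pMin G ∧
      evenPathCount G' = n} := Nat.sInf_mem ⟨evenPathCount G', G', h1, h2, rfl⟩
  exact this

lemma epMin_le {G' : SimpleGraph V} (h : IsPec G G') (hp : pathCount G' = pMin G) :
    epMin G ≤ evenPathCount G' :=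
  Nat.sInf_le ⟨G', h, hp, rfl⟩

end Attain

end Dev
section Dev2
open SimpleGraph Finset
open scoped Classical
set_option linter.unusedSectionVars false
set_option maxHeartbeats 800000

variable {V : Type*}

/-! ### Walk infrastructure -/

/-- the `i`-th edge of a walk -/
def wedge {G : SimpleGraph V} {u v : V} (p : G.Walk u v) (i : ℕ) : Sym2 V :=
  s(p.getVert i, p.getVert (i + 1))

lemma support_map {G : SimpleGraph V} {u v : V} (p : G.Walk u v) :
    p.support = (List.range (p.length + 1)).map p.getVert := by
  induction p with
  | nil => simp [SimpleGraph.Walk.support_nil, List.range_succ]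
  | @cons a b c h q ih =>
    rw [SimpleGraph.Walk.support_cons, ih]
    conv_rhs => rw [show (SimpleGraph.Walk.cons h q).length + 1 = (q.length + 1) + 1 by simp,
      List.range_succ_eq_map, List.map_cons, List.map_map]
    congr 1

lemma edges_map {G : SimpleGraph V} {u v : V} (p : G.Walk u v) :
    p.edges = (List.range p.length).map (wedge p) := by
  induction p with
  | nil => simp [SimpleGraph.Walk.edges_nil]
  | @cons a b c h q ih =>
    rw [SimpleGraph.Walk.edges_cons, ih]
    conv_rhs => rw [show (SimpleGraph.Walk.cons h q).length = q.length + 1 by simp,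
      List.range_succ_eq_map, List.map_cons, List.map_map]
    congr 1
    simp [wedge, SimpleGraph.Walk.getVert_cons_succ]

lemma wedge_mem {G : SimpleGraph V} {u v : V} (p : G.Walk u v) {i : ℕ} (hi : i < p.length) :
    wedge p i ∈ p.edges := by
  rw [edges_map]
  exact List.mem_map.2 ⟨i, List.mem_range.2 hi, rfl⟩

lemma mem_edges_iff {G : SimpleGraph V} {u v : V} (p : G.Walk u v) {e : Sym2 V} :
    e ∈ p.edges ↔ ∃ i, i < p.length ∧ wedge p i = e := by
  rw [edges_map]
  simp [List.mem_map, List.mem_range]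

lemma path_getVert_inj {G : SimpleGraph V} {u v : V} {p : G.Walk u v} (hp : p.IsPath) :
    ∀ {i j : ℕ}, i ≤ p.length → j ≤ p.length → p.getVert i = p.getVert j → i = j := by
  induction p with
  | nil => intro i j hi hj _; simp_all
  | @cons a b c h q ih =>
    rw [SimpleGraph.Walk.cons_isPath_iff] at hp
    intro i j hi hj hij
    match i, j with
    | 0, 0 => rfl
    | 0, (j+1) =>
      exfalso
      apply hp.2
      rw [SimpleGraph.Walk.mem_support_iff_exists_getVert]
      refine ⟨j, ?_, by simpa using hj⟩
      rw [SimpleGraph.Walk.getVert_zero] at hij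
      exact hij.symm
    | (i+1), 0 =>
      exfalso
      apply hp.2
      rw [SimpleGraph.Walk.mem_support_iff_exists_getVert]
      refine ⟨i, ?_, by simpa using hi⟩
      rw [SimpleGraph.Walk.getVert_zero] at hij
      exact hij
    | (i+1), (j+1) =>
      have := ih hp.1 (by simpa using hi) (by simpa using hj)
        (by simpa [SimpleGraph.Walk.getVert_cons_succ] using hij)
      omega

lemma cycle_getVert_inj {G : SimpleGraph V} {v : V} {w : G.Walk v v} (hw : w.IsCycle) :
    ∀ {i j : ℕ}, i ≤ w.length - 1 → j ≤ w.length - 1 → w.getVert i = w.getVert j → i = j := by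
  have h3 := hw.three_le_length
  cases w with
  | nil => simp at h3
  | @cons _ b _ h q =>
    have hq : q.IsPath := ((SimpleGraph.Walk.cons_isCycle_iff q h).mp hw).1
    intro i j hi hj hij
    simp only [SimpleGraph.Walk.length_cons] at hi hj h3
    match i, j with
    | 0, 0 => rfl
    | 0, (j+1) =>
      -- getVert 0 = a = q.getVert q.length; q.getVert j = a with j ≤ q.length - 1 < q.length
      exfalso
      rw [SimpleGraph.Walk.getVert_zero, SimpleGraph.Walk.getVert_cons_succ] at hij
      have : j = q.length := path_getVert_inj hq (by omega) le_rfl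
        (by rw [← hij, SimpleGraph.Walk.getVert_length])
      omega
    | (i+1), 0 =>
      exfalso
      rw [SimpleGraph.Walk.getVert_zero, SimpleGraph.Walk.getVert_cons_succ] at hij
      have : i = q.length := path_getVert_inj hq (by omega) le_rfl
        (by rw [hij, SimpleGraph.Walk.getVert_length])
      omega
    | (i+1), (j+1) =>
      have := path_getVert_inj hq (i := i) (j := j) (by omega) (by omega)
        (by simpa [SimpleGraph.Walk.getVert_cons_succ] using hij)
      omega

lemma trail_wedge_inj {G : SimpleGraph V} {u v : V} {p : G.Walk u v} (ht : p.IsTrail)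
    {i j : ℕ} (hi : i < p.length) (hj : j < p.length) (hij : wedge p i = wedge p j) : i = j := by
  have hnd : (p.edges).Nodup := ht.edges_nodup
  rw [edges_map] at hnd
  have h2 := List.inj_on_of_nodup_map (d := hnd) (x := i) (y := j)
  exact h2 (List.mem_range.2 hi) (List.mem_range.2 hj) hij

lemma comp_eq_of_mem_support {G : SimpleGraph V} {u v w : V} {p : G.Walk u v}
    (h : w ∈ p.support) : G.connectedComponentMk w = G.connectedComponentMk u :=
  (SimpleGraph.ConnectedComponent.sound ⟨p.takeUntil w h⟩).symm

/-! ### Component edges -/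

/-- The set of edges of `G'` inside the component `c`. -/
def compEdges (G' : SimpleGraph V) (c : G'.ConnectedComponent) : Set (Sym2 V) :=
  {e | e ∈ G'.edgeSet ∧ ∀ v ∈ e, G'.connectedComponentMk v = c}

lemma compEdges_subset (G' : SimpleGraph V) (c : G'.ConnectedComponent) :
    compEdges G' c ⊆ G'.edgeSet := fun _ he => he.1

lemma compEdges_disjoint (G' : SimpleGraph V) {c c' : G'.ConnectedComponent} (h : c ≠ c') :
    Disjoint (compEdges G' c) (compEdges G' c') := by
  rw [Set.disjoint_left]
  rintro e ⟨he, hc⟩ ⟨-, hc'⟩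
  induction e with
  | h a b =>
    exact h ((hc a (Sym2.mem_mk_left a b)).symm.trans (hc' a (Sym2.mem_mk_left a b)))

lemma mem_compEdges {G' : SimpleGraph V} {a b : V} (hab : G'.Adj a b) :
    s(a, b) ∈ compEdges G' (G'.connectedComponentMk a) := by
  refine ⟨(SimpleGraph.mem_edgeSet _).2 hab, ?_⟩
  intro v hv
  rcases Sym2.mem_iff.1 hv with rfl | rfl
  · rfl
  · exact SimpleGraph.ConnectedComponent.sound hab.symm.reachable

lemma mem_compEdges' {G' : SimpleGraph V} {e : Sym2 V} (he : e ∈ G'.edgeSet) :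
    ∃ c, e ∈ compEdges G' c := by
  induction e with
  | h a b => exact ⟨_, mem_compEdges ((SimpleGraph.mem_edgeSet _).1 he)⟩

/-! ### Counting helpers -/

lemma nat_card_setOf {α : Type*} [Fintype α] (P : α → Prop) [DecidablePred P] :
    Nat.card {x | P x} = (Finset.univ.filter P).card := by
  rw [Nat.card_coe_set_eq, Set.ncard_eq_toFinset_card']
  congr 1
  ext x
  simp

lemma sum_supp [Fintype V] (G' : SimpleGraph V) [Fintype G'.ConnectedComponent] :
    ∑ c : G'.ConnectedComponent, Nat.card c.supp = Fintype.card V := by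
  rw [← Finset.card_univ (α := V),
    Finset.card_eq_sum_card_fiberwise (f := G'.connectedComponentMk)
      (t := Finset.univ) (fun v _ => Finset.mem_univ _)]
  refine Finset.sum_congr rfl fun c _ => ?_
  exact (nat_card_setOf (fun v => G'.connectedComponentMk v = c)).trans (by congr!)

lemma pathCount_eq [Fintype V] (G' : SimpleGraph V) [Fintype G'.ConnectedComponent] :
    pathCount G' = ∑ c : G'.ConnectedComponent, (if IsPathComponent G' c then 1 else 0) := by
  have h1 : pathCount G' = (Finset.univ.filter (fun c => IsPathComponent G' c)).card :=
    (nat_card_setOf _).trans (by congr!)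
  rw [h1, Finset.card_filter]

lemma evenPathCount_eq [Fintype V] (G' : SimpleGraph V) [Fintype G'.ConnectedComponent] :
    evenPathCount G' = ∑ c : G'.ConnectedComponent,
      (if IsPathComponent G' c ∧ Odd (Nat.card c.supp) then 1 else 0) := by
  have h1 : evenPathCount G' =
      (Finset.univ.filter (fun c => IsPathComponent G' c ∧ Odd (Nat.card c.supp))).card :=
    (nat_card_setOf _).trans (by congr!)
  rw [h1, Finset.card_filter]

lemma ncard_biUnion {α β : Type*} (s : Finset α) (f : α → Set β) (hf : ∀ a ∈ s, (f a).Finite)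
    (hd : ∀ a ∈ s, ∀ b ∈ s, a ≠ b → Disjoint (f a) (f b)) :
    (⋃ a ∈ s, f a).ncard = ∑ a ∈ s, (f a).ncard := by
  induction s using Finset.induction with
  | empty => simp
  | @insert a s ha ih =>
    rw [Finset.set_biUnion_insert, Finset.sum_insert ha,
      Set.ncard_union_eq ?_ (hf a (Finset.mem_insert_self a s)) ?_, ih
        (fun b hb => hf b (Finset.mem_insert_of_mem hb))
        (fun b hb c hc => hd b (Finset.mem_insert_of_mem hb) c (Finset.mem_insert_of_mem hc))]
    · exact Set.disjoint_iUnion_right.2 fun b => Set.disjoint_iUnion_right.2 fun hb =>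
        hd a (Finset.mem_insert_self a s) b (Finset.mem_insert_of_mem hb)
          (fun h => ha (h ▸ hb))
    · exact Set.Finite.biUnion s.finite_toSet
        (fun b hb => hf b (Finset.mem_insert_of_mem hb))

lemma sym2_set_ncard {G' : SimpleGraph V} {e : Sym2 V} (he : e ∈ G'.edgeSet) :
    ({v | v ∈ e} : Set V).ncard = 2 := by
  induction e with
  | h a b =>
    have hab : a ≠ b := (G'.ne_of_adj ((SimpleGraph.mem_edgeSet _).1 he))
    rw [show {v | v ∈ s(a, b)} = ({a, b} : Set V) by ext v; simp [Sym2.mem_iff]]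
    exact Set.ncard_pair hab

lemma aux_filter_even (n : ℕ) :
    2 * ((Finset.range n).filter (fun i => Even i)).card = n + (if Even n then 0 else 1) := by
  induction n with
  | zero => simp
  | succ n ih =>
    rw [Finset.range_add_one, Finset.filter_insert]
    by_cases h : Even n
    · rw [if_pos h, Finset.card_insert_of_notMem (by simp)]
      rw [if_pos h] at ih
      have hno : ¬ Even (n + 1) := by simp [Nat.even_add_one, h]
      rw [if_neg hno]
      omega
    · rw [if_neg h]
      have hyes : Even (n + 1) := by simp [Nat.even_add_one, h]
      rw [if_pos hyes]
      rw [if_neg h] at ih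
      omega

end Dev2
section Dev3
open SimpleGraph Finset
open scoped Classical
set_option linter.unusedSectionVars false
set_option maxHeartbeats 1600000

variable {V : Type*}

lemma mem_support_of_mem_edges' {G : SimpleGraph V} {u v w : V} {p : G.Walk u v}
    {e : Sym2 V} (he : e ∈ p.edges) (hw : w ∈ e) : w ∈ p.support := by
  induction e with
  | h a b =>
    rcases Sym2.mem_iff.1 hw with rfl | rfl
    · exact p.fst_mem_support_of_mem_edges he
    · exact p.snd_mem_support_of_mem_edges he

lemma structure_lemma [Fintype V] {G' : SimpleGraph V} (hdeg : ∀ v, degree' G' v ≤ 2)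
    (c : G'.ConnectedComponent) :
    ∃ (x y : V) (p : G'.Walk x y), p.IsPath ∧
      (∀ v, G'.connectedComponentMk v = c ↔ v ∈ p.support) ∧
      (compEdges G' c = {e | e ∈ p.edges} ∨
        ∃ h : G'.Adj y x, 2 ≤ p.length ∧ (SimpleGraph.Walk.cons h p).IsCycle ∧
          compEdges G' c = {e | e ∈ (SimpleGraph.Walk.cons h p).edges}) := by
  classical
  obtain ⟨u₀, hu₀⟩ := c.exists_rep
  set A : Set ℕ := {n | ∃ (x y : V) (p : G'.Walk x y), p.IsPath ∧
    G'.connectedComponentMk x = c ∧ p.length = n} with hA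
  have hA0 : 0 ∈ A := ⟨u₀, u₀, SimpleGraph.Walk.nil, SimpleGraph.Walk.IsPath.nil, hu₀, rfl⟩
  have hAb : ∀ n ∈ A, n ≤ Fintype.card V := by
    rintro n ⟨x, y, p, hp, -, rfl⟩
    exact hp.length_lt.le
  have hN := Nat.sSup_mem ⟨0, hA0⟩ ⟨Fintype.card V, hAb⟩
  obtain ⟨x, y, p, hp, hx, hlen⟩ := hN
  have hmax : ∀ (z w : V) (q : G'.Walk z w), q.IsPath → G'.connectedComponentMk z = c →
      q.length ≤ p.length := by
    intro z w q hq hz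
    rw [hlen]
    exact le_csSup ⟨Fintype.card V, hAb⟩ ⟨z, w, q, hq, hz, rfl⟩
  have hsupp_comp : ∀ v ∈ p.support, G'.connectedComponentMk v = c := fun v hv =>
    (comp_eq_of_mem_support hv).trans hx
  have hy : G'.connectedComponentMk y = c := hsupp_comp y p.end_mem_support
  have hinj := fun {i j} => path_getVert_inj (p := p) hp (i := i) (j := j)
  have hxy0 : p.length = 0 → x = y := by
    intro h00
    have hxy := p.getVert_length
    rwa [h00, p.getVert_zero] at hxy
  -- endpoints' neighbors lie on the path
  have hxnb : ∀ w, G'.Adj x w → w ∈ p.support := by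
    intro w hw
    by_contra hws
    have hq : (SimpleGraph.Walk.cons hw.symm p).IsPath :=
      (SimpleGraph.Walk.cons_isPath_iff _ _).2 ⟨hp, hws⟩
    have := hmax w y _ hq ((SimpleGraph.ConnectedComponent.sound hw.symm.reachable).trans hx)
    simp [SimpleGraph.Walk.length_cons] at this
  have hynb : ∀ w, G'.Adj y w → w ∈ p.support := by
    intro w hw
    by_contra hws
    have hws' : w ∉ p.reverse.support := by
      rwa [SimpleGraph.Walk.support_reverse, List.mem_reverse]
    have hq : (SimpleGraph.Walk.cons hw.symm p.reverse).IsPath :=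
      (SimpleGraph.Walk.cons_isPath_iff _ _).2 ⟨hp.reverse, hws'⟩
    have := hmax w x _ hq ((SimpleGraph.ConnectedComponent.sound hw.symm.reachable).trans hy)
    simp [SimpleGraph.Walk.length_cons, SimpleGraph.Walk.length_reverse] at this
  -- interior vertices have exactly their two path neighbours
  have hint : ∀ i, 0 < i → i < p.length → ∀ w, G'.Adj (p.getVert i) w →
      w = p.getVert (i - 1) ∨ w = p.getVert (i + 1) := by
    intro i h0 hiN w hw
    by_contra hcon
    push_neg at hcon
    have hadj1 : G'.Adj (p.getVert i) (p.getVert (i - 1)) := by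
      have h2 := p.adj_getVert_succ (i := i - 1) (by omega)
      rw [show i - 1 + 1 = i by omega] at h2
      exact h2.symm
    have hadj2 : G'.Adj (p.getVert i) (p.getVert (i + 1)) := p.adj_getVert_succ hiN
    refine three_neighbors_false hdeg (v := p.getVert i) ?_ ?_ ?_ hadj1 hadj2 hw
    · intro hcontra
      have := hinj (i := i - 1) (j := i + 1) (by omega) (by omega) hcontra
      omega
    · exact fun h => hcon.1 h.symm
    · exact fun h => hcon.2 h.symm
  have hgmem : ∀ i, i ≤ p.length → p.getVert i ∈ p.support := by
    intro i hi
    exact SimpleGraph.Walk.mem_support_iff_exists_getVert.2 ⟨i, rfl, hi⟩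
  have closure : (∀ a ∈ p.support, ∀ b, G'.Adj a b → b ∈ p.support) →
      ∀ v, G'.connectedComponentMk v = c ↔ v ∈ p.support := by
    intro hcl v
    constructor
    · intro hv
      have hreach : G'.Reachable x v := SimpleGraph.ConnectedComponent.exact (hx.trans hv.symm)
      obtain ⟨q⟩ := hreach
      have key : ∀ {a b : V} (q : G'.Walk a b), a ∈ p.support → b ∈ p.support := by
        intro a b q
        induction q with
        | nil => exact id
        | cons h q ih => exact fun ha => ih (hcl _ ha _ h)
      exact key q p.start_mem_support
    · exact hsupp_comp v
  -- the dichotomy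
  have dich : ((∀ w, G'.Adj x w → w = p.getVert 1) ∧
      (∀ w, G'.Adj y w → w = p.getVert (p.length - 1))) ∨
      (G'.Adj y x ∧ 2 ≤ p.length) := by
    by_cases hE1 : ∀ w, G'.Adj x w → w = p.getVert 1
    · by_cases hE2 : ∀ w, G'.Adj y w → w = p.getVert (p.length - 1)
      · exact Or.inl ⟨hE1, hE2⟩
      · right
        push_neg at hE2
        obtain ⟨w, hws, hwne⟩ := hE2
        obtain ⟨j, hgj, hjle⟩ :=
          SimpleGraph.Walk.mem_support_iff_exists_getVert.1 (hynb w hws)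
        subst hgj
        have hjN : j ≠ p.length := by
          intro hj
          rw [hj, p.getVert_length] at hws
          exact G'.irrefl hws
        have hj0 : j = 0 := by
          by_contra hj0
          rcases hint j (by omega) (by omega) y hws.symm with h1 | h1
          · have := hinj (i := p.length) (j := j - 1) le_rfl (by omega)
              (by rw [p.getVert_length]; exact h1)
            omega
          · have h2 := hinj (i := p.length) (j := j + 1) le_rfl (by omega)
              (by rw [p.getVert_length]; exact h1)
            exact hwne (congrArg p.getVert (by omega))
        subst hj0
        rw [p.getVert_zero] at hws hwne
        refine ⟨hws, ?_⟩
        by_contra hl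
        push_neg at hl
        have : p.length = 0 ∨ p.length = 1 := by omega
        rcases this with h00 | h01
        · rw [← hxy0 h00] at hws
          exact G'.irrefl hws
        · exact hwne (by rw [show p.length - 1 = 0 by omega, p.getVert_zero])
    · right
      push_neg at hE1
      obtain ⟨w, hws, hwne⟩ := hE1
      obtain ⟨i, hgi, hile⟩ :=
        SimpleGraph.Walk.mem_support_iff_exists_getVert.1 (hxnb w hws)
      subst hgi
      have hi0 : i ≠ 0 := by
        intro h
        rw [h, p.getVert_zero] at hws
        exact G'.irrefl hws
      have hi1 : i ≠ 1 := fun h => hwne (by rw [h])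
      have hiN : i = p.length := by
        by_contra hiN
        rcases hint i (by omega) (by omega) x hws.symm with h1 | h1
        · have := hinj (i := 0) (j := i - 1) (by omega) (by omega)
            (by rw [p.getVert_zero]; exact h1)
          omega
        · have := hinj (i := 0) (j := i + 1) (by omega) (by omega)
            (by rw [p.getVert_zero]; exact h1)
          omega
      rw [hiN, p.getVert_length] at hws
      exact ⟨hws.symm, by omega⟩
  rcases dich with ⟨hE1, hE2⟩ | ⟨hyx, hN2⟩
  · -- PATH CASE
    have hclass : ∀ i, i ≤ p.length → ∀ b, G'.Adj (p.getVert i) b →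
        (0 < i ∧ b = p.getVert (i - 1)) ∨ (i < p.length ∧ b = p.getVert (i + 1)) := by
      intro i hi b hab
      rcases Nat.eq_zero_or_pos i with rfl | h0
      · rw [p.getVert_zero] at hab
        have hb := hE1 b hab
        have hN1 : 1 ≤ p.length := by
          by_contra h
          rw [hb, SimpleGraph.Walk.getVert_of_length_le p (by omega : p.length ≤ 1)] at hab
          rw [← hxy0 (by omega)] at hab
          exact G'.irrefl hab
        exact Or.inr ⟨by omega, hb⟩
      · rcases eq_or_lt_of_le hi with rfl | hiN
        · rw [p.getVert_length] at hab
          exact Or.inl ⟨h0, hE2 b hab⟩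
        · rcases hint i h0 hiN b hab with h | h
          · exact Or.inl ⟨h0, h⟩
          · exact Or.inr ⟨hiN, h⟩
    have hcl : ∀ a ∈ p.support, ∀ b, G'.Adj a b → b ∈ p.support := by
      intro a ha b hab
      obtain ⟨i, hgi, hile⟩ := SimpleGraph.Walk.mem_support_iff_exists_getVert.1 ha
      subst hgi
      rcases hclass i hile b hab with ⟨h0, rfl⟩ | ⟨hiN, rfl⟩
      · exact hgmem _ (by omega)
      · exact hgmem _ (by omega)
    refine ⟨x, y, p, hp, closure hcl, Or.inl ?_⟩
    ext e
    constructor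
    · rintro ⟨hee, hec⟩
      induction e with
      | h a b =>
        have hab : G'.Adj a b := (SimpleGraph.mem_edgeSet _).1 hee
        have ha : a ∈ p.support := by
          rw [← closure hcl a]
          exact hec a (Sym2.mem_mk_left a b)
        obtain ⟨i, hgi, hile⟩ := SimpleGraph.Walk.mem_support_iff_exists_getVert.1 ha
        subst hgi
        rcases hclass i hile b hab with ⟨h0, rfl⟩ | ⟨hiN, rfl⟩
        · have hmm : s(p.getVert (i - 1), p.getVert (i - 1 + 1)) ∈ p.edges :=
            wedge_mem p (by omega)
          rw [show i - 1 + 1 = i by omega] at hmm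
          rw [Sym2.eq_swap] at hmm
          exact hmm
        · exact wedge_mem p hiN
    · intro he
      refine ⟨p.edges_subset_edgeSet he, ?_⟩
      intro v hv
      exact hsupp_comp v (mem_support_of_mem_edges' he hv)
  · -- CYCLE CASE
    have hadj01 : G'.Adj x (p.getVert 1) := by
      have h2 := p.adj_getVert_succ (i := 0) (by omega)
      rwa [p.getVert_zero] at h2
    have hadjN : G'.Adj y (p.getVert (p.length - 1)) := by
      have h2 := p.adj_getVert_succ (i := p.length - 1) (by omega)
      rw [show p.length - 1 + 1 = p.length by omega, p.getVert_length] at h2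
      exact h2.symm
    have h1y : p.getVert 1 ≠ y := by
      intro h
      have := hinj (i := 1) (j := p.length) (by omega) le_rfl (by rw [h, p.getVert_length])
      omega
    have hN1x : p.getVert (p.length - 1) ≠ x := by
      intro h
      have := hinj (i := p.length - 1) (j := 0) (by omega) (by omega)
        (by rw [h, p.getVert_zero])
      omega
    have hclass : ∀ i, i ≤ p.length → ∀ b, G'.Adj (p.getVert i) b →
        (0 < i ∧ b = p.getVert (i - 1)) ∨ (i < p.length ∧ b = p.getVert (i + 1)) ∨
        (i = 0 ∧ b = y) ∨ (i = p.length ∧ b = x) := by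
      intro i hi b hab
      rcases Nat.eq_zero_or_pos i with rfl | h0
      · rw [p.getVert_zero] at hab
        by_cases hb1 : b = p.getVert 1
        · exact Or.inr (Or.inl ⟨by omega, by simpa using hb1⟩)
        · by_cases hby : b = y
          · exact Or.inr (Or.inr (Or.inl ⟨rfl, hby⟩))
          · exact (three_neighbors_false hdeg h1y (fun h => hb1 h.symm)
              (fun h => hby h.symm) hadj01 hyx.symm hab).elim
      · rcases eq_or_lt_of_le hi with rfl | hiN
        · rw [p.getVert_length] at hab
          by_cases hbN : b = p.getVert (p.length - 1)
          · exact Or.inl ⟨h0, hbN⟩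
          · by_cases hbx : b = x
            · exact Or.inr (Or.inr (Or.inr ⟨rfl, hbx⟩))
            · exact (three_neighbors_false hdeg hN1x (fun h => hbN h.symm)
                (fun h => hbx h.symm) hadjN hyx hab).elim
        · rcases hint i h0 hiN b hab with h | h
          · exact Or.inl ⟨h0, h⟩
          · exact Or.inr (Or.inl ⟨hiN, h⟩)
    have hcl : ∀ a ∈ p.support, ∀ b, G'.Adj a b → b ∈ p.support := by
      intro a ha b hab
      obtain ⟨i, hgi, hile⟩ := SimpleGraph.Walk.mem_support_iff_exists_getVert.1 ha
      subst hgi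
      rcases hclass i hile b hab with ⟨h0, rfl⟩ | ⟨hiN, rfl⟩ | ⟨-, rfl⟩ | ⟨-, rfl⟩
      · exact hgmem _ (by omega)
      · exact hgmem _ (by omega)
      · exact p.end_mem_support
      · exact p.start_mem_support
    have hsyx : s(y, x) ∉ p.edges := by
      intro hmem
      obtain ⟨i, hiN, hie⟩ := (mem_edges_iff p).1 hmem
      simp only [wedge] at hie
      rcases Sym2.eq_iff.1 hie with ⟨h1, h2⟩ | ⟨h1, h2⟩
      · have := hinj (i := i) (j := p.length) (by omega) le_rfl
          (h1.trans p.getVert_length.symm)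
        omega
      · have hi0 := hinj (i := i) (j := 0) (by omega) (by omega)
          (h1.trans p.getVert_zero.symm)
        have := hinj (i := i + 1) (j := p.length) (by omega) le_rfl
          (h2.trans p.getVert_length.symm)
        omega
    have hcyc_is : (SimpleGraph.Walk.cons hyx p).IsCycle :=
      (SimpleGraph.Walk.cons_isCycle_iff p hyx).2 ⟨hp, hsyx⟩
    refine ⟨x, y, p, hp, closure hcl, Or.inr ⟨hyx, hN2, hcyc_is, ?_⟩⟩
    ext e
    constructor
    · rintro ⟨hee, hec⟩
      induction e with
      | h a b =>
        have hab : G'.Adj a b := (SimpleGraph.mem_edgeSet _).1 hee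
        have ha : a ∈ p.support := by
          rw [← closure hcl a]
          exact hec a (Sym2.mem_mk_left a b)
        obtain ⟨i, hgi, hile⟩ := SimpleGraph.Walk.mem_support_iff_exists_getVert.1 ha
        subst hgi
        show s(p.getVert i, b) ∈ (SimpleGraph.Walk.cons hyx p).edges
        rw [SimpleGraph.Walk.edges_cons]
        rcases hclass i hile b hab with ⟨h0, rfl⟩ | ⟨hiN, rfl⟩ | ⟨hi0, rfl⟩ | ⟨hiN, rfl⟩
        · refine List.mem_cons_of_mem _ ?_
          have hmm : s(p.getVert (i - 1), p.getVert (i - 1 + 1)) ∈ p.edges :=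
            wedge_mem p (by omega)
          rw [show i - 1 + 1 = i by omega] at hmm
          rw [Sym2.eq_swap] at hmm
          exact hmm
        · exact List.mem_cons_of_mem _ (wedge_mem p hiN)
        · subst hi0
          rw [p.getVert_zero, Sym2.eq_swap]
          exact List.mem_cons_self
        · subst hiN
          rw [p.getVert_length]
          exact List.mem_cons_self
    · intro he
      rw [Set.mem_setOf_eq, SimpleGraph.Walk.edges_cons] at he
      rcases List.mem_cons.1 he with rfl | he'
      · refine ⟨(SimpleGraph.mem_edgeSet _).2 hyx, ?_⟩
        intro v hv
        rcases Sym2.mem_iff.1 hv with rfl | rfl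
        · exact hy
        · exact hx
      · refine ⟨p.edges_subset_edgeSet he', ?_⟩
        intro v hv
        exact hsupp_comp v (mem_support_of_mem_edges' he' hv)

end Dev3
section Dev4
open SimpleGraph Finset
open scoped Classical
set_option linter.unusedSectionVars false
set_option maxHeartbeats 1600000

variable {V : Type*}

lemma cycle_two_edges {G : SimpleGraph V} {v₀ w₀ : V} {w : G.Walk v₀ v₀} (hw : w.IsCycle)
    (hv : w₀ ∈ w.support) :
    ∃ e₁ e₂, e₁ ∈ w.edges ∧ e₂ ∈ w.edges ∧ e₁ ≠ e₂ ∧ w₀ ∈ e₁ ∧ w₀ ∈ e₂ := by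
  set r := w.rotate _ hv with hr_def
  have hr : r.IsCycle := hw.rotate hv
  have hL : 3 ≤ r.length := hr.three_le_length
  have hmem : ∀ e, e ∈ r.edges → e ∈ w.edges := fun e he =>
    (w.rotate_edges _ hv).mem_iff.1 he
  refine ⟨wedge r 0, wedge r (r.length - 1), hmem _ (wedge_mem r (by omega)),
    hmem _ (wedge_mem r (by omega)), ?_, ?_, ?_⟩
  · intro h
    have := trail_wedge_inj hr.isCircuit.isTrail (i := 0) (j := r.length - 1)
      (by omega) (by omega) h
    omega
  · simp only [wedge, Sym2.mem_iff]
    left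
    exact (r.getVert_zero).symm
  · simp only [wedge, Sym2.mem_iff]
    right
    rw [show r.length - 1 + 1 = r.length by omega, r.getVert_length]

lemma comp_main [Fintype V] {G' : SimpleGraph V} (hdeg : ∀ v, degree' G' v ≤ 2)
    (hcyc : ∀ (v : V) (w : G'.Walk v v), w.IsCycle → Even w.length)
    (c : G'.ConnectedComponent) :
    ∃ H H' : Set (Sym2 V), H ∪ H' = compEdges G' c ∧ Disjoint H H' ∧
      (∀ e ∈ H, ∀ f ∈ H, e ≠ f → ∀ v : V, ¬(v ∈ e ∧ v ∈ f)) ∧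
      (∀ e ∈ H', ∀ f ∈ H', e ≠ f → ∀ v : V, ¬(v ∈ e ∧ v ∈ f)) ∧
      2 * H.ncard + (if IsPathComponent G' c ∧ Odd (Nat.card c.supp) then 1 else 0)
        = Nat.card c.supp ∧
      H.ncard + H'.ncard + (if IsPathComponent G' c then 1 else 0) = Nat.card c.supp := by
  classical
  obtain ⟨x, y, p, hp, hiff, hcases⟩ := structure_lemma hdeg c
  have hinj := fun {i j} => path_getVert_inj (p := p) hp (i := i) (j := j)
  have hsuppcard : Nat.card c.supp = p.length + 1 := by
    have h1 : c.supp = {v | v ∈ p.support} := by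
      ext v
      rw [SimpleGraph.ConnectedComponent.mem_supp_iff]
      exact hiff v
    rw [Nat.card_coe_set_eq, h1]
    rw [show {v | v ∈ p.support} = (↑p.support.toFinset : Set V) by simp]
    rw [Set.ncard_coe_finset, List.toFinset_card_of_nodup hp.support_nodup,
      SimpleGraph.Walk.length_support]
  rcases hcases with hpath | ⟨hyx, hN2, hcyc_is, hedges⟩
  · -- PATH COMPONENT
    set N := p.length with hN_def
    set H : Set (Sym2 V) := wedge p '' {i | i < N ∧ Even i} with hH_def
    set H' : Set (Sym2 V) := wedge p '' {i | i < N ∧ ¬ Even i} with hH'_def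
    have hwinj : ∀ i j, i < N → j < N → wedge p i = wedge p j → i = j := fun i j hi hj h =>
      trail_wedge_inj hp.isTrail hi hj h
    have hPC : IsPathComponent G' c := by
      constructor
      · exact fun v _ => hdeg v
      · intro v₀ hv₀ w hwcyc
        have hwsupp : ∀ z ∈ w.support, G'.connectedComponentMk z = c := fun z hz =>
          (comp_eq_of_mem_support hz).trans hv₀
        have hwedge : ∀ e ∈ w.edges, e ∈ p.edges := by
          intro e he
          have : e ∈ compEdges G' c := ⟨w.edges_subset_edgeSet he,
            fun v hv => hwsupp v (mem_support_of_mem_edges' he hv)⟩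
          rwa [hpath] at this
        set S : Set ℕ := {i | i ≤ N ∧ p.getVert i ∈ w.support} with hS_def
        have hSne : S.Nonempty := by
          have hv₀p : v₀ ∈ p.support := (hiff v₀).1 hv₀
          obtain ⟨i₀, hgi₀, hi₀⟩ := SimpleGraph.Walk.mem_support_iff_exists_getVert.1 hv₀p
          exact ⟨i₀, hi₀, by rw [hgi₀]; exact w.start_mem_support⟩
        set i₁ := sInf S with hi₁_def
        have hi₁ : i₁ ∈ S := Nat.sInf_mem hSne
        have hi₁N : i₁ ≤ N := hi₁.1
        obtain ⟨e₁, e₂, he₁, he₂, hne, hm₁, hm₂⟩ := cycle_two_edges hwcyc hi₁.2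
        have key : ∀ e, e ∈ w.edges → p.getVert i₁ ∈ e → e = wedge p i₁ := by
          intro e he hm
          obtain ⟨a, haN, hwa⟩ := (mem_edges_iff p).1 (hwedge e he)
          subst hwa
          simp only [wedge, Sym2.mem_iff] at hm
          rcases hm with hm | hm
          · have : i₁ = a := hinj (by omega) (by omega) hm
            rw [this]
          · have hia : i₁ = a + 1 := hinj (by omega) (by omega) hm
            exfalso
            have hga : p.getVert a ∈ w.support :=
              mem_support_of_mem_edges' he (by simp [wedge, Sym2.mem_iff])
            have : i₁ ≤ a := Nat.sInf_le ⟨by omega, hga⟩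
            omega
        exact hne ((key e₁ he₁ hm₁).trans (key e₂ he₂ hm₂).symm)
    have himg1 : H.ncard = ((Finset.range N).filter (fun i => Even i)).card := by
      rw [hH_def, Set.ncard_image_of_injOn (fun i hi j hj h => hwinj i j hi.1 hj.1 h)]
      rw [show {i | i < N ∧ Even i} =
        (↑((Finset.range N).filter (fun i => Even i)) : Set ℕ) by ext i; simp]
      rw [Set.ncard_coe_finset]
    have himg2 : H'.ncard = ((Finset.range N).filter (fun i => ¬ Even i)).card := by
      rw [hH'_def, Set.ncard_image_of_injOn (fun i hi j hj h => hwinj i j hi.1 hj.1 h)]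
      rw [show {i | i < N ∧ ¬ Even i} =
        (↑((Finset.range N).filter (fun i => ¬ Even i)) : Set ℕ) by ext i; simp]
      rw [Set.ncard_coe_finset]
    refine ⟨H, H', ?_, ?_, ?_, ?_, ?_, ?_⟩
    · rw [hH_def, hH'_def, ← Set.image_union, hpath]
      rw [show {i | i < N ∧ Even i} ∪ {i | i < N ∧ ¬ Even i} = {i | i < N} by
        ext i; simp only [Set.mem_union, Set.mem_setOf_eq]; tauto]
      ext e
      constructor
      · rintro ⟨i, hi, rfl⟩
        exact (mem_edges_iff _).2 ⟨i, hi, rfl⟩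
      · intro he
        obtain ⟨i, hi, rfl⟩ := (mem_edges_iff _).1 he
        exact ⟨i, hi, rfl⟩
    · rw [Set.disjoint_left]
      rintro e ⟨i, ⟨hiN, hie⟩, rfl⟩ ⟨j, ⟨hjN, hje⟩, hji⟩
      exact hje (hwinj j i hjN hiN hji ▸ hie)
    · rintro e ⟨i, ⟨hiN, hie⟩, rfl⟩ f ⟨j, ⟨hjN, hje⟩, rfl⟩ hef v ⟨hv1, hv2⟩
      simp only [wedge, Sym2.mem_iff] at hv1 hv2
      have hij : i ≠ j := fun h => hef (h ▸ rfl)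
      rw [Nat.even_iff] at hie hje
      rcases hv1 with rfl | h1 <;> rcases hv2 with h2 | h2
      · exact hij (hinj (by omega) (by omega) h2)
      · have := hinj (i := i) (j := j + 1) (by omega) (by omega) h2; omega
      · have := hinj (i := i + 1) (j := j) (by omega) (by omega) (h1.symm.trans h2); omega
      · have := hinj (i := i + 1) (j := j + 1) (by omega) (by omega) (h1.symm.trans h2); omega
    · rintro e ⟨i, ⟨hiN, hie⟩, rfl⟩ f ⟨j, ⟨hjN, hje⟩, rfl⟩ hef v ⟨hv1, hv2⟩
      simp only [wedge, Sym2.mem_iff] at hv1 hv2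
      have hij : i ≠ j := fun h => hef (h ▸ rfl)
      rw [Nat.even_iff] at hie hje
      rcases hv1 with rfl | h1 <;> rcases hv2 with h2 | h2
      · exact hij (hinj (by omega) (by omega) h2)
      · have := hinj (i := i) (j := j + 1) (by omega) (by omega) h2; omega
      · have := hinj (i := i + 1) (j := j) (by omega) (by omega) (h1.symm.trans h2); omega
      · have := hinj (i := i + 1) (j := j + 1) (by omega) (by omega) (h1.symm.trans h2); omega
    · rw [himg1, hsuppcard]
      have := aux_filter_even N
      by_cases hEN : Even N
      · rw [if_pos (show IsPathComponent G' c ∧ Odd (N + 1) from ⟨hPC, Even.add_one hEN⟩)]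
        rw [if_pos hEN] at this
        omega
      · rw [if_neg (show ¬ (IsPathComponent G' c ∧ Odd (N + 1)) by
          rintro ⟨-, hodd⟩
          rcases hodd with ⟨k, hk⟩
          exact hEN ⟨k, by omega⟩)]
        rw [if_neg hEN] at this
        omega
    · rw [himg1, himg2, hsuppcard, if_pos hPC,
        Finset.card_filter_add_card_filter_not (p := fun i => Even i)]
      rw [Finset.card_range]
  · -- CYCLE COMPONENT
    set q := SimpleGraph.Walk.cons hyx p with hq_def
    have hLq : q.length = p.length + 1 := SimpleGraph.Walk.length_cons _ _
    set L := q.length with hL_def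
    have hLN : L = p.length + 1 := hLq
    have hEvenL : Even L := hcyc y q hcyc_is
    have hL3 : 3 ≤ L := hcyc_is.three_le_length
    have hymk : G'.connectedComponentMk y = c := (hiff y).2 p.end_mem_support
    have hnPC : ¬ IsPathComponent G' c := fun hPC => hPC.2 y hymk q hcyc_is
    have hqinj := fun {i j} => cycle_getVert_inj (w := q) hcyc_is (i := i) (j := j)
    have key : ∀ a b, a ≤ L → b ≤ L → q.getVert a = q.getVert b →
        (a = b ∨ (a = L ∧ b = 0) ∨ (a = 0 ∧ b = L)) := by
      intro a b ha hb hab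
      by_cases haL : a = L
      · by_cases hbL : b = L
        · exact Or.inl (haL.trans hbL.symm)
        · subst haL
          rw [SimpleGraph.Walk.getVert_length] at hab
          have h0 : q.getVert 0 = q.getVert b := by rw [SimpleGraph.Walk.getVert_zero]; exact hab
          have := hqinj (i := 0) (j := b) (by omega) (by omega) h0
          exact Or.inr (Or.inl ⟨rfl, this.symm⟩)
      · by_cases hbL : b = L
        · subst hbL
          rw [SimpleGraph.Walk.getVert_length] at hab
          have h0 : q.getVert a = q.getVert 0 := by rw [SimpleGraph.Walk.getVert_zero]; exact hab
          have := hqinj (i := a) (j := 0) (by omega) (by omega) h0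
          exact Or.inr (Or.inr ⟨this, rfl⟩)
        · exact Or.inl (hqinj (by omega) (by omega) hab)
    have hwinj : ∀ i j, i < L → j < L → wedge q i = wedge q j → i = j := fun i j hi hj h =>
      trail_wedge_inj hcyc_is.isCircuit.isTrail hi hj h
    set H : Set (Sym2 V) := wedge q '' {i | i < L ∧ Even i} with hH_def
    set H' : Set (Sym2 V) := wedge q '' {i | i < L ∧ ¬ Even i} with hH'_def
    have himg1 : H.ncard = ((Finset.range L).filter (fun i => Even i)).card := by
      rw [hH_def, Set.ncard_image_of_injOn (fun i hi j hj h => hwinj i j hi.1 hj.1 h)]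
      rw [show {i | i < L ∧ Even i} =
        (↑((Finset.range L).filter (fun i => Even i)) : Set ℕ) by ext i; simp]
      rw [Set.ncard_coe_finset]
    have himg2 : H'.ncard = ((Finset.range L).filter (fun i => ¬ Even i)).card := by
      rw [hH'_def, Set.ncard_image_of_injOn (fun i hi j hj h => hwinj i j hi.1 hj.1 h)]
      rw [show {i | i < L ∧ ¬ Even i} =
        (↑((Finset.range L).filter (fun i => ¬ Even i)) : Set ℕ) by ext i; simp]
      rw [Set.ncard_coe_finset]
    refine ⟨H, H', ?_, ?_, ?_, ?_, ?_, ?_⟩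
    · rw [hH_def, hH'_def, ← Set.image_union, hedges]
      rw [show {i | i < L ∧ Even i} ∪ {i | i < L ∧ ¬ Even i} = {i | i < L} by
        ext i; simp only [Set.mem_union, Set.mem_setOf_eq]; tauto]
      ext e
      constructor
      · rintro ⟨i, hi, rfl⟩
        exact (mem_edges_iff _).2 ⟨i, hi, rfl⟩
      · intro he
        obtain ⟨i, hi, rfl⟩ := (mem_edges_iff _).1 he
        exact ⟨i, hi, rfl⟩
    · rw [Set.disjoint_left]
      rintro e ⟨i, ⟨hiN, hie⟩, rfl⟩ ⟨j, ⟨hjN, hje⟩, hji⟩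
      exact hje (hwinj j i hjN hiN hji ▸ hie)
    · rintro e ⟨i, ⟨hiN, hie⟩, rfl⟩ f ⟨j, ⟨hjN, hje⟩, rfl⟩ hef v ⟨hv1, hv2⟩
      simp only [wedge, Sym2.mem_iff] at hv1 hv2
      have hij : i ≠ j := fun h => hef (h ▸ rfl)
      obtain ⟨l2, hl2⟩ := hEvenL
      rw [Nat.even_iff] at hie hje
      rcases hv1 with rfl | h1 <;> rcases hv2 with h2 | h2
      · rcases key i j (by omega) (by omega) h2 with h | h | h <;> omega
      · rcases key i (j+1) (by omega) (by omega) h2 with h | h | h <;> omega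
      · rcases key (i+1) j (by omega) (by omega) (h1.symm.trans h2) with h | h | h <;> omega
      · rcases key (i+1) (j+1) (by omega) (by omega) (h1.symm.trans h2) with h | h | h <;> omega
    · rintro e ⟨i, ⟨hiN, hie⟩, rfl⟩ f ⟨j, ⟨hjN, hje⟩, rfl⟩ hef v ⟨hv1, hv2⟩
      simp only [wedge, Sym2.mem_iff] at hv1 hv2
      have hij : i ≠ j := fun h => hef (h ▸ rfl)
      obtain ⟨l2, hl2⟩ := hEvenL
      rw [Nat.even_iff] at hie hje
      rcases hv1 with rfl | h1 <;> rcases hv2 with h2 | h2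
      · rcases key i j (by omega) (by omega) h2 with h | h | h <;> omega
      · rcases key i (j+1) (by omega) (by omega) h2 with h | h | h <;> omega
      · rcases key (i+1) j (by omega) (by omega) (h1.symm.trans h2) with h | h | h <;> omega
      · rcases key (i+1) (j+1) (by omega) (by omega) (h1.symm.trans h2) with h | h | h <;> omega
    · rw [himg1, hsuppcard, if_neg (by rintro ⟨hPC, -⟩; exact hnPC hPC)]
      have := aux_filter_even L
      rw [if_pos hEvenL] at this
      omega
    · rw [himg1, himg2, hsuppcard, if_neg hnPC,
        Finset.card_filter_add_card_filter_not (p := fun i => Even i)]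
      rw [Finset.card_range]
      omega

end Dev4
section Dev5
open SimpleGraph Finset
open scoped Classical
set_option linter.unusedSectionVars false
set_option maxHeartbeats 1600000

variable {V : Type*}

lemma sub_ncard_le_one {α : Type*} {s : Set α} (h : s.Subsingleton) : s.ncard ≤ 1 := by
  rcases s.eq_empty_or_nonempty with rfl | ⟨a, ha⟩
  · simp
  · rw [h.eq_singleton_of_mem ha, Set.ncard_singleton]

/-- KEY2 : a pec graph gives a pair of disjoint matchings with exact counts. -/
lemma key_pec_pair [Fintype V] {G G' : SimpleGraph V} (hpec : IsPec G G') :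
    ∃ H H' : Set (Sym2 V), IsMatchingSet G H ∧ IsMatchingSet G H' ∧ Disjoint H H' ∧
      H.ncard + H'.ncard = (G'.edgeSet).ncard ∧
      2 * H.ncard + evenPathCount G' = Fintype.card V ∧
      H.ncard + H'.ncard + pathCount G' = Fintype.card V := by
  classical
  obtain ⟨hle, hdeg, hcyc⟩ := hpec
  letI : Fintype G'.ConnectedComponent := Fintype.ofFinite _
  choose Hc H'c hunion hdisj hm1 hm2 heq1 heq2 using comp_main hdeg hcyc
  have hHsub : ∀ c, Hc c ⊆ compEdges G' c := by
    intro c e he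
    rw [← hunion c]
    exact Set.mem_union_left _ he
  have hH'sub : ∀ c, H'c c ⊆ compEdges G' c := by
    intro c e he
    rw [← hunion c]
    exact Set.mem_union_right _ he
  set H : Set (Sym2 V) := ⋃ c ∈ (Finset.univ : Finset G'.ConnectedComponent), Hc c with hH_def
  set H' : Set (Sym2 V) := ⋃ c ∈ (Finset.univ : Finset G'.ConnectedComponent), H'c c with hH'_def
  have hcomp_unique : ∀ (e : Sym2 V) (c c' : G'.ConnectedComponent),
      e ∈ compEdges G' c → e ∈ compEdges G' c' → c = c' := by
    intro e c c' h1 h2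
    by_contra hne
    exact Set.disjoint_left.1 (compEdges_disjoint G' hne) h1 h2
  have hHcard : H.ncard = ∑ c, (Hc c).ncard := by
    rw [hH_def]
    exact ncard_biUnion _ _ (fun c _ => Set.toFinite _)
      (fun c _ c' _ hne => Set.disjoint_of_subset (hHsub c) (hHsub c')
        (compEdges_disjoint G' hne))
  have hH'card : H'.ncard = ∑ c, (H'c c).ncard := by
    rw [hH'_def]
    exact ncard_biUnion _ _ (fun c _ => Set.toFinite _)
      (fun c _ c' _ hne => Set.disjoint_of_subset (hH'sub c) (hH'sub c')
        (compEdges_disjoint G' hne))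
  have hmemH : ∀ e ∈ H, ∃ c, e ∈ Hc c := by
    intro e he
    rw [hH_def] at he
    simpa using he
  have hmemH' : ∀ e ∈ H', ∃ c, e ∈ H'c c := by
    intro e he
    rw [hH'_def] at he
    simpa using he
  have hmatchH : IsMatchingSet G H := by
    constructor
    · intro e he
      obtain ⟨c, hc⟩ := hmemH e he
      exact SimpleGraph.edgeSet_mono hle (compEdges_subset G' c (hHsub c hc))
    · intro e he f hf hef v ⟨hv1, hv2⟩
      obtain ⟨c, hc⟩ := hmemH e he
      obtain ⟨c', hc'⟩ := hmemH f hf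
      have : c = c' := by
        have h1 := (hHsub c hc).2 v hv1
        have h2 := (hHsub c' hc').2 v hv2
        exact h1.symm.trans h2
      subst this
      exact hm1 c e hc f hc' hef v ⟨hv1, hv2⟩
  have hmatchH' : IsMatchingSet G H' := by
    constructor
    · intro e he
      obtain ⟨c, hc⟩ := hmemH' e he
      exact SimpleGraph.edgeSet_mono hle (compEdges_subset G' c (hH'sub c hc))
    · intro e he f hf hef v ⟨hv1, hv2⟩
      obtain ⟨c, hc⟩ := hmemH' e he
      obtain ⟨c', hc'⟩ := hmemH' f hf
      have : c = c' := by
        have h1 := (hH'sub c hc).2 v hv1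
        have h2 := (hH'sub c' hc').2 v hv2
        exact h1.symm.trans h2
      subst this
      exact hm2 c e hc f hc' hef v ⟨hv1, hv2⟩
  have hdisjHH' : Disjoint H H' := by
    rw [Set.disjoint_left]
    intro e he he'
    obtain ⟨c, hc⟩ := hmemH e he
    obtain ⟨c', hc'⟩ := hmemH' e he'
    have : c = c' := hcomp_unique e c c' (hHsub c hc) (hH'sub c' hc')
    subst this
    exact Set.disjoint_left.1 (hdisj c) hc hc'
  have hunionE : H ∪ H' = G'.edgeSet := by
    rw [hH_def, hH'_def]
    ext e
    constructor
    · intro he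
      rcases he with he | he
      · obtain ⟨c, hc⟩ : ∃ c, e ∈ Hc c := by simpa using he
        exact compEdges_subset G' c (hHsub c hc)
      · obtain ⟨c, hc⟩ : ∃ c, e ∈ H'c c := by simpa using he
        exact compEdges_subset G' c (hH'sub c hc)
    · intro he
      obtain ⟨c, hc⟩ := mem_compEdges' he
      rw [← hunion c] at hc
      rcases hc with hc | hc
      · exact Set.mem_union_left _ (by simp only [Set.mem_iUnion]; exact ⟨c, Finset.mem_univ c, hc⟩)
      · exact Set.mem_union_right _ (by simp only [Set.mem_iUnion]; exact ⟨c, Finset.mem_univ c, hc⟩)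
  have hecard : H.ncard + H'.ncard = (G'.edgeSet).ncard := by
    rw [← hunionE, Set.ncard_union_eq hdisjHH' (Set.toFinite _) (Set.toFinite _)]
  refine ⟨H, H', hmatchH, hmatchH', hdisjHH', hecard, ?_, ?_⟩
  · rw [hHcard, evenPathCount_eq G', Finset.mul_sum, ← Finset.sum_add_distrib]
    rw [Finset.sum_congr rfl (fun c _ => heq1 c)]
    exact sum_supp G'
  · rw [hHcard, hH'card, pathCount_eq G', ← Finset.sum_add_distrib, ← Finset.sum_add_distrib]
    rw [Finset.sum_congr rfl (fun c _ => heq2 c)]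
    exact sum_supp G'

/-- KEY1 : matching bound against even path count. -/
lemma key_matching_bound [Fintype V] {G' : SimpleGraph V} {K : Set (Sym2 V)}
    (hK : K ⊆ G'.edgeSet) (hm : ∀ e ∈ K, ∀ f ∈ K, e ≠ f → ∀ v : V, ¬(v ∈ e ∧ v ∈ f)) :
    2 * K.ncard + evenPathCount G' ≤ Fintype.card V := by
  classical
  letI : Fintype G'.ConnectedComponent := Fintype.ofFinite _
  set Kc : G'.ConnectedComponent → Set (Sym2 V) := fun c => K ∩ compEdges G' c with hKc_def
  have hKdec : K = ⋃ c ∈ (Finset.univ : Finset G'.ConnectedComponent), Kc c := by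
    ext e
    constructor
    · intro he
      obtain ⟨c, hc⟩ := mem_compEdges' (hK he)
      simp only [Set.mem_iUnion]
      exact ⟨c, Finset.mem_univ c, he, hc⟩
    · intro he
      simp only [Set.mem_iUnion] at he
      obtain ⟨c, -, he, -⟩ := he
      exact he
  have hKcard : K.ncard = ∑ c, (Kc c).ncard := by
    conv_lhs => rw [hKdec]
    exact ncard_biUnion _ _ (fun c _ => Set.toFinite _)
      (fun c _ c' _ hne => Set.disjoint_of_subset Set.inter_subset_right
        Set.inter_subset_right (compEdges_disjoint G' hne))
  have hper : ∀ c : G'.ConnectedComponent,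
      2 * (Kc c).ncard + (if IsPathComponent G' c ∧ Odd (Nat.card c.supp) then 1 else 0)
        ≤ Nat.card c.supp := by
    intro c
    have hfin : (Kc c).Finite := Set.toFinite _
    have hcov : 2 * (Kc c).ncard ≤ Nat.card c.supp := by
      set cover : Set V := ⋃ e ∈ hfin.toFinset, {v | v ∈ e} with hcover_def
      have hcovcard : cover.ncard = ∑ e ∈ hfin.toFinset, ({v | v ∈ e} : Set V).ncard := by
        rw [hcover_def]
        refine ncard_biUnion _ _ (fun e _ => Set.toFinite _) ?_
        intro e he f hf hef
        rw [Set.disjoint_left]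
        intro v hv1 hv2
        rw [Set.Finite.mem_toFinset] at he hf
        exact hm e he.1 f hf.1 hef v ⟨hv1, hv2⟩
      have hterms : ∀ e ∈ hfin.toFinset, ({v | v ∈ e} : Set V).ncard = 2 := by
        intro e he
        rw [Set.Finite.mem_toFinset] at he
        exact sym2_set_ncard (hK he.1)
      have h2 : cover.ncard = 2 * (Kc c).ncard := by
        rw [hcovcard, Finset.sum_congr rfl hterms, Finset.sum_const, smul_eq_mul,
          ← Set.ncard_eq_toFinset_card (Kc c) hfin, mul_comm]
      have hsub : cover ⊆ c.supp := by
        rw [hcover_def]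
        intro v hv
        simp only [Set.mem_iUnion] at hv
        obtain ⟨e, he, hve⟩ := hv
        rw [Set.Finite.mem_toFinset] at he
        exact (he.2).2 v hve
      rw [← h2, ← Nat.card_coe_set_eq]
      calc cover.ncard ≤ c.supp.ncard := Set.ncard_le_ncard hsub (Set.toFinite _)
      _ = Nat.card c.supp := (Nat.card_coe_set_eq _).symm
    by_cases hodd : IsPathComponent G' c ∧ Odd (Nat.card c.supp)
    · rw [if_pos hodd]
      obtain ⟨k, hk⟩ := hodd.2
      omega
    · rw [if_neg hodd]
      omega
  calc 2 * K.ncard + evenPathCount G'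
      = ∑ c, (2 * (Kc c).ncard + (if IsPathComponent G' c ∧ Odd (Nat.card c.supp) then 1 else 0)) := by
        rw [hKcard, evenPathCount_eq G', Finset.mul_sum, ← Finset.sum_add_distrib]
    _ ≤ ∑ c, Nat.card c.supp := Finset.sum_le_sum (fun c _ => hper c)
    _ = Fintype.card V := sum_supp G'

/-- KEY3 : the union of two disjoint matchings is a pec graph. -/
lemma key_pair_pec [Fintype V] {G : SimpleGraph V} {H H' : Set (Sym2 V)}
    (hH : IsMatchingSet G H) (hH' : IsMatchingSet G H') :
    IsPec G (SimpleGraph.fromEdgeSet (H ∪ H')) ∧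
      (SimpleGraph.fromEdgeSet (H ∪ H')).edgeSet = H ∪ H' := by
  classical
  have hsubG : H ∪ H' ⊆ G.edgeSet := Set.union_subset hH.1 hH'.1
  have hes : (SimpleGraph.fromEdgeSet (H ∪ H')).edgeSet = H ∪ H' := by
    rw [SimpleGraph.edgeSet_fromEdgeSet]
    ext e
    simp only [Set.mem_diff, Set.mem_setOf_eq]
    exact ⟨fun h => h.1, fun h => ⟨h, G.not_isDiag_of_mem_edgeSet (hsubG h)⟩⟩
  have hle : SimpleGraph.fromEdgeSet (H ∪ H') ≤ G := by
    intro a b hab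
    rw [SimpleGraph.fromEdgeSet_adj] at hab
    exact (SimpleGraph.mem_edgeSet _).1 (hsubG hab.1)
  refine ⟨⟨hle, ?_, ?_⟩, hes⟩
  · -- degrees at most 2
    intro v
    rw [degree'_eq]
    have hsub : (SimpleGraph.fromEdgeSet (H ∪ H')).neighborSet v ⊆
        {w | s(v, w) ∈ H} ∪ {w | s(v, w) ∈ H'} := by
      intro w hw
      rw [SimpleGraph.mem_neighborSet, SimpleGraph.fromEdgeSet_adj] at hw
      rcases hw.1 with h | h
      · exact Or.inl h
      · exact Or.inr h
    have hs1 : ({w | s(v, w) ∈ H} : Set V).Subsingleton := by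
      intro w1 h1 w2 h2
      by_contra hne
      by_cases hee : (s(v, w1) : Sym2 V) = s(v, w2)
      · rcases Sym2.eq_iff.1 hee with ⟨-, h⟩ | ⟨h1', h2'⟩
        · exact hne h
        · exact hne (h2'.trans h1')
      · exact hH.2 _ h1 _ h2 hee v ⟨Sym2.mem_mk_left _ _, Sym2.mem_mk_left _ _⟩
    have hs2 : ({w | s(v, w) ∈ H'} : Set V).Subsingleton := by
      intro w1 h1 w2 h2
      by_contra hne
      by_cases hee : (s(v, w1) : Sym2 V) = s(v, w2)
      · rcases Sym2.eq_iff.1 hee with ⟨-, h⟩ | ⟨h1', h2'⟩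
        · exact hne h
        · exact hne (h2'.trans h1')
      · exact hH'.2 _ h1 _ h2 hee v ⟨Sym2.mem_mk_left _ _, Sym2.mem_mk_left _ _⟩
    calc ((SimpleGraph.fromEdgeSet (H ∪ H')).neighborSet v).ncard
        ≤ ({w | s(v, w) ∈ H} ∪ {w | s(v, w) ∈ H'} : Set V).ncard :=
          Set.ncard_le_ncard hsub (Set.toFinite _)
      _ ≤ ({w | s(v, w) ∈ H} : Set V).ncard + ({w | s(v, w) ∈ H'} : Set V).ncard :=
          Set.ncard_union_le _ _
      _ ≤ 2 := by
          have := sub_ncard_le_one hs1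
          have := sub_ncard_le_one hs2
          omega
  · -- all cycles are even
    intro v w hwcyc
    set L := w.length with hL_def
    have hL3 : 3 ≤ L := hwcyc.three_le_length
    have hedges : ∀ i, i < L → wedge w i ∈ H ∪ H' := by
      intro i hi
      have := w.edges_subset_edgeSet (wedge_mem w hi)
      rwa [hes] at this
    have hwinj : ∀ i j, i < L → j < L → wedge w i = wedge w j → i = j := fun i j hi hj h =>
      trail_wedge_inj hwcyc.isCircuit.isTrail hi hj h
    set m : ℕ → Prop := fun j => wedge w j ∈ H with hm_def
    have hshare : ∀ i j, i < L → j < L → i ≠ j → (w₀ : V) → w₀ ∈ wedge w i → w₀ ∈ wedge w j →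
        ((m i ↔ ¬ m j)) := by
      intro i j hi hj hij w₀ hw1 hw2
      have hne : wedge w i ≠ wedge w j := fun h => hij (hwinj i j hi hj h)
      have h1 : ¬ (m i ∧ m j) := by
        rintro ⟨ha, hb⟩
        exact hH.2 _ ha _ hb hne w₀ ⟨hw1, hw2⟩
      have h2 : ¬ (¬ m i ∧ ¬ m j) := by
        rintro ⟨ha, hb⟩
        have hia := (hedges i hi).resolve_left ha
        have hja := (hedges j hj).resolve_left hb
        exact hH'.2 _ hia _ hja hne w₀ ⟨hw1, hw2⟩
      tauto
    have hmemr : ∀ i, i < L → w.getVert (i + 1) ∈ wedge w i := by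
      intro i _
      simp [wedge, Sym2.mem_iff]
    have hmeml : ∀ i, i < L → w.getVert i ∈ wedge w i := by
      intro i _
      simp [wedge, Sym2.mem_iff]
    have halt : ∀ j, j + 1 < L → (m (j + 1) ↔ ¬ m j) := by
      intro j hj
      exact hshare (j + 1) j hj (by omega) (by omega) (w.getVert (j + 1))
        (hmeml (j + 1) hj) (hmemr j (by omega))
    have hstep : ∀ j, j < L → (m j ↔ (m 0 ↔ Even j)) := by
      intro j
      induction j with
      | zero => intro _; simp
      | succ n ih =>
        intro hj
        have hn := ih (by omega)
        have ha := halt n hj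
        rw [Nat.even_add_one]
        tauto
    have hwrap : m 0 ↔ ¬ m (L - 1) := by
      have h0 : w.getVert 0 ∈ wedge w 0 := hmeml 0 (by omega)
      have hL' : w.getVert (L - 1 + 1) = w.getVert 0 := by
        rw [show L - 1 + 1 = L by omega]
        show w.getVert w.length = w.getVert 0
        rw [SimpleGraph.Walk.getVert_length, SimpleGraph.Walk.getVert_zero]
      have hL : w.getVert 0 ∈ wedge w (L - 1) := by
        have h := hmemr (L - 1) (by omega)
        rwa [hL'] at h
      exact hshare 0 (L - 1) (by omega) (by omega) (by omega) (w.getVert 0) h0 hL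
    have hfin := hstep (L - 1) (by omega)
    have : ¬ Even (L - 1) := by tauto
    rw [Nat.even_iff] at this ⊢
    omega

end Dev5
section Dev6
open SimpleGraph Finset
open scoped Classical
set_option linter.unusedSectionVars false

variable {V : Type*}

lemma lambda_pMin [Fintype V] (G : SimpleGraph V) :
    lambdaParam G + pMin G = Fintype.card V := by
  have hge : Fintype.card V ≤ lambdaParam G + pMin G := by
    obtain ⟨G', hpec, hpc⟩ := pMin_exists (G := G)
    obtain ⟨H, H', m1, m2, dis, hec, he, hpsum⟩ := key_pec_pair hpec
    have hl := lambda_ge m1 m2 dis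
    omega
  have hle : lambdaParam G + pMin G ≤ Fintype.card V := by
    obtain ⟨H, H', m1, m2, dis, hl⟩ := lambda_exists (G := G)
    obtain ⟨hpec, hes⟩ := key_pair_pec m1 m2
    obtain ⟨K, K', k1, k2, kdis, kec, ke, kp⟩ := key_pec_pair hpec
    rw [hes, Set.ncard_union_eq dis (Set.toFinite _) (Set.toFinite _)] at kec
    have hpm := pMin_le hpec
    omega
  omega

lemma eMin_nu [Fintype V] (G : SimpleGraph V) :
    eMin G + 2 * matchingNumber G = Fintype.card V := by
  have hle : eMin G + 2 * matchingNumber G ≤ Fintype.card V := by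
    obtain ⟨M, hM, hMc⟩ := nu_exists (G := G)
    obtain ⟨hpec, hes⟩ := key_pair_pec hM (isMatchingSet_empty G)
    have hKsub : M ⊆ (SimpleGraph.fromEdgeSet (M ∪ ∅)).edgeSet := by
      rw [hes]
      exact Set.subset_union_left
    have hb := key_matching_bound hKsub hM.2
    have he := eMin_le hpec
    omega
  have hge : Fintype.card V ≤ eMin G + 2 * matchingNumber G := by
    obtain ⟨G', hpec, he⟩ := eMin_exists (G := G)
    obtain ⟨H, H', m1, m2, dis, hec, he2, hp2⟩ := key_pec_pair hpec
    have hl := nu_ge m1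
    omega
  omega

lemma epMin_mu [Fintype V] (G : SimpleGraph V) :
    epMin G + 2 * muParam G = Fintype.card V := by
  have hge : Fintype.card V ≤ epMin G + 2 * muParam G := by
    obtain ⟨G', hpec, hpmin, hep⟩ := epMin_exists (G := G)
    obtain ⟨H, H', m1, m2, dis, hec, he2, hp2⟩ := key_pec_pair hpec
    have hlam := lambda_pMin G
    have hmu : H.ncard ≤ muParam G := mu_ge m1 m2 dis (by omega)
    omega
  have hle : epMin G + 2 * muParam G ≤ Fintype.card V := by
    obtain ⟨H, H', m1, m2, dis, hl, hmu⟩ := mu_exists (G := G)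
    obtain ⟨hpec, hes⟩ := key_pair_pec m1 m2
    obtain ⟨K, K', k1, k2, kdis, kec, ke, kp⟩ := key_pec_pair hpec
    rw [hes, Set.ncard_union_eq dis (Set.toFinite _) (Set.toFinite _)] at kec
    have hlam := lambda_pMin G
    have hpath : pathCount (SimpleGraph.fromEdgeSet (H ∪ H')) = pMin G := by omega
    have hepm := epMin_le hpec hpath
    have hKsub : H ⊆ (SimpleGraph.fromEdgeSet (H ∪ H')).edgeSet := by
      rw [hes]
      exact Set.subset_union_left
    have hb := key_matching_bound hKsub m1.2
    omega
  omega

theorem stmt_8' [Fintype V] (G : SimpleGraph V) :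
    muParam G = matchingNumber G ↔ eMin G = epMin G := by
  have h1 := eMin_nu G
  have h2 := epMin_mu G
  omega

end Dev6

/-- For every finite graph `G`, μ(G) = ν(G) if and only if e(G) = e_p(G). -/
theorem stmt_8 [Fintype V] (G : SimpleGraph V) :
    muParam G = matchingNumber G ↔ eMin G = epMin G := by
  have h1 := eMin_nu G
  have h2 := epMin_mu G
  omega
end

section
/- Let G be a finite connected graph and let M, H, H' be maximally intersecting matchings in G. Then every maximal M-H alternating chain in G is a path with an odd number of edges whose two end-edges belong to M. -/
variable {V : Type*}

/-- A list of edges alternately lies in `A ∖ B` and `B ∖ A`. -/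
def AltList (A B : Set (Sym2 V)) (l : List (Sym2 V)) : Prop :=
  (∀ e ∈ l, (e ∈ A ∧ e ∉ B) ∨ (e ∈ B ∧ e ∉ A)) ∧
  List.Chain' (fun e f => ¬(e ∈ A ↔ f ∈ A)) l

/-- An `A`-`B` alternating path in `G`: a (nontrivial) path whose edges alternately lie in
`A ∖ B` and `B ∖ A`. -/
def IsAltPath (G : SimpleGraph V) (A B : Set (Sym2 V)) {u v : V} (p : G.Walk u v) : Prop :=
  0 < p.length ∧ p.IsPath ∧ AltList A B p.edges

/-- A maximal `A`-`B` alternating path: an alternating path that cannot be extended to a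
longer alternating path at either of its ends. -/
def IsMaxAltPath (G : SimpleGraph V) (A B : Set (Sym2 V)) {u v : V} (p : G.Walk u v) : Prop :=
  IsAltPath G A B p ∧
  (∀ w, ∀ h : G.Adj w u, ¬ IsAltPath G A B (SimpleGraph.Walk.cons h p)) ∧
  (∀ w, ∀ h : G.Adj w v, ¬ IsAltPath G A B (SimpleGraph.Walk.cons h p.reverse))

/-- `M` is a maximum matching of `G`. -/
def IsMaxMatching (G : SimpleGraph V) (M : Set (Sym2 V)) : Prop :=
  IsMatchingSet G M ∧ ∀ M' : Set (Sym2 V), IsMatchingSet G M' → M'.ncard ≤ M.ncard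

/-- `(H, H')` is a pair of disjoint matchings of `G` with `|H| + |H'| = λ(G)` and
`|H| = μ(G)`. -/
def IsLambdaMuPair (G : SimpleGraph V) (H H' : Set (Sym2 V)) : Prop :=
  IsMatchingSet G H ∧ IsMatchingSet G H' ∧ Disjoint H H' ∧
  H.ncard + H'.ncard = lambdaParam G ∧ H.ncard = muParam G

/-- The matchings `M`, `H`, `H'` are maximally intersecting:
(i) `M` is a maximum matching; (ii) `(H, H') ∈ Λ(G)` with `|H| = μ(G)`;
(iii) `|M ∩ (H ∪ H')|` is maximum among all such triples;
(iv) `|M ∩ H|` is maximum among all such triples also satisfying (iii). -/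
def MaxIntersecting (G : SimpleGraph V) (M H H' : Set (Sym2 V)) : Prop :=
  IsMaxMatching G M ∧ IsLambdaMuPair G H H' ∧
  (∀ M₂ H₂ H₂' : Set (Sym2 V), IsMaxMatching G M₂ → IsLambdaMuPair G H₂ H₂' →
    (M₂ ∩ (H₂ ∪ H₂')).ncard ≤ (M ∩ (H ∪ H')).ncard) ∧
  (∀ M₂ H₂ H₂' : Set (Sym2 V), IsMaxMatching G M₂ → IsLambdaMuPair G H₂ H₂' →
    (M₂ ∩ (H₂ ∪ H₂')).ncard = (M ∩ (H ∪ H')).ncard → (M₂ ∩ H₂).ncard ≤ (M ∩ H).ncard)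


section AuxStmt10

open SimpleGraph

lemma mem_of_head?' {α : Type*} {l : List α} {e : α} (h : l.head? = some e) : e ∈ l := by
  cases l with
  | nil => simp at h
  | cons a t => simp at h; simp [h]

lemma mem_of_getLast?' {α : Type*} {l : List α} {e : α} (h : l.getLast? = some e) : e ∈ l := by
  rw [← List.head?_reverse] at h
  have := mem_of_head?' h
  simpa using this

lemma exists_head_getLast {α : Type*} {l : List α} (h : l ≠ []) :
    ∃ e f, l.head? = some e ∧ l.getLast? = some f := by
  cases l with
  | nil => exact absurd rfl h
  | cons a t => exact ⟨a, (a :: t).getLast (by simp), rfl, List.getLast?_eq_getLast _⟩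

lemma short_of_head_eq_getLast {α : Type*} {l : List α} (hnd : l.Nodup) {e : α}
    (hh : l.head? = some e) (hl : l.getLast? = some e) : l.length ≤ 1 := by
  match l with
  | [] => simp
  | [a] => simp
  | a :: b :: t =>
    exfalso
    simp only [List.head?_cons, Option.some.injEq] at hh
    rw [List.getLast?_cons_cons] at hl
    have hmem : e ∈ b :: t := mem_of_getLast?' hl
    rw [← hh] at hmem
    exact (List.nodup_cons.mp hnd).1 hmem

lemma alt_count {M : Set (Sym2 V)} [DecidablePred (· ∈ M)] :
    ∀ (l : List (Sym2 V)), List.Chain' (fun a b => ¬(a ∈ M ↔ b ∈ M)) l →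
    ∀ e f, l.head? = some e → l.getLast? = some f →
    2 * l.countP (fun x => decide (x ∈ M)) + 1 =
      l.length + (if e ∈ M then 1 else 0) + (if f ∈ M then 1 else 0)
  | [], _, e, f, he, hf => by simp at he
  | [a], _, e, f, he, hf => by
      simp only [List.head?_cons, Option.some.injEq] at he
      simp only [List.getLast?_singleton, Option.some.injEq] at hf
      subst he; subst hf
      by_cases h : a ∈ M <;> simp [h, List.countP_cons]
  | a :: b :: t, hchain, e, f, he, hf => by
      have hr := alt_count (b :: t) (List.isChain_cons_cons.mp hchain).2 b f rfl
        (by rw [← List.getLast?_cons_cons]; exact hf)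
      have hne : ¬(a ∈ M ↔ b ∈ M) := (List.isChain_cons_cons.mp hchain).1
      simp only [List.head?_cons, Option.some.injEq] at he
      subst he
      rw [List.countP_cons]
      by_cases haM : a ∈ M <;> by_cases hbM : b ∈ M <;> by_cases hfM : f ∈ M <;>
        simp [haM, hbM, hfM, List.countP_cons] at hne hr ⊢ <;> omega

lemma countP_not_mem {α : Type*} (l : List α) (p : α → Prop) [DecidablePred p] :
    l.countP (fun x => decide (p x)) + l.countP (fun x => decide (¬ p x)) = l.length := by
  induction l with
  | nil => simp
  | cons a t ih =>
    rw [List.countP_cons, List.countP_cons]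
    simp only [decide_not] at ih ⊢
    by_cases h : p a <;> simp [h] <;> omega

lemma ncard_filter_list {α : Type*} [DecidableEq α] (l : List α) (hnd : l.Nodup)
    (p : α → Prop) [DecidablePred p] :
    {x | x ∈ l ∧ p x}.ncard = l.countP (fun x => decide (p x)) := by
  have h1 : {x | x ∈ l ∧ p x} = ↑(l.filter (fun x => decide (p x))).toFinset := by
    ext x; simp [List.mem_filter]
  rw [h1, Set.ncard_coe_finset, List.toFinset_card_of_nodup (hnd.filter _),
    List.countP_eq_length_filter]

lemma swap_matching {G : SimpleGraph V} {M H F : Set (Sym2 V)}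
    (hM : IsMatchingSet G M) (hH : IsMatchingSet G H) (hFH : F \ M ⊆ H)
    (hkey : ∀ f ∈ F, f ∉ M → ∀ x ∈ f, (∃ g ∈ F, g ∈ M ∧ x ∈ g) ∨ (∀ g ∈ M, x ∉ g)) :
    IsMatchingSet G ((M \ F) ∪ (F \ M)) := by
  constructor
  · rintro e (he | he)
    · exact hM.1 he.1
    · exact hH.1 (hFH he)
  · have mixed : ∀ e ∈ M \ F, ∀ f ∈ F \ M, ∀ x : V, ¬(x ∈ e ∧ x ∈ f) := by
      rintro e he f hf x ⟨hxe, hxf⟩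
      rcases hkey f hf.1 hf.2 x hxf with ⟨g, hgF, hgM, hxg⟩ | hnone
      · exact hM.2 e he.1 g hgM (fun h => he.2 (h ▸ hgF)) x ⟨hxe, hxg⟩
      · exact hnone e he.1 hxe
    rintro e (he | he) f (hf | hf) hef x hx
    · exact hM.2 e he.1 f hf.1 hef x hx
    · exact mixed e he f hf x hx
    · exact mixed f hf e he x (And.symm hx)
    · exact hH.2 e (hFH he) f (hFH hf) hef x hx

lemma swap_card [Fintype V] (M F : Set (Sym2 V)) :
    ((M \ F) ∪ (F \ M)).ncard + (M ∩ F).ncard = M.ncard + (F \ M).ncard := by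
  rw [Set.ncard_union_eq (Set.disjoint_left.mpr (fun x hx hy => hx.2 hy.1))
    (Set.toFinite _) (Set.toFinite _)]
  have := Set.ncard_inter_add_ncard_diff_eq_ncard M F (Set.toFinite _)
  omega

lemma swap_inter_card [Fintype V] (M F S : Set (Sym2 V)) :
    (((M \ F) ∪ (F \ M)) ∩ S).ncard + (M ∩ S ∩ F).ncard
      = (M ∩ S).ncard + ((F \ M) ∩ S).ncard := by
  have h1 : ((M \ F) ∪ (F \ M)) ∩ S = ((M ∩ S) \ F) ∪ ((F \ M) ∩ S) := by
    ext x
    simp only [Set.mem_inter_iff, Set.mem_union, Set.mem_diff]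
    tauto
  rw [h1, Set.ncard_union_eq (Set.disjoint_left.mpr (fun x hx hy => hx.2 hy.1.1))
    (Set.toFinite _) (Set.toFinite _)]
  have := Set.ncard_inter_add_ncard_diff_eq_ncard (M ∩ S) F (Set.toFinite _)
  omega

lemma bigger_swap [Fintype V] {G : SimpleGraph V} {M H F : Set (Sym2 V)}
    (hM : IsMaxMatching G M) (hH : IsMatchingSet G H) (hFH : F \ M ⊆ H)
    (hcard : (F \ M).ncard = (M ∩ F).ncard + 1)
    (hkey : ∀ f ∈ F, f ∉ M → ∀ x ∈ f, (∃ g ∈ F, g ∈ M ∧ x ∈ g) ∨ (∀ g ∈ M, x ∉ g)) :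
    False := by
  have hm2 := swap_matching hM.1 hH hFH hkey
  have hc := swap_card M F
  have := hM.2 _ hm2
  omega

lemma unified_swap [Fintype V] {G : SimpleGraph V} {M H H' F : Set (Sym2 V)}
    (hmax : MaxIntersecting G M H H')
    (hFMH : ∀ f ∈ F, (f ∈ M ∧ f ∉ H) ∨ (f ∈ H ∧ f ∉ M))
    (hcard : (F \ M).ncard = (M ∩ F).ncard)
    (hne : (F \ M).Nonempty)
    (hkey : ∀ f ∈ F, f ∉ M → ∀ x ∈ f, (∃ g ∈ F, g ∈ M ∧ x ∈ g) ∨ (∀ g ∈ M, x ∉ g)) :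
    False := by
  obtain ⟨hMmax, hpair, hiii, hiv⟩ := hmax
  have hFH : F \ M ⊆ H := fun f hf => ((hFMH f hf.1).resolve_left (fun h => hf.2 h.1)).1
  have hm2 : IsMatchingSet G ((M \ F) ∪ (F \ M)) := swap_matching hMmax.1 hpair.1 hFH hkey
  have hc := swap_card M F
  have hm2card : ((M \ F) ∪ (F \ M)).ncard = M.ncard := by omega
  have hm2max : IsMaxMatching G ((M \ F) ∪ (F \ M)) :=
    ⟨hm2, fun M' h => (hMmax.2 M' h).trans hm2card.ge⟩
  have hiii' := hiii _ H H' hm2max hpair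
  have hi1 := swap_inter_card M F (H ∪ H')
  have hsubS : (F \ M) ∩ (H ∪ H') = F \ M :=
    Set.inter_eq_left.mpr (fun x hx => Or.inl (hFH hx))
  rw [hsubS] at hi1
  have hsub2 : (M ∩ (H ∪ H') ∩ F).ncard ≤ (M ∩ F).ncard :=
    Set.ncard_le_ncard (fun x hx => ⟨hx.1.1, hx.2⟩) (Set.toFinite _)
  have heq : (((M \ F) ∪ (F \ M)) ∩ (H ∪ H')).ncard = (M ∩ (H ∪ H')).ncard := by omega
  have hiv' := hiv _ H H' hm2max hpair heq
  have hi2 := swap_inter_card M F H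
  have hMHF : M ∩ H ∩ F = ∅ := by
    ext x
    simp only [Set.mem_inter_iff, Set.mem_empty_iff_false, iff_false, not_and]
    rintro ⟨hxM, hxH⟩ hxF
    rcases hFMH x hxF with ⟨_, h⟩ | ⟨_, h⟩ <;> [exact h hxH; exact h hxM]
  have hFMH2 : (F \ M) ∩ H = F \ M := Set.inter_eq_left.mpr hFH
  rw [hMHF, hFMH2, Set.ncard_empty] at hi2
  have hpos : 0 < (F \ M).ncard := (Set.ncard_pos (Set.toFinite _)).mpr hne
  omega

lemma sym2_rep {G : SimpleGraph V} {g : Sym2 V} (hg : g ∈ G.edgeSet) {u : V} (hu : u ∈ g) :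
    ∃ w, g = s(u, w) ∧ G.Adj u w := by
  revert hg hu
  refine Sym2.ind (fun a b => ?_) g
  intro hg hu
  rcases Sym2.mem_iff.mp hu with rfl | rfl
  · exact ⟨b, rfl, hg⟩
  · exact ⟨a, Sym2.eq_swap, (G.mem_edgeSet.mp hg).symm⟩

lemma mem_support_of_mem_edge {G : SimpleGraph V} {a c : V} (q : G.Walk a c) {f : Sym2 V} {x : V}
    (hf : f ∈ q.edges) (hx : x ∈ f) : x ∈ q.support := by
  revert hf hx
  refine Sym2.ind (fun s t => ?_) f
  intro hf hx
  rcases Sym2.mem_iff.mp hx with rfl | rfl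
  · exact q.fst_mem_support_of_mem_edges hf
  · exact q.snd_mem_support_of_mem_edges hf

lemma head_edge_mem_start {G : SimpleGraph V} {u v : V} (p : G.Walk u v) {e : Sym2 V}
    (he : p.edges.head? = some e) : u ∈ e := by
  cases p with
  | nil => simp at he
  | cons h q =>
    rw [Walk.edges_cons, List.head?_cons, Option.some.injEq] at he
    rw [← he]
    exact Sym2.mem_mk_left _ _

lemma last_edge_mem_end {G : SimpleGraph V} {u v : V} (p : G.Walk u v) {e : Sym2 V}
    (he : p.edges.getLast? = some e) : v ∈ e :=
  head_edge_mem_start p.reverse (by rw [Walk.edges_reverse, List.head?_reverse]; exact he)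

lemma edge_head_of_start_mem {G : SimpleGraph V} {u v : V} (p : G.Walk u v) (hp : p.IsPath)
    {f : Sym2 V} (hf : f ∈ p.edges) (hu : u ∈ f) : p.edges.head? = some f := by
  cases p with
  | nil => simp at hf
  | @cons a b c h q =>
    rw [Walk.edges_cons, List.mem_cons] at hf
    rcases hf with rfl | hf
    · simp
    · exact absurd (mem_support_of_mem_edge q hf hu) ((Walk.cons_isPath_iff h q).mp hp).2

lemma exists_edge_of_mem_support {G : SimpleGraph V} {u v : V} (p : G.Walk u v) {x : V}
    (hx : x ∈ p.support) (hxu : x ≠ u) : ∃ f ∈ p.edges, x ∈ f := by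
  induction p with
  | nil => simp at hx; exact absurd hx hxu
  | @cons a b c h q ih =>
    rw [Walk.support_cons, List.mem_cons] at hx
    rcases hx with rfl | hx
    · exact absurd rfl hxu
    · by_cases hxb : x = b
      · subst hxb
        exact ⟨s(a, x), by simp, Sym2.mem_mk_right _ _⟩
      · obtain ⟨f, hf, hxf⟩ := ih hx hxb
        exact ⟨f, by simp [hf], hxf⟩

lemma alt_mid {G : SimpleGraph V} (M : Set (Sym2 V)) :
    ∀ {u v : V} (w : G.Walk u v),
      List.Chain' (fun a b => ¬(a ∈ M ↔ b ∈ M)) w.edges →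
      ∀ f ∈ w.edges, f ∉ M → ∀ x ∈ f,
        (∃ g ∈ w.edges, g ∈ M ∧ x ∈ g) ∨
        (x = u ∧ w.edges.head? = some f) ∨ (x = v ∧ w.edges.getLast? = some f) := by
  intro u v w
  induction w with
  | nil => simp
  | @cons a b c h q ih =>
    intro hchain f hf hfM x hx
    rw [SimpleGraph.Walk.edges_cons] at hchain hf ⊢
    rcases List.mem_cons.mp hf with heq | hf
    · subst heq
      rcases Sym2.mem_iff.mp hx with h1 | h1
      · exact Or.inr (Or.inl ⟨h1, by simp⟩)
      · cases hq : q.edges with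
        | nil =>
          have hbc : b = c := by
            have hl := q.length_edges
            rw [hq] at hl
            exact q.eq_of_length_eq_zero hl.symm
          exact Or.inr (Or.inr ⟨h1.trans hbc, by simp [hq]⟩)
        | cons g t =>
          rw [hq] at hchain
          have hR : ¬(s(a, b) ∈ M ↔ g ∈ M) := (List.isChain_cons_cons.mp hchain).1
          have hgM : g ∈ M := by tauto
          have hbg : b ∈ g := head_edge_mem_start q (by rw [hq]; rfl)
          exact Or.inl ⟨g, by simp [hq], hgM, by rw [h1]; exact hbg⟩
    · rcases ih hchain.tail f hf hfM x hx with ⟨g, hg, hgM, hxg⟩ | ⟨hxb, hhead⟩ | ⟨hxc, hlast⟩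
      · exact Or.inl ⟨g, by simp [hg], hgM, hxg⟩
      · have hR : ¬(s(a, b) ∈ M ↔ f ∈ M) := by
          cases hq : q.edges with
          | nil => rw [hq] at hhead; simp at hhead
          | cons g t =>
            rw [hq] at hchain hhead
            have h2 := (List.isChain_cons_cons.mp hchain).1
            simp only [List.head?_cons, Option.some.injEq] at hhead
            rwa [hhead] at h2
        have hM : s(a, b) ∈ M := by tauto
        exact Or.inl ⟨s(a, b), by simp, hM, by rw [hxb]; exact Sym2.mem_mk_right a b⟩
      · refine Or.inr (Or.inr ⟨hxc, ?_⟩)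
        have hne : q.edges ≠ [] := List.ne_nil_of_mem hf
        cases hq : q.edges with
        | nil => exact absurd hq hne
        | cons g t =>
          rw [List.getLast?_cons_cons, ← hq]
          exact hlast

lemma altList_reverse {A B : Set (Sym2 V)} {l : List (Sym2 V)} (h : AltList A B l) :
    AltList A B l.reverse := by
  refine ⟨fun e he => h.1 e (List.mem_reverse.mp he), ?_⟩
  refine List.isChain_reverse.mpr ?_
  exact List.IsChain.imp (fun a b hab hiff => hab hiff.symm) h.2

lemma isMaxAltPath_reverse {G : SimpleGraph V} {A B : Set (Sym2 V)} {u v : V} {p : G.Walk u v}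
    (h : IsMaxAltPath G A B p) : IsMaxAltPath G A B p.reverse := by
  obtain ⟨⟨hl, hp, ha⟩, h2, h3⟩ := h
  refine ⟨⟨by rwa [Walk.length_reverse], hp.reverse,
    by rw [Walk.edges_reverse]; exact altList_reverse ha⟩, h3, ?_⟩
  intro w hw
  rw [Walk.reverse_reverse]
  exact h2 w hw

end AuxStmt10

section MainStmt10

open SimpleGraph

lemma no_alt_cycle [Fintype V] {G : SimpleGraph V} {M H H' : Set (Sym2 V)}
    (hmax : MaxIntersecting G M H H') :
    ∀ (v : V) (w : G.Walk v v), w.IsCycle → ¬ AltList M H w.edges := by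
  classical
  intro v w hc hAlt
  obtain ⟨hall, hchain⟩ := hAlt
  have hMm : IsMatchingSet G M := hmax.1.1
  have hHm : IsMatchingSet G H := hmax.2.1.1
  have hlen3 : 3 ≤ w.edges.length := by rw [w.length_edges]; exact hc.three_le_length
  have hnil : w.edges ≠ [] := by intro h; rw [h] at hlen3; simp at hlen3
  obtain ⟨eH, eL, he, hf⟩ := exists_head_getLast hnil
  have hveM : v ∈ eH := head_edge_mem_start w he
  have hvfM : v ∈ eL := last_edge_mem_end w hf
  have hef : eH ≠ eL := by
    intro h
    subst h
    have := short_of_head_eq_getLast hc.edges_nodup he hf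
    omega
  have heMem : eH ∈ w.edges := mem_of_head?' he
  have hfMem : eL ∈ w.edges := mem_of_getLast?' hf
  have hdiff : ¬(eH ∈ M ↔ eL ∈ M) := by
    intro hiff
    by_cases heM : eH ∈ M
    · exact hMm.2 eH heM eL (hiff.mp heM) hef v ⟨hveM, hvfM⟩
    · have heHH : eH ∈ H := ((hall eH heMem).resolve_left (fun h => heM h.1)).1
      have hfHH : eL ∈ H := ((hall eL hfMem).resolve_left (fun h => heM (hiff.mpr h.1))).1
      exact hHm.2 eH heHH eL hfHH hef v ⟨hveM, hvfM⟩
  have hcnt := alt_count w.edges hchain eH eL he hf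
  have hif : (if eH ∈ M then 1 else 0) + (if eL ∈ M then 1 else 0) = 1 := by
    by_cases h1 : eH ∈ M <;> by_cases h2 : eL ∈ M <;> simp [h1, h2] at hdiff ⊢
  have hsum := countP_not_mem w.edges (· ∈ M)
  have hndp := hc.edges_nodup
  have hMF : (M ∩ {x | x ∈ w.edges}).ncard = w.edges.countP (fun x => decide (x ∈ M)) := by
    rw [show M ∩ {x | x ∈ w.edges} = {x | x ∈ w.edges ∧ x ∈ M} by ext x; exact and_comm]
    exact ncard_filter_list _ hndp _
  have hFM : ({x | x ∈ w.edges} \ M).ncard = w.edges.countP (fun x => decide (¬ x ∈ M)) := by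
    rw [show {x | x ∈ w.edges} \ M = {x | x ∈ w.edges ∧ ¬ x ∈ M} by ext x; simp [Set.mem_diff]]
    exact ncard_filter_list _ hndp _
  refine unified_swap (F := {x | x ∈ w.edges}) hmax (fun f hf => hall f hf) ?_ ?_ ?_
  · rw [hMF, hFM]; omega
  · refine Set.nonempty_of_ncard_ne_zero ?_
    rw [hFM]; omega
  · intro f hfF hfM x hx
    rcases alt_mid M w hchain f hfF hfM x hx with ⟨g, hg, hgM, hxg⟩ | ⟨hxv, hhead⟩ | ⟨hxv, hlast⟩
    · exact Or.inl ⟨g, hg, hgM, hxg⟩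
    · have hfe : f = eH := by
        rw [he] at hhead
        exact (Option.some_injective _ hhead).symm
      have hLM : eL ∈ M := by rw [hfe] at hfM; tauto
      exact Or.inl ⟨eL, hfMem, hLM, by rw [hxv]; exact hvfM⟩
    · have hfe : f = eL := by
        rw [hf] at hlast
        exact (Option.some_injective _ hlast).symm
      have hHM : eH ∈ M := by rw [hfe] at hfM; tauto
      exact Or.inl ⟨eH, heMem, hHM, by rw [hxv]; exact hveM⟩

lemma unsat_of_head_not_mem [Fintype V] {G : SimpleGraph V} {M H H' : Set (Sym2 V)}
    (hmax : MaxIntersecting G M H H') {u v : V} {p : G.Walk u v}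
    (hp : IsMaxAltPath G M H p) {e₁ : Sym2 V}
    (hh : p.edges.head? = some e₁) (he₁ : e₁ ∉ M) :
    ∀ g ∈ M, u ∉ g := by
  classical
  intro g hgM hug
  have hlen : 0 < p.length := hp.1.1
  have hpath : p.IsPath := hp.1.2.1
  have hall : ∀ e ∈ p.edges, (e ∈ M ∧ e ∉ H) ∨ (e ∈ H ∧ e ∉ M) := hp.1.2.2.1
  have hchain : List.Chain' (fun a b => ¬(a ∈ M ↔ b ∈ M)) p.edges := hp.1.2.2.2
  have hMm : IsMatchingSet G M := hmax.1.1
  have hHm : IsMatchingSet G H := hmax.2.1.1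
  have he₁l : e₁ ∈ p.edges := mem_of_head?' hh
  have he₁H : e₁ ∈ H := ((hall e₁ he₁l).resolve_left (fun h => he₁ h.1)).1
  obtain ⟨w, hgeq, hadj⟩ := sym2_rep (hMm.1 hgM) hug
  have hge₁ : g ≠ e₁ := fun h => he₁ (h ▸ hgM)
  have hgH : g ∉ H :=
    fun hgH => hHm.2 g hgH e₁ he₁H hge₁ u ⟨hug, head_edge_mem_start p hh⟩
  have hgp : g ∉ p.edges := by
    intro hgp
    have := edge_head_of_start_mem p hpath hgp hug
    rw [hh] at this
    exact hge₁ ((Option.some_injective _ this).symm)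
  have hnil : p.edges ≠ [] := List.ne_nil_of_mem he₁l
  by_cases hw : w ∈ p.support
  · by_cases hwv : w = v
    · subst hwv
      obtain ⟨e₁', eₗ, hh', hl⟩ := exists_head_getLast hnil
      have hvel : w ∈ eₗ := last_edge_mem_end p hl
      have hell : eₗ ∈ p.edges := mem_of_getLast?' hl
      have hgel : g ≠ eₗ := fun h => hgp (h ▸ hell)
      have hwg : w ∈ g := by rw [hgeq]; exact Sym2.mem_mk_right _ _
      by_cases helM : eₗ ∈ M
      · exact hMm.2 g hgM eₗ helM hgel w ⟨hwg, hvel⟩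
      · -- build an alternating cycle
        have hgp' : s(w, u) ∉ p.edges := by rw [Sym2.eq_swap, ← hgeq]; exact hgp
        have hcyc : (Walk.cons hadj.symm p).IsCycle :=
          (Walk.cons_isCycle_iff p hadj.symm).mpr ⟨hpath, hgp'⟩
        refine no_alt_cycle hmax w (Walk.cons hadj.symm p) hcyc ⟨?_, ?_⟩
        · intro e he
          rw [Walk.edges_cons, List.mem_cons] at he
          rcases he with rfl | he
          · left
            rw [Sym2.eq_swap, ← hgeq]
            exact ⟨hgM, hgH⟩
          · exact hall e he
        · rw [Walk.edges_cons]
          cases hq : p.edges with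
          | nil => exact absurd hq hnil
          | cons a t =>
            have ha : a = e₁ := by
              rw [hq] at hh
              exact Option.some_injective _ hh
            refine List.isChain_cons_cons.mpr ⟨?_, by rw [← hq]; exact hchain⟩
            have : s(w, u) ∈ M := by rw [Sym2.eq_swap, ← hgeq]; exact hgM
            rw [ha]
            tauto
    · have hwu : w ≠ u := fun h => hadj.ne h.symm
      obtain ⟨f, hf, hwf⟩ := exists_edge_of_mem_support p hw hwu
      have hwg : w ∈ g := by rw [hgeq]; exact Sym2.mem_mk_right _ _
      by_cases hfM : f ∈ M
      · exact hMm.2 g hgM f hfM (fun h => hgp (h ▸ hf)) w ⟨hwg, hwf⟩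
      · rcases alt_mid M p hchain f hf hfM w hwf with ⟨g', hg', hg'M, hwg'⟩ | ⟨h1, _⟩ | ⟨h1, _⟩
        · exact hMm.2 g hgM g' hg'M (fun h => hgp (h ▸ hg')) w ⟨hwg, hwg'⟩
        · exact hwu h1
        · exact hwv h1
  · refine hp.2.1 w hadj.symm ⟨by simp, hpath.cons hw, ?_, ?_⟩
    · intro e he
      rw [Walk.edges_cons, List.mem_cons] at he
      rcases he with rfl | he
      · left
        rw [Sym2.eq_swap, ← hgeq]
        exact ⟨hgM, hgH⟩
      · exact hall e he
    · rw [Walk.edges_cons]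
      cases hq : p.edges with
      | nil => exact absurd hq hnil
      | cons a t =>
        have ha : a = e₁ := by
          rw [hq] at hh
          exact Option.some_injective _ hh
        refine List.isChain_cons_cons.mpr ⟨?_, by rw [← hq]; exact hchain⟩
        have : s(w, u) ∈ M := by rw [Sym2.eq_swap, ← hgeq]; exact hgM
        rw [ha]
        tauto

end MainStmt10

section MainStmt10b

open SimpleGraph

lemma head_mem_of_max [Fintype V] {G : SimpleGraph V} {M H H' : Set (Sym2 V)}
    (hmax : MaxIntersecting G M H H') {u v : V} (p : G.Walk u v)
    (hp : IsMaxAltPath G M H p) {e₁ : Sym2 V} (hh : p.edges.head? = some e₁) : e₁ ∈ M := by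
  classical
  by_contra he₁
  have hpath : p.IsPath := hp.1.2.1
  have hall : ∀ e ∈ p.edges, (e ∈ M ∧ e ∉ H) ∨ (e ∈ H ∧ e ∉ M) := hp.1.2.2.1
  have hchain : List.Chain' (fun a b => ¬(a ∈ M ↔ b ∈ M)) p.edges := hp.1.2.2.2
  have hnd : p.edges.Nodup := hpath.isTrail.edges_nodup
  have he₁l : e₁ ∈ p.edges := mem_of_head?' hh
  have husat := unsat_of_head_not_mem hmax hp hh he₁
  have hnil : p.edges ≠ [] := List.ne_nil_of_mem he₁l
  obtain ⟨e₁', eₗ, hh', hl⟩ := exists_head_getLast hnil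
  have hcnt := alt_count p.edges hchain e₁ eₗ hh hl
  have hsum := countP_not_mem p.edges (· ∈ M)
  have hMF : (M ∩ {x | x ∈ p.edges}).ncard = p.edges.countP (fun x => decide (x ∈ M)) := by
    rw [show M ∩ {x | x ∈ p.edges} = {x | x ∈ p.edges ∧ x ∈ M} by ext x; exact and_comm]
    exact ncard_filter_list _ hnd _
  have hFM : ({x | x ∈ p.edges} \ M).ncard = p.edges.countP (fun x => decide (¬ x ∈ M)) := by
    rw [show {x | x ∈ p.edges} \ M = {x | x ∈ p.edges ∧ ¬ x ∈ M} by ext x; simp [Set.mem_diff]]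
    exact ncard_filter_list _ hnd _
  by_cases heₗ : eₗ ∈ M
  · refine unified_swap (F := {x | x ∈ p.edges}) hmax (fun f hf => hall f hf) ?_ ?_ ?_
    · rw [hMF, hFM]
      simp only [he₁, heₗ, if_true, if_false] at hcnt
      omega
    · exact ⟨e₁, he₁l, he₁⟩
    · intro f hfF hfM x hx
      rcases alt_mid M p hchain f hfF hfM x hx with ⟨g, hg, hgM, hxg⟩ | ⟨hxu, _⟩ | ⟨hxv, hlast⟩
      · exact Or.inl ⟨g, hg, hgM, hxg⟩
      · right
        intro g hg
        rw [hxu]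
        exact husat g hg
      · exfalso
        apply hfM
        rw [hl] at hlast
        rw [(Option.some_injective _ hlast).symm]
        exact heₗ
  · have hrev := isMaxAltPath_reverse hp
    have hhrev : p.reverse.edges.head? = some eₗ := by
      rw [Walk.edges_reverse, List.head?_reverse]; exact hl
    have hvsat := unsat_of_head_not_mem hmax hrev hhrev heₗ
    refine bigger_swap (F := {x | x ∈ p.edges}) hmax.1 hmax.2.1.1
      (fun f hf => ((hall f hf.1).resolve_left (fun h => hf.2 h.1)).1) ?_ ?_
    · rw [hMF, hFM]
      simp only [he₁, heₗ, if_true, if_false] at hcnt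
      omega
    · intro f hfF hfM x hx
      rcases alt_mid M p hchain f hfF hfM x hx with ⟨g, hg, hgM, hxg⟩ | ⟨hxu, _⟩ | ⟨hxv, _⟩
      · exact Or.inl ⟨g, hg, hgM, hxg⟩
      · right
        intro g hg
        rw [hxu]
        exact husat g hg
      · right
        intro g hg
        rw [hxv]
        exact hvsat g hg

end MainStmt10b

/-- For maximally intersecting matchings `M`, `H`, `H'` of a finite connected
graph `G`, every maximal `M`-`H` alternating chain is a path with an odd number of edges
whose two end-edges belong to `M`; i.e., there is no `M`-`H` alternating cycle, and every
maximal `M`-`H` alternating path is odd with end-edges in `M`. -/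
theorem stmt_10 [Fintype V] (G : SimpleGraph V) (hconn : G.Connected)
    (M H H' : Set (Sym2 V)) (hmax : MaxIntersecting G M H H') :
    (∀ (v : V) (w : G.Walk v v), w.IsCycle → ¬ AltList M H w.edges) ∧
    (∀ (u v : V) (p : G.Walk u v), IsMaxAltPath G M H p →
      Odd p.length ∧ (∀ e, p.edges.head? = some e → e ∈ M) ∧
        (∀ e, p.edges.getLast? = some e → e ∈ M)) := by
  classical
  refine ⟨no_alt_cycle hmax, ?_⟩
  intro u v p hp
  have hnil : p.edges ≠ [] := by
    intro h
    have h2 := p.length_edges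
    have h3 := hp.1.1
    rw [h, List.length_nil] at h2
    omega
  obtain ⟨e₁, eₗ, hh, hl⟩ := exists_head_getLast hnil
  have h1 : e₁ ∈ M := head_mem_of_max hmax p hp hh
  have hrev := isMaxAltPath_reverse hp
  have hhrev : p.reverse.edges.head? = some eₗ := by
    rw [SimpleGraph.Walk.edges_reverse, List.head?_reverse]; exact hl
  have h2 : eₗ ∈ M := head_mem_of_max hmax p.reverse hrev hhrev
  refine ⟨?_, ?_, ?_⟩
  · have hcnt := alt_count p.edges hp.1.2.2.2 e₁ eₗ hh hl
    rw [if_pos h1, if_pos h2] at hcnt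
    rw [Nat.odd_iff]
    have hle := p.length_edges
    omega
  · intro e he
    rw [hh] at he
    rw [← Option.some_injective _ he]
    exact h1
  · intro e he
    rw [hl] at he
    rw [← Option.some_injective _ he]
    exact h2
end
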